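/- arXiv:2211.06691 — 9 statements merged into one kernel-verified Lean document; each statement's English description precedes it below -/
import Mathlib

section
/- Let $U$ be uniformly distributed on $[0,1]$ and let $a \in (0,1)$. Then $U$ can be written as $U = U_1 + U_2$ where $U_1, U_2$ are independent random variables with $\mathrm{supp}(U_1) \subseteq [0,a]$ and $\mathrm{supp}(U_2) \subseteq [0,1-a]$. -/
open MeasureTheory ProbabilityTheory
open scoped ENNReal

namespace UniformDecomp

/-- the `j`-th binary digit (0-indexed, digit of weight `2^(-(j+1))`) of `x`. -/
noncomputable def D (j : ℕ) (x : ℝ) : ℕ := ⌊x * 2 ^ (j + 1)⌋₊ % 2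

lemma D_le_one (j : ℕ) (x : ℝ) : D j x ≤ 1 :=
  Nat.le_of_lt_succ (Nat.mod_lt _ two_pos)

lemma measurable_D (j : ℕ) : Measurable (D j) :=
  (measurable_from_nat (f := fun n => n % 2)).comp ((measurable_id.mul_const _).nat_floor)

lemma floor_succ (n : ℕ) (x : ℝ) :
    ⌊x * 2 ^ (n + 1)⌋₊ = 2 * ⌊x * 2 ^ n⌋₊ + D n x := by
  have h2 : ⌊x * 2 ^ (n + 1)⌋₊ / 2 = ⌊x * 2 ^ n⌋₊ := by
    rw [← Nat.floor_div_natCast]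
    congr 1
    push_cast
    ring
  have := Nat.div_add_mod (⌊x * 2 ^ (n + 1)⌋₊) 2
  rw [h2] at this
  unfold D
  omega

/-- `K b n = ∑_{j<n} b j 2^(n-1-j)` defined recursively. -/
def K (b : ℕ → ℕ) : ℕ → ℕ
  | 0 => 0
  | n + 1 => 2 * K b n + b n

lemma K_congr {b c : ℕ → ℕ} (n : ℕ) (h : ∀ j < n, b j = c j) : K b n = K c n := by
  induction n with
  | zero => rfl
  | succ n ih =>
      simp only [K, ih (fun j hj => h j (by omega)), h n (by omega)]

lemma K_lt {b : ℕ → ℕ} (hb : ∀ j, b j ≤ 1) (n : ℕ) : K b n < 2 ^ n := by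
  induction n with
  | zero => simp [K]
  | succ n ih =>
      have := hb n
      simp only [K, pow_succ]
      omega

lemma K_inj {b c : ℕ → ℕ} (hb : ∀ j, b j ≤ 1) (hc : ∀ j, c j ≤ 1) (n : ℕ)
    (h : K b n = K c n) : ∀ j < n, b j = c j := by
  induction n with
  | zero => omega
  | succ n ih =>
      have h1 := hb n
      have h2 := hc n
      simp only [K] at h
      have hbc : b n = c n := by omega
      have hK : K b n = K c n := by omega
      intro j hj
      rcases Nat.lt_succ_iff_lt_or_eq.1 hj with hj' | rfl
      · exact ih hK j hj'
      · exact hbc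

lemma floorK {x : ℝ} (hx : x ∈ Set.Ico (0 : ℝ) 1) (n : ℕ) :
    ⌊x * 2 ^ n⌋₊ = K (fun j => D j x) n := by
  induction n with
  | zero =>
      simp only [pow_zero, mul_one, K]
      exact Nat.floor_eq_zero.2 hx.2
  | succ n ih => rw [floor_succ, ih]; rfl

lemma cyl_eq {b : ℕ → ℕ} (hb : ∀ j, b j ≤ 1) (n : ℕ) :
    (Set.Ico (0 : ℝ) 1 ∩ {x | ∀ j < n, D j x = b j}) =
      Set.Ico ((K b n : ℝ) / 2 ^ n) ((K b n + 1 : ℝ) / 2 ^ n) := by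
  have h2n : (0 : ℝ) < 2 ^ n := by positivity
  ext x
  constructor
  · rintro ⟨hx, hd⟩
    have hK : ⌊x * 2 ^ n⌋₊ = K b n := by
      rw [floorK hx n]; exact K_congr n hd
    have := (Nat.floor_eq_iff (mul_nonneg hx.1 h2n.le)).1 hK
    constructor
    · rw [div_le_iff₀ h2n]; exact this.1
    · rw [lt_div_iff₀ h2n]; push_cast at this ⊢; linarith [this.2]
  · intro hx
    have hKlt : K b n < 2 ^ n := K_lt hb n
    have hx0 : 0 ≤ x := le_trans (by positivity) hx.1
    have hx1 : x < 1 := lt_of_lt_of_le hx.2 (by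
      rw [div_le_one h2n]
      push_cast
      exact_mod_cast Nat.succ_le_of_lt hKlt)
    have hmem : x ∈ Set.Ico (0 : ℝ) 1 := ⟨hx0, hx1⟩
    have hfloor : ⌊x * 2 ^ n⌋₊ = K b n := by
      rw [Nat.floor_eq_iff (mul_nonneg hx0 h2n.le)]
      constructor
      · calc (K b n : ℝ) = (K b n : ℝ) / 2 ^ n * 2 ^ n := by field_simp
          _ ≤ x * 2 ^ n := by gcongr; exact hx.1
      · calc x * 2 ^ n < (K b n + 1 : ℝ) / 2 ^ n * 2 ^ n := by gcongr; exact hx.2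
          _ = K b n + 1 := by field_simp
    refine ⟨hmem, ?_⟩
    have := floorK hmem n
    rw [hfloor] at this
    exact fun j hj => K_inj (fun j => D_le_one j x) hb n this.symm j hj

noncomputable def nu : Measure ℝ := volume.restrict (Set.Icc 0 1)

instance : IsProbabilityMeasure nu :=
  ⟨by rw [nu, Measure.restrict_apply_univ, Real.volume_Icc]; norm_num⟩

lemma measurableSet_event (s : Set ℕ) (b : ℕ → ℕ) :
    MeasurableSet {x : ℝ | ∀ j ∈ s, D j x = b j} := by
  have : {x : ℝ | ∀ j ∈ s, D j x = b j} = ⋂ j ∈ s, D j ⁻¹' {b j} := by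
    ext x; simp [Set.mem_preimage]
  rw [this]
  exact MeasurableSet.biInter (Set.to_countable s)
    fun j _ => measurable_D j (measurableSet_singleton (b j))

lemma nu_inter_Icc (S : Set ℝ) (hS : MeasurableSet S) :
    nu S = volume (S ∩ Set.Ico 0 1) := by
  rw [nu, Measure.restrict_apply hS]
  apply le_antisymm
  · calc volume (S ∩ Set.Icc 0 1) ≤ volume ((S ∩ Set.Ico 0 1) ∪ {1}) := by
          apply measure_mono
          rintro x ⟨hxS, hx0, hx1⟩
          rcases lt_or_eq_of_le hx1 with h | h
          · exact Or.inl ⟨hxS, hx0, h⟩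
          · exact Or.inr h
        _ ≤ volume (S ∩ Set.Ico 0 1) + volume {1} := measure_union_le _ _
        _ = volume (S ∩ Set.Ico 0 1) := by simp
  · exact measure_mono (Set.inter_subset_inter_right _ Set.Ico_subset_Icc_self)

lemma measure_cyl {b : ℕ → ℕ} (hb : ∀ j, b j ≤ 1) (n : ℕ) :
    nu {x | ∀ j < n, D j x = b j} = (2 : ℝ≥0∞)⁻¹ ^ n := by
  have hmeas : MeasurableSet {x : ℝ | ∀ j < n, D j x = b j} := by
    have := measurableSet_event {j | j < n} b
    simpa using this
  rw [nu_inter_Icc _ hmeas, Set.inter_comm, cyl_eq hb n, Real.volume_Ico]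
  have h2n : (0 : ℝ) < 2 ^ n := by positivity
  have : (↑(K b n) + 1 : ℝ) / 2 ^ n - ↑(K b n) / 2 ^ n = ((2 : ℝ)⁻¹) ^ n := by
    rw [← sub_div, add_sub_cancel_left, one_div, inv_pow]
  rw [this, ENNReal.ofReal_pow (by norm_num), ENNReal.ofReal_inv_of_pos (by norm_num),
    ENNReal.ofReal_ofNat]

/-- key independence computation: cylinder probabilities factor. -/
lemma measure_event (n : ℕ) : ∀ (m : ℕ) (J : Finset ℕ) (b : ℕ → ℕ), J ⊆ Finset.range n →
    (Finset.range n \ J).card = m → (∀ j, b j ≤ 1) →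
    nu {x | ∀ j ∈ J, D j x = b j} = (2 : ℝ≥0∞)⁻¹ ^ J.card := by
  intro m
  induction m with
  | zero =>
      intro J b hJ hcard hb
      have hJeq : J = Finset.range n := Finset.eq_of_subset_of_card_le hJ (by
        have := Finset.card_sdiff_of_subset hJ
        omega)
      subst hJeq
      have : {x : ℝ | ∀ j ∈ Finset.range n, D j x = b j} = {x | ∀ j < n, D j x = b j} := by
        ext x; simp
      rw [this, measure_cyl hb n, Finset.card_range]
  | succ m ih =>
      intro J b hJ hcard hb
      have hne : (Finset.range n \ J).Nonempty := by
        rw [← Finset.card_pos, hcard]; omega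
      obtain ⟨k, hk⟩ := hne
      have hkn : k ∈ Finset.range n := (Finset.mem_sdiff.1 hk).1
      have hkJ : k ∉ J := (Finset.mem_sdiff.1 hk).2
      set J' := insert k J with hJ'
      have hJ'sub : J' ⊆ Finset.range n := Finset.insert_subset hkn hJ
      have hcard' : (Finset.range n \ J').card = m := by
        rw [hJ', Finset.sdiff_insert, Finset.card_erase_of_mem hk, hcard]
        omega
      have hupdate : ∀ (c : ℕ), c ≤ 1 → ∀ j, Function.update b k c j ≤ 1 := by
        intro c hc j
        rcases eq_or_ne j k with rfl | h
        · simpa using hc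
        · simpa [Function.update_of_ne h] using hb j
      have hsplit : {x : ℝ | ∀ j ∈ J, D j x = b j} =
          {x | ∀ j ∈ J', D j x = Function.update b k 0 j} ∪
          {x | ∀ j ∈ J', D j x = Function.update b k 1 j} := by
        ext x
        simp only [Set.mem_union, Set.mem_setOf_eq, hJ', Finset.mem_insert]
        constructor
        · intro h
          have hDk := D_le_one k x
          interval_cases hDk : D k x
          · left
            rintro j (rfl | hj)
            · simpa using hDk
            · rw [Function.update_of_ne (by rintro rfl; exact hkJ hj)]
              exact h j hj
          · right
            rintro j (rfl | hj)
            · simpa using hDk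
            · rw [Function.update_of_ne (by rintro rfl; exact hkJ hj)]
              exact h j hj
        · rintro (h | h) j hj
          · have := h j (Or.inr hj)
            rwa [Function.update_of_ne (by rintro rfl; exact hkJ hj)] at this
          · have := h j (Or.inr hj)
            rwa [Function.update_of_ne (by rintro rfl; exact hkJ hj)] at this
      have hdisj : Disjoint {x : ℝ | ∀ j ∈ J', D j x = Function.update b k 0 j}
          {x : ℝ | ∀ j ∈ J', D j x = Function.update b k 1 j} := by
        rw [Set.disjoint_left]
        intro x h0 h1
        have e0 := h0 k (Finset.mem_insert_self k J)
        have e1 := h1 k (Finset.mem_insert_self k J)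
        rw [Function.update_self] at e0 e1
        omega
      have hmeas1 : MeasurableSet {x : ℝ | ∀ j ∈ J', D j x = Function.update b k 1 j} := by
        have := measurableSet_event (↑J' : Set ℕ) (Function.update b k 1)
        simpa using this
      rw [hsplit, measure_union hdisj hmeas1,
        ih J' _ hJ'sub hcard' (hupdate 0 (by norm_num)),
        ih J' _ hJ'sub hcard' (hupdate 1 le_rfl)]
      rw [hJ', Finset.card_insert_of_notMem hkJ, pow_succ]
      rw [← two_mul, ← mul_assoc, mul_right_comm,
        ENNReal.mul_inv_cancel two_ne_zero ENNReal.ofNat_ne_top, one_mul]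

/-! ### digit σ-algebras and independence -/

def A (j : ℕ) : Set ℝ := {x | D j x = 1}

def msp (j : ℕ) : MeasurableSpace ℝ := MeasurableSpace.generateFrom {A j}

lemma msp_le (j : ℕ) : msp j ≤ (inferInstance : MeasurableSpace ℝ) := by
  apply MeasurableSpace.generateFrom_le
  rintro s rfl
  exact measurable_D j (measurableSet_singleton 1)

lemma event_singleton (j : ℕ) : nu (A j) = (2 : ℝ≥0∞)⁻¹ := by
  have h := measure_event (j + 1) (Finset.range (j+1) \ {j}).card {j} (fun _ => 1)
    (by simp [Finset.singleton_subset_iff]) rfl (fun _ => le_rfl)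
  have hA : A j = {x : ℝ | ∀ i ∈ ({j} : Finset ℕ), D i x = 1} := by
    ext x; simp [A]
  rw [hA, h]
  simp

lemma iIndep_msp : iIndep msp nu := by
  apply iIndepSets.iIndep msp_le (fun j => {A j}) (fun j => IsPiSystem.singleton (A j))
    (fun j => rfl)
  rw [iIndepSets_iff]
  intro s f hf
  have hfA : ∀ i ∈ s, f i = A i := by intro i hi; simpa using hf i hi
  have hsub : s ⊆ Finset.range (s.sup id + 1) := by
    intro j hj
    simp only [Finset.mem_range]
    exact Nat.lt_succ_of_le (Finset.le_sup (f := id) hj)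
  have hL : (⋂ i ∈ s, f i) = {x : ℝ | ∀ i ∈ s, D i x = 1} := by
    ext x
    simp only [Set.mem_iInter, Set.mem_setOf_eq]
    constructor
    · intro h i hi; have := h i hi; rwa [hfA i hi] at this
    · intro h i hi; rw [hfA i hi]; exact h i hi
  rw [hL, measure_event (s.sup id + 1) _ s (fun _ => 1) hsub rfl (fun _ => le_rfl)]
  rw [Finset.prod_congr rfl (fun i hi => by rw [hfA i hi, event_singleton])]
  simp

/-! ### the two random variables -/

noncomputable def E (j : ℕ) (x : ℝ) : ℝ := if D j x = 1 then (2 : ℝ)⁻¹ ^ (j + 1) else 0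

lemma E_nonneg (j : ℕ) (x : ℝ) : 0 ≤ E j x := by
  unfold E; split <;> positivity

lemma E_le (j : ℕ) (x : ℝ) : E j x ≤ (2 : ℝ)⁻¹ ^ (j + 1) := by
  unfold E; split
  · exact le_rfl
  · positivity

lemma E_eq_cast (j : ℕ) (x : ℝ) : E j x = (D j x : ℝ) * (2 : ℝ)⁻¹ ^ (j + 1) := by
  unfold E
  have := D_le_one j x
  interval_cases h : D j x <;> simp

lemma summable_w : Summable (fun j : ℕ => (2 : ℝ)⁻¹ ^ (j + 1)) := by
  have : (fun j : ℕ => (2 : ℝ)⁻¹ ^ (j + 1)) = fun j : ℕ => (2 : ℝ)⁻¹ ^ j * 2⁻¹ := by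
    funext j; rw [pow_succ]
  rw [this]
  exact (summable_geometric_of_lt_one (by norm_num) (by norm_num)).mul_right _

lemma tsum_w : ∑' j : ℕ, (2 : ℝ)⁻¹ ^ (j + 1) = 1 := by
  have h1 : ∑' j : ℕ, (2 : ℝ)⁻¹ ^ j = 2 := by
    simpa using tsum_geometric_two
  have : (fun j : ℕ => (2 : ℝ)⁻¹ ^ (j + 1)) = fun j : ℕ => (2 : ℝ)⁻¹ ^ j * 2⁻¹ := by
    funext j; rw [pow_succ]
  rw [this, tsum_mul_right, h1]
  norm_num

lemma summable_E (x : ℝ) : Summable (fun j => E j x) :=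
  Summable.of_nonneg_of_le (fun j => E_nonneg j x) (fun j => E_le j x) summable_w

noncomputable def G (S : Set ℕ) (x : ℝ) : ℝ := ∑' j, S.indicator (fun i => E i x) j

lemma summable_GE (S : Set ℕ) (x : ℝ) : Summable (fun j => S.indicator (fun i => E i x) j) :=
  Summable.of_nonneg_of_le (fun j => Set.indicator_nonneg (fun i _ => E_nonneg i x) j)
    (fun j => le_trans (Set.indicator_le_self' (fun i _ => E_nonneg i x) j) (E_le j x)) summable_w

lemma summable_GW (S : Set ℕ) : Summable (fun j => S.indicator (fun i => (2:ℝ)⁻¹ ^ (i+1)) j) :=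
  Summable.of_nonneg_of_le (fun j => Set.indicator_nonneg (fun i _ => by positivity) j)
    (fun j => Set.indicator_le_self' (fun i _ => by positivity) j) summable_w

lemma G_nonneg (S : Set ℕ) (x : ℝ) : 0 ≤ G S x :=
  tsum_nonneg (fun j => Set.indicator_nonneg (fun i _ => E_nonneg i x) j)

lemma G_le (S : Set ℕ) (x : ℝ) :
    G S x ≤ ∑' j, S.indicator (fun i => (2:ℝ)⁻¹ ^ (i+1)) j := by
  apply Summable.tsum_le_tsum _ (summable_GE S x) (summable_GW S)
  intro j
  by_cases hj : j ∈ S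
  · rw [Set.indicator_of_mem hj, Set.indicator_of_mem hj]; exact E_le j x
  · rw [Set.indicator_of_notMem hj, Set.indicator_of_notMem hj]

lemma measurable_E (j : ℕ) : Measurable[msp j] (E j) := by
  have hA : MeasurableSet[msp j] (A j) := MeasurableSpace.measurableSet_generateFrom rfl
  have : E j = (A j).indicator (fun _ => (2 : ℝ)⁻¹ ^ (j + 1)) := by
    funext x
    by_cases h : D j x = 1
    · rw [Set.indicator_of_mem (show x ∈ A j from h)]; simp [E, h]
    · rw [Set.indicator_of_notMem (show x ∉ A j from h)]; simp [E, h]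
  rw [this]
  exact measurable_const.indicator hA

lemma measurable_G (S : Set ℕ) : Measurable[⨆ j ∈ S, msp j] (G S) := by
  have hterm : ∀ j, Measurable[⨆ j ∈ S, msp j] (fun x => S.indicator (fun i => E i x) j) := by
    intro j
    by_cases hj : j ∈ S
    · have : (fun x => S.indicator (fun i => E i x) j) = E j := by
        funext x; rw [Set.indicator_of_mem hj]
      rw [this]
      exact (measurable_E j).mono (le_biSup msp hj) le_rfl
    · have : (fun x => S.indicator (fun i => E i x) j) = fun _ => 0 := by
        funext x; rw [Set.indicator_of_notMem hj]
      rw [this]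
      exact measurable_const
  have hG : G S = fun x =>
      (∑' j, ENNReal.ofReal (S.indicator (fun i => E i x) j)).toReal := by
    funext x
    have h0 : (0:ℝ) ≤ ∑' j, S.indicator (fun i => E i x) j := G_nonneg S x
    rw [← ENNReal.ofReal_tsum_of_nonneg
      (fun j => Set.indicator_nonneg (fun i _ => E_nonneg i x) j) (summable_GE S x),
      ENNReal.toReal_ofReal h0]
    rfl
  rw [hG]
  exact (Measurable.ennreal_tsum fun j => ENNReal.measurable_ofReal.comp (hterm j)).ennreal_toReal

lemma partial_sum {x : ℝ} (hx : x ∈ Set.Ico (0:ℝ) 1) (n : ℕ) :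
    ∑ j ∈ Finset.range n, E j x = (⌊x * 2 ^ n⌋₊ : ℝ) / 2 ^ n := by
  induction n with
  | zero => simp [Nat.floor_eq_zero.2 hx.2]
  | succ n ih =>
      rw [Finset.sum_range_succ, ih, E_eq_cast, floor_succ]
      push_cast
      rw [inv_pow, pow_succ]
      field_simp

lemma tsum_E {x : ℝ} (hx : x ∈ Set.Ico (0:ℝ) 1) : ∑' j, E j x = x := by
  have hs := summable_E x
  refine HasSum.tsum_eq ?_
  rw [(summable_E x).hasSum_iff_tendsto_nat]
  have hub : ∀ n, ∑ j ∈ Finset.range n, E j x ≤ x := by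
    intro n
    rw [partial_sum hx n, div_le_iff₀ (by positivity)]
    exact Nat.floor_le (mul_nonneg hx.1 (by positivity))
  have hlb : ∀ n, x - (2:ℝ)⁻¹ ^ n ≤ ∑ j ∈ Finset.range n, E j x := by
    intro n
    have h1 : x * 2 ^ n < (⌊x * 2 ^ n⌋₊ : ℝ) + 1 := Nat.lt_floor_add_one _
    have h2 : (0:ℝ) < 2 ^ n := by positivity
    have h4 : ((2:ℝ) ^ n)⁻¹ * 2 ^ n = 1 := inv_mul_cancel₀ h2.ne'
    rw [partial_sum hx n, inv_pow, le_div_iff₀ h2]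
    nlinarith [h1, h4]
  refine tendsto_of_tendsto_of_tendsto_of_le_of_le ?_ tendsto_const_nhds hlb hub
  have : Filter.Tendsto (fun n : ℕ => (2:ℝ)⁻¹ ^ n) Filter.atTop (nhds 0) :=
    tendsto_pow_atTop_nhds_zero_of_lt_one (by norm_num) (by norm_num)
  simpa using tendsto_const_nhds.sub this

lemma G_split {S : Set ℕ} {x : ℝ} (hx : x ∈ Set.Ico (0:ℝ) 1) : G S x + G Sᶜ x = x := by
  rw [G, G, ← Summable.tsum_add (summable_GE S x) (summable_GE Sᶜ x)]
  calc ∑' j, (S.indicator (fun i => E i x) j + Sᶜ.indicator (fun i => E i x) j)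
      = ∑' j, E j x := by
        congr 1; funext j
        exact Set.indicator_self_add_compl_apply S (fun i => E i x) j
    _ = x := tsum_E hx

lemma indepFun_G (S : Set ℕ) : IndepFun (G S) (G Sᶜ) nu := by
  rw [IndepFun_iff_Indep]
  exact indep_of_indep_of_le_left
    (indep_of_indep_of_le_right (indep_biSup_compl msp_le iIndep_msp S)
      (measurable_G Sᶜ).comap_le) (measurable_G S).comap_le

lemma ae_Ico : ∀ᵐ x ∂nu, x ∈ Set.Ico (0:ℝ) 1 := by
  rw [ae_iff]
  have hset : {x : ℝ | ¬x ∈ Set.Ico (0:ℝ) 1} = (Set.Ico (0:ℝ) 1)ᶜ := rfl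
  rw [hset, nu, Measure.restrict_apply measurableSet_Ico.compl]
  refine measure_mono_null (t := {(1:ℝ)}) ?_ Real.volume_singleton
  rintro x ⟨hc, h0, h1⟩
  simp only [Set.mem_compl_iff, Set.mem_Ico, not_and, not_lt] at hc
  exact Set.mem_singleton_iff.2 (le_antisymm h1 (hc h0))

lemma map_add_G (S : Set ℕ) : nu.map (fun x => G S x + G Sᶜ x) = nu := by
  have h : (fun x => G S x + G Sᶜ x) =ᵐ[nu] id := ae_Ico.mono fun x hx => G_split hx
  rw [Measure.map_congr h, Measure.map_id]

lemma tsum_indicator_I {a : ℝ} (ha : a ∈ Set.Ico (0:ℝ) 1) :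
    ∑' j, Set.indicator {j | D j a = 1} (fun i => (2:ℝ)⁻¹ ^ (i+1)) j = a := by
  calc ∑' j, Set.indicator {j | D j a = 1} (fun i => (2:ℝ)⁻¹ ^ (i+1)) j
      = ∑' j, E j a := by
        congr 1; funext j
        by_cases h : D j a = 1
        · rw [Set.indicator_of_mem (show j ∈ {j | D j a = 1} from h)]
          simp [E, h]
        · rw [Set.indicator_of_notMem (show j ∉ {j | D j a = 1} from h)]
          simp [E, h]
    _ = a := tsum_E ha

lemma tsum_indicator_Ic {a : ℝ} (ha : a ∈ Set.Ico (0:ℝ) 1) :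
    ∑' j, Set.indicator {j | D j a = 1}ᶜ (fun i => (2:ℝ)⁻¹ ^ (i+1)) j = 1 - a := by
  set S := {j | D j a = 1}
  have hfun : (fun j => Set.indicator Sᶜ (fun i => (2:ℝ)⁻¹ ^ (i+1)) j) =
      fun j => (2:ℝ)⁻¹ ^ (j+1) - Set.indicator S (fun i => (2:ℝ)⁻¹ ^ (i+1)) j := by
    funext j
    have := Set.indicator_self_add_compl_apply S (fun i => (2:ℝ)⁻¹ ^ (i+1)) j
    linarith
  rw [hfun, Summable.tsum_sub summable_w (summable_GW S), tsum_w, tsum_indicator_I ha]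

end UniformDecomp

/-- A random variable uniform on `[0,1]` can be decomposed (in distribution) as a sum of two
independent random variables supported in `[0,a]` and `[0,1-a]` respectively. -/
theorem uniform_decomposition {Ω : Type*} [MeasurableSpace Ω] (μ : Measure Ω)
    [IsProbabilityMeasure μ] (U : Ω → ℝ)
    (hU : μ.map U = volume.restrict (Set.Icc (0 : ℝ) 1))
    (a : ℝ) (ha : a ∈ Set.Ioo (0 : ℝ) 1) :
    ∃ (Ω' : Type) (_ : MeasurableSpace Ω') (μ' : Measure Ω') (U₁ U₂ : Ω' → ℝ),
      IsProbabilityMeasure μ' ∧ IndepFun U₁ U₂ μ' ∧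
      μ'.map (fun ω => U₁ ω + U₂ ω) = μ.map U ∧
      (∀ᵐ ω ∂μ', U₁ ω ∈ Set.Icc 0 a) ∧
      (∀ᵐ ω ∂μ', U₂ ω ∈ Set.Icc 0 (1 - a)) := by
  classical
  open UniformDecomp in
  set S : Set ℕ := {j | D j a = 1} with hS
  have haIco : a ∈ Set.Ico (0:ℝ) 1 := ⟨ha.1.le, ha.2⟩
  refine ⟨ℝ, inferInstance, nu, G S, G Sᶜ, inferInstance, indepFun_G S, ?_, ?_, ?_⟩
  · rw [hU]
    exact map_add_G S
  · refine Filter.Eventually.of_forall fun x => ⟨G_nonneg S x, ?_⟩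
    calc G S x ≤ ∑' j, S.indicator (fun i => (2:ℝ)⁻¹ ^ (i+1)) j := G_le S x
      _ = a := tsum_indicator_I haIco
  · refine Filter.Eventually.of_forall fun x => ⟨G_nonneg Sᶜ x, ?_⟩
    calc G Sᶜ x ≤ ∑' j, Sᶜ.indicator (fun i => (2:ℝ)⁻¹ ^ (i+1)) j := G_le Sᶜ x
      _ = 1 - a := tsum_indicator_Ic haIco
end

section
/- Let $\sum_{j=0}^\infty a_j$ be a convergent series with $a_j > a_{j+1} > 0$ for all $j$, sum $l$, and remainders $r_n = \sum_{j=n+1}^\infty a_j$. If $a_n \le r_n$ for all $n$, then the set of subsums $\mathcal{A} = \{\sum_{j=0}^\infty \epsilon_j a_j : \epsilon_j \in \{0,1\}\}$ equals the closed interval $[0, l]$. -/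
/-- Greedy partial sums: at step `n`, include `a n` if it still fits under `x`. -/
noncomputable def greedyS (a : ℕ → ℝ) (x : ℝ) : ℕ → ℝ
  | 0 => 0
  | n + 1 => if greedyS a x n + a n ≤ x then greedyS a x n + a n else greedyS a x n

lemma greedyS_zero (a : ℕ → ℝ) (x : ℝ) : greedyS a x 0 = 0 := rfl

lemma greedyS_succ (a : ℕ → ℝ) (x : ℝ) (n : ℕ) :
    greedyS a x (n + 1) =
      if greedyS a x n + a n ≤ x then greedyS a x n + a n else greedyS a x n := rfl

/-- Kakeya's criterion: if a strictly decreasing positive convergent series has each term at most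
its remainder, then its set of subsums is the closed interval `[0, l]` where `l` is the sum. -/
theorem subsum_set_eq_Icc (a : ℕ → ℝ) (hpos : ∀ j, 0 < a j) (hdec : StrictAnti a)
    (hsum : Summable a) (l : ℝ) (hl : l = ∑' j, a j)
    (hrem : ∀ n, a n ≤ ∑' j : ℕ, a (n + 1 + j)) :
    {x : ℝ | ∃ s : Set ℕ, x = ∑' j, s.indicator a j} = Set.Icc 0 l := by
  have ha0 : ∀ j, 0 ≤ a j := fun j => (hpos j).le
  ext x
  simp only [Set.mem_setOf_eq, Set.mem_Icc]
  constructor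
  · rintro ⟨s, rfl⟩
    have hind : ∀ j, s.indicator a j ≤ a j := fun j =>
      Set.indicator_le_self' (fun j _ => ha0 j) j
    have hsums : Summable (s.indicator a) := hsum.indicator s
    refine ⟨tsum_nonneg (fun j => Set.indicator_nonneg (fun j _ => ha0 j) j), ?_⟩
    rw [hl]
    exact Summable.tsum_le_tsum hind hsums hsum
  · rintro ⟨hx0, hxl⟩
    set S := greedyS a x with hS
    set s : Set ℕ := {n | S n + a n ≤ x} with hs
    -- tail sums
    set t : ℕ → ℝ := fun n => ∑' j, a (n + j) with ht
    have hsumt : ∀ n, Summable fun j => a (n + j) := fun n => by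
      have := (summable_nat_add_iff (f := a) n).2 hsum
      exact this.congr fun j => by rw [add_comm]
    have htail : ∀ n, t n = a n + t (n + 1) := by
      intro n
      have h1 := Summable.tsum_eq_zero_add (hsumt n)
      simp only [add_zero] at h1
      simp only [ht]
      rw [h1]
      congr 1
      exact tsum_congr fun j => congrArg a (by omega)
    -- invariant
    have hinv : ∀ n, S n ≤ x ∧ x - S n ≤ t n := by
      intro n
      induction n with
      | zero =>
        refine ⟨hx0, ?_⟩
        rw [hS, greedyS_zero, sub_zero]
        calc x ≤ l := hxl
          _ = ∑' j, a (0 + j) := by rw [hl]; simp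
      | succ n ih =>
        obtain ⟨h1, h2⟩ := ih
        by_cases hc : S n + a n ≤ x
        · have hSn : S (n + 1) = S n + a n := if_pos hc
          refine ⟨by rw [hSn]; exact hc, ?_⟩
          rw [hSn]
          have := htail n
          linarith
        · have hSn : S (n + 1) = S n := if_neg hc
          push_neg at hc
          refine ⟨hSn ▸ h1, ?_⟩
          rw [hSn]
          have h3 : a n ≤ t (n + 1) := by
            have := hrem n
            simpa [ht, add_assoc, add_comm, add_left_comm] using this
          linarith
    -- partial sums of the indicator equal S
    have hpart : ∀ n, ∑ j ∈ Finset.range n, s.indicator a j = S n := by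
      intro n
      induction n with
      | zero => simp [hS, greedyS_zero]
      | succ n ih =>
        rw [Finset.sum_range_succ, ih]
        by_cases hc : S n + a n ≤ x
        · have hmem : n ∈ s := hc
          rw [Set.indicator_of_mem hmem]
          exact (if_pos hc).symm
        · have hmem : n ∉ s := hc
          rw [Set.indicator_of_notMem hmem]
          rw [add_zero]
          exact (if_neg hc).symm
    -- t n → 0
    have htz : Filter.Tendsto t Filter.atTop (nhds 0) := by
      have := tendsto_sum_nat_add a
      apply this.congr
      intro n
      simp only [ht]
      exact tsum_congr fun j => by rw [add_comm]
    -- S n → x by squeeze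
    have hStend : Filter.Tendsto S Filter.atTop (nhds x) := by
      have hup : ∀ n, S n ≤ x := fun n => (hinv n).1
      have hlo : ∀ n, x - t n ≤ S n := fun n => by linarith [(hinv n).2]
      have h1 : Filter.Tendsto (fun n => x - t n) Filter.atTop (nhds x) := by
        simpa using Filter.Tendsto.const_sub x htz
      exact tendsto_of_tendsto_of_tendsto_of_le_of_le h1 tendsto_const_nhds hlo hup
    have hsums : Summable (s.indicator a) := hsum.indicator s
    refine ⟨s, ?_⟩
    have hhs : HasSum (s.indicator a) x := by
      have := hsums.hasSum.tendsto_sum_nat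
      have heq : Filter.Tendsto (fun n => ∑ j ∈ Finset.range n, s.indicator a j)
          Filter.atTop (nhds x) := by
        apply hStend.congr
        intro n
        exact (hpart n).symm
      have := tendsto_nhds_unique this heq
      rw [← this]
      exact hsums.hasSum
    exact hhs.tsum_eq.symm
end

section
/- Let $\lambda > 0$ and let $(B_j)_{j\ge 1}$ be independent Bernoulli random variables with $\Pr(B_j = 1) = \frac{1}{1+e^{\lambda 2^{-j}}}$. Then $\sum_{j=1}^{\infty} B_j 2^{-j}$ follows the truncated exponential distribution on $[0,1]$ with density $\frac{\lambda}{1-e^{-\lambda}} e^{-\lambda u}$, $u \in [0,1]$. -/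
open MeasureTheory ProbabilityTheory Real Filter Topology

lemma te_ptwise {f : ℕ → ℝ} (h0 : ∀ j, 0 ≤ f j) (hle : ∀ j, f j ≤ (2:ℝ)^(-(j:ℤ)-1)) :
    (∑' j, f j = ⨆ n, ∑ j ∈ Finset.range n, f j) ∧
    (∀ n, (∑ j ∈ Finset.range n, f j) ≤ ∑' j, f j) ∧
    (∀ n, (∑' j, f j) ≤ (∑ j ∈ Finset.range n, f j) + ((2:ℝ)^n)⁻¹) := by
  have hgeo : ∀ j : ℕ, (2:ℝ)^(-(j:ℤ)-1) = (1/2:ℝ)^(j+1) := by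
    intro j
    rw [one_div, inv_pow, ← zpow_natCast (2:ℝ) (j+1), ← zpow_neg]
    congr 1
    push_cast
    ring
  have hsum2 : Summable (fun j : ℕ => (1/2:ℝ)^(j+1)) := by
    have := (summable_geometric_of_lt_one (by norm_num : (0:ℝ) ≤ 1/2) (by norm_num)).mul_left (1/2:ℝ)
    simpa [pow_succ, mul_comm] using this
  have hsum : Summable f :=
    Summable.of_nonneg_of_le h0 (fun j => (hle j).trans_eq (hgeo j)) hsum2
  have hpartial : ∀ n, (∑ j ∈ Finset.range n, f j) ≤ ∑' j, f j :=
    fun n => Summable.sum_le_tsum _ (fun j _ => h0 j) hsum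
  have htail : ∀ n, (∑' j, f j) ≤ (∑ j ∈ Finset.range n, f j) + ((2:ℝ)^n)⁻¹ := by
    intro n
    have hshift := Summable.sum_add_tsum_nat_add' (f := f) (k := n) (hsum.comp_injective (add_left_injective n))
    rw [← hshift]
    have h1 : (∑' i, f (i + n)) ≤ ∑' i : ℕ, (1/2:ℝ)^(i+n+1) := by
      refine Summable.tsum_le_tsum (fun i => (hle _).trans_eq ?_) (hsum.comp_injective (add_left_injective n)) ?_
      · rw [hgeo]
      · have := (summable_geometric_of_lt_one (by norm_num : (0:ℝ) ≤ 1/2) (by norm_num)).mul_left ((1/2:ℝ)^(n+1))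
        apply this.congr
        intro i
        rw [← pow_add]
        ring_nf
    have h2 : (∑' i : ℕ, (1/2:ℝ)^(i+n+1)) = ((2:ℝ)^n)⁻¹ := by
      have : ∀ i : ℕ, (1/2:ℝ)^(i+n+1) = ((1/2:ℝ)^(n+1)) * (1/2:ℝ)^i := by
        intro i
        rw [← pow_add]
        ring_nf
      rw [tsum_congr this, tsum_mul_left, tsum_geometric_of_lt_one (by norm_num) (by norm_num)]
      rw [div_pow, one_pow]
      field_simp
      rw [pow_succ]
      ring
    linarith [h1, h2.le, h1.trans_eq h2]
  refine ⟨?_, hpartial, htail⟩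
  have hmono : Monotone (fun n => ∑ j ∈ Finset.range n, f j) := by
    intro m n hmn
    exact Finset.sum_le_sum_of_subset_of_nonneg (Finset.range_subset_range.mpr hmn) (fun j _ _ => h0 j)
  have hbdd : BddAbove (Set.range (fun n => ∑ j ∈ Finset.range n, f j)) := by
    refine ⟨∑' j, f j, ?_⟩
    rintro x ⟨n, rfl⟩
    exact hpartial n
  have htendsto : Tendsto (fun n => ∑ j ∈ Finset.range n, f j) atTop (𝓝 (∑' j, f j)) :=
    hsum.hasSum.tendsto_sum_nat
  have htendsto2 : Tendsto (fun n => ∑ j ∈ Finset.range n, f j) atTop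
      (𝓝 (⨆ n, ∑ j ∈ Finset.range n, f j)) := tendsto_atTop_ciSup hmono hbdd
  exact tendsto_nhds_unique htendsto htendsto2

lemma te_marginal {Ω : Type*} [MeasurableSpace Ω] (μ : Measure Ω) (f : Ω → ℝ)
    (hf : Measurable f) (a b : ℝ)
    (hmap : μ.map f = ENNReal.ofReal a • Measure.dirac (1:ℝ) + ENNReal.ofReal b • Measure.dirac (0:ℝ)) :
    μ (f ⁻¹' {1}) = ENNReal.ofReal a ∧ μ (f ⁻¹' {0}) = ENNReal.ofReal b ∧
      μ (f ⁻¹' ({0,1} : Set ℝ)ᶜ) = 0 := by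
  have h : ∀ (s : Set ℝ), MeasurableSet s → μ (f ⁻¹' s) =
      ENNReal.ofReal a * Measure.dirac (1:ℝ) s + ENNReal.ofReal b * Measure.dirac (0:ℝ) s := by
    intro s hs
    rw [← Measure.map_apply hf hs, hmap]
    simp
  have hc : MeasurableSet (({0,1} : Set ℝ)ᶜ) := (by measurability : MeasurableSet ({0,1}:Set ℝ)).compl
  refine ⟨?_, ?_, ?_⟩
  · rw [h {1} (measurableSet_singleton 1)]; simp
  · rw [h {0} (measurableSet_singleton 0)]; simp
  · rw [h _ hc]
    rw [Measure.dirac_apply' _ hc, Measure.dirac_apply' _ hc]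
    simp

lemma te_bits {Ω : Type*} [MeasurableSpace Ω] {μ : Measure Ω} {B : ℕ → Ω → ℝ}
    (hnull : ∀ j : ℕ, 1 ≤ j → μ (B j ⁻¹' ({0,1} : Set ℝ)ᶜ) = 0) :
    ∀ᵐ ω ∂μ, ∀ j : ℕ, B (j+1) ω ∈ ({0,1} : Set ℝ) := by
  rw [MeasureTheory.ae_all_iff]
  intro j
  have := hnull (j+1) (by omega)
  rw [MeasureTheory.ae_iff]
  convert this using 2
  rfl

lemma te_grid {Ω : Type*} (B : ℕ → Ω → ℝ) (ω : Ω)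
    (hb : ∀ j : ℕ, B (j+1) ω ∈ ({0,1} : Set ℝ)) (n : ℕ) :
    ∃ m : ℕ, (∑ j ∈ Finset.range n, B (j+1) ω * (2:ℝ)^(-(j:ℤ)-1)) = (m:ℝ)/2^n := by
  induction n with
  | zero => exact ⟨0, by simp⟩
  | succ n ih =>
    obtain ⟨m, hm⟩ := ih
    rcases hb n with h0 | h1
    · refine ⟨2*m, ?_⟩
      rw [Finset.sum_range_succ, hm, h0]
      push_cast
      rw [pow_succ]
      ring
    · refine ⟨2*m+1, ?_⟩
      rw [Finset.sum_range_succ, hm, Set.mem_singleton_iff.mp h1]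
      have : (2:ℝ)^(-(n:ℤ)-1) = ((2:ℝ)^(n+1))⁻¹ := by
        rw [← zpow_natCast (2:ℝ) (n+1), ← zpow_neg]
        congr 1
        push_cast
        ring
      rw [this]
      push_cast
      rw [pow_succ]
      have h2 : (2:ℝ)^n ≠ 0 := by positivity
      field_simp

lemma te_indep {Ω : Type*} [MeasurableSpace Ω] {μ : Measure Ω} {B : ℕ → Ω → ℝ}
    (hmeas : ∀ j, Measurable (B j))
    (hindep : iIndepFun B μ) (n : ℕ) :
    IndepFun (fun ω => ∑ j ∈ Finset.range n, B (j+1) ω * (2:ℝ)^(-(j:ℤ)-1)) (B (n+1)) μ := by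
  classical
  set s : Finset ℕ := (Finset.range n).image Nat.succ with hs
  have hdisj : Disjoint s ({n+1} : Finset ℕ) := by
    simp only [Finset.disjoint_singleton_right, hs, Finset.mem_image, Finset.mem_range]
    rintro ⟨j, hj, hj2⟩
    omega
  have base := hindep.indepFun_finset s {n+1} hdisj hmeas
  have hφ : Measurable (fun v : (↥s → ℝ) => ∑ i : ↥s, v i * (2:ℝ)^(-((i:ℕ):ℤ))) := by
    exact Finset.measurable_sum _ (fun i _ => (measurable_pi_apply i).mul_const _)
  have hψ : Measurable (fun v : (↥({n+1}:Finset ℕ) → ℝ) =>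
      v ⟨n+1, Finset.mem_singleton_self _⟩) := measurable_pi_apply _
  have H := base.comp hφ hψ
  have e1 : ((fun v : (↥s → ℝ) => ∑ i : ↥s, v i * (2:ℝ)^(-((i:ℕ):ℤ))) ∘
      (fun a (i : ↥s) => B i a)) = fun ω => ∑ j ∈ Finset.range n, B (j+1) ω * (2:ℝ)^(-(j:ℤ)-1) := by
    funext ω
    simp only [Function.comp_apply]
    rw [Finset.sum_coe_sort s (fun i => B i ω * (2:ℝ)^(-(i:ℤ)))]
    rw [hs, Finset.sum_image (by intro a _ b _ h; omega)]
    refine Finset.sum_congr rfl (fun j hj => ?_)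
    congr 1
    push_cast
    ring_nf
  have e2 : ((fun v : (↥({n+1}:Finset ℕ) → ℝ) => v ⟨n+1, Finset.mem_singleton_self _⟩) ∘
      (fun a (i : ↥({n+1}:Finset ℕ)) => B i a)) = B (n+1) := rfl
  rw [e1, e2] at H
  exact H

lemma te_algebra {t : ℝ} (ht0 : 0 < t) (N k : ℕ) (hk : 1 ≤ k) :
    t/(1+t) * (1 - t ^ (2 * min ((k-1)/2 + 1) N)) + 1/(1+t) * (1 - t ^ (2 * min (k/2 + 1) N))
      = 1 - t ^ min (k+1) (2*N) := by
  have h1t : (1:ℝ) + t ≠ 0 := by positivity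
  rcases Nat.even_or_odd k with ⟨m, hm⟩ | ⟨m, hm⟩
  · have hm1 : 1 ≤ m := by omega
    have e1 : (k-1)/2 + 1 = m := by omega
    have e2 : k/2 + 1 = m + 1 := by omega
    rw [e1, e2]
    rcases lt_or_ge m N with h | h
    · have h1 : min m N = m := by omega
      have h2 : min (m+1) N = m + 1 := by omega
      have h3 : min (k+1) (2*N) = 2*m+1 := by omega
      rw [h1, h2, h3]
      field_simp
      ring
    · have h1 : min m N = N := by omega
      have h2 : min (m+1) N = N := by omega
      have h3 : min (k+1) (2*N) = 2*N := by omega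
      rw [h1, h2, h3]
      field_simp
      ring
  · have e1 : (k-1)/2 + 1 = m+1 := by omega
    have e2 : k/2 + 1 = m + 1 := by omega
    have e3 : min (k+1) (2*N) = 2 * min (m+1) N := by omega
    rw [e1, e2, e3]
    field_simp
    ring

lemma te_lawS {Ω : Type*} [MeasurableSpace Ω] (μ : Measure Ω) [IsProbabilityMeasure μ]
    (lam : ℝ) (hlam : 0 < lam)
    (B : ℕ → Ω → ℝ) (hmeas : ∀ j, Measurable (B j))
    (hindep : iIndepFun B μ)
    (hlaw : ∀ j : ℕ, 1 ≤ j → μ.map (B j) =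
      ENNReal.ofReal (1 / (1 + exp (lam * 2 ^ (-(j : ℤ))))) • Measure.dirac (1 : ℝ) +
      ENNReal.ofReal (1 - 1 / (1 + exp (lam * 2 ^ (-(j : ℤ))))) • Measure.dirac (0 : ℝ)) :
    ∀ n k : ℕ, μ {ω | ∑ j ∈ Finset.range n, B (j+1) ω * (2:ℝ)^(-(j:ℤ)-1) ≤ (k:ℝ)/2^n}
      = ENNReal.ofReal ((1 - exp (-(lam * ((min (k+1) (2^n) : ℕ):ℝ) / 2^n)))/(1-exp (-lam))) := by
  have hden : 0 < 1 - exp (-lam) := by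
    have : exp (-lam) < 1 := exp_lt_one_iff.mpr (by linarith)
    linarith
  have hnull : ∀ j : ℕ, 1 ≤ j → μ (B j ⁻¹' ({0,1} : Set ℝ)ᶜ) = 0 := fun j hj =>
    (te_marginal μ (B j) (hmeas j) _ _ (hlaw j hj)).2.2
  have hbits := te_bits hnull
  -- measurability of partial sums
  have hSmeas : ∀ n, Measurable (fun ω => ∑ j ∈ Finset.range n, B (j+1) ω * (2:ℝ)^(-(j:ℤ)-1)) :=
    fun n => Finset.measurable_sum _ (fun j _ => (hmeas (j+1)).mul_const _)
  -- a.e. grid reduction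
  have hgrid : ∀ (n : ℕ) (x : ℝ), 0 ≤ x →
      μ {ω | ∑ j ∈ Finset.range n, B (j+1) ω * (2:ℝ)^(-(j:ℤ)-1) ≤ x}
        = μ {ω | ∑ j ∈ Finset.range n, B (j+1) ω * (2:ℝ)^(-(j:ℤ)-1) ≤ ((⌊x * 2^n⌋₊ : ℕ):ℝ)/2^n} := by
    intro n x hx
    apply measure_congr
    rw [Filter.eventuallyEq_set]
    filter_upwards [hbits] with ω hb
    obtain ⟨m, hm⟩ := te_grid B ω hb n
    simp only [Set.mem_setOf_eq, hm]
    have h2n : (0:ℝ) < 2^n := by positivity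
    rw [div_le_iff₀ h2n, div_le_div_iff₀ h2n h2n]
    constructor
    · intro h
      have : (m:ℝ) ≤ x * 2^n := h
      have := Nat.le_floor_iff (by positivity : (0:ℝ) ≤ x * 2^n) |>.mpr this
      exact_mod_cast mul_le_mul_of_nonneg_right (Nat.cast_le.mpr this) h2n.le
    · intro h
      have hm' : (m:ℝ) ≤ (⌊x * 2^n⌋₊ : ℝ) := by
        have := mul_le_mul_of_nonneg_right h (by positivity : (0:ℝ) ≤ (2^n:ℝ)⁻¹)
        calc (m:ℝ) = m * 2^n * (2^n)⁻¹ := by field_simp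
        _ ≤ (⌊x * 2^n⌋₊:ℝ) * 2^n * (2^n)⁻¹ := this
        _ = _ := by field_simp
      calc (m:ℝ) ≤ (⌊x * 2^n⌋₊ : ℝ) := hm'
      _ ≤ x * 2^n := Nat.floor_le (by positivity)
  have hgridneg : ∀ (n : ℕ) (x : ℝ), x < 0 →
      μ {ω | ∑ j ∈ Finset.range n, B (j+1) ω * (2:ℝ)^(-(j:ℤ)-1) ≤ x} = 0 := by
    intro n x hx
    refine le_antisymm ?_ zero_le
    have hsub : {ω | ∑ j ∈ Finset.range n, B (j+1) ω * (2:ℝ)^(-(j:ℤ)-1) ≤ x} ≤ᶠ[ae μ] (∅ : Set Ω) := by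
      filter_upwards [hbits] with ω hb hω
      obtain ⟨m, hm⟩ := te_grid B ω hb n
      have hω' : ∑ j ∈ Finset.range n, B (j+1) ω * (2:ℝ)^(-(j:ℤ)-1) ≤ x := hω
      rw [hm] at hω'
      have h0 : (0:ℝ) ≤ (m:ℝ)/2^n := by positivity
      exact absurd (lt_of_le_of_lt hω' hx) (not_lt.mpr h0)
    calc μ _ ≤ μ (∅ : Set Ω) := measure_mono_ae hsub
    _ = 0 := measure_empty
  intro n k
  induction n generalizing k with
  | zero =>
    have hset : {ω : Ω | ∑ j ∈ Finset.range 0, B (j+1) ω * (2:ℝ)^(-(j:ℤ)-1) ≤ (k:ℝ)/2^0}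
        = Set.univ := by
      ext ω
      simp only [Finset.range_zero, Finset.sum_empty, Set.mem_setOf_eq, Set.mem_univ, iff_true]
      positivity
    rw [hset, measure_univ]
    have hmin : min (k+1) (2^0) = 1 := by omega
    rw [hmin]
    norm_num
    rw [div_self hden.ne']
    exact ENNReal.ofReal_one.symm
  | succ n IH =>
    have h2n1 : (0:ℝ) < 2^(n+1) := by positivity
    set t : ℝ := exp (-(lam * ((2:ℝ)^(n+1))⁻¹)) with ht
    have ht0 : 0 < t := exp_pos _
    have ht1 : t < 1 := by
      rw [ht, exp_lt_one_iff]
      have : 0 < lam * ((2:ℝ)^(n+1))⁻¹ := by positivity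
      linarith
    have h1t : (0:ℝ) < 1 + t := by linarith
    obtain ⟨hB1, hB0, _⟩ := te_marginal μ (B (n+1)) (hmeas _) _ _ (hlaw (n+1) (by omega))
    have hzp : (2:ℝ) ^ (-((n+1:ℕ):ℤ)) = ((2:ℝ)^(n+1))⁻¹ := by
      rw [← zpow_natCast (2:ℝ) (n+1), ← zpow_neg]
    have hexp : exp (lam * 2 ^ (-((n+1:ℕ):ℤ))) = t⁻¹ := by
      rw [hzp, ht, ← exp_neg, neg_neg]
    have hp1 : 1 / (1 + exp (lam * 2 ^ (-((n+1:ℕ):ℤ)))) = t/(1+t) := by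
      rw [hexp]
      rw [inv_eq_one_div]
      field_simp
      ring
    have hp0 : 1 - 1 / (1 + exp (lam * 2 ^ (-((n+1:ℕ):ℤ)))) = 1/(1+t) := by
      rw [hp1]
      field_simp
      ring
    rw [hp1] at hB1
    rw [hp0] at hB0
    have hpow2 : (2:ℝ)^(n+1) = 2^n * 2 := pow_succ 2 n
    have hpowN : ∀ M : ℕ, exp (-(lam * (M:ℝ) / 2^n)) = t^(2*M) := by
      intro M
      rw [ht, ← exp_nat_mul]
      congr 1
      have h2n : (2:ℝ)^n ≠ 0 := by positivity
      field_simp [hpow2]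
      push_cast
      ring
    have hpowN1 : ∀ M : ℕ, exp (-(lam * (M:ℝ) / 2^(n+1))) = t^M := by
      intro M
      rw [ht, ← exp_nat_mul]
      congr 1
      field_simp
    have hcoef : (2:ℝ)^(-(n:ℤ)-1) = ((2:ℝ)^(n+1))⁻¹ := by
      rw [← zpow_natCast (2:ℝ) (n+1), ← zpow_neg]
      congr 1
      push_cast
      ring
    have hchar : ∀ ω, (∑ j ∈ Finset.range (n+1), B (j+1) ω * (2:ℝ)^(-(j:ℤ)-1))
        = (∑ j ∈ Finset.range n, B (j+1) ω * (2:ℝ)^(-(j:ℤ)-1)) + B (n+1) ω * ((2:ℝ)^(n+1))⁻¹ := by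
      intro ω
      rw [Finset.sum_range_succ, hcoef]
    have m1 : MeasurableSet (B (n+1) ⁻¹' {1}) := hmeas _ (measurableSet_singleton _)
    have m0 : MeasurableSet (B (n+1) ⁻¹' {0}) := hmeas _ (measurableSet_singleton _)
    set E := {ω | ∑ j ∈ Finset.range (n+1), B (j+1) ω * (2:ℝ)^(-(j:ℤ)-1) ≤ (k:ℝ)/2^(n+1)} with hE
    have hdec : μ E = μ (E ∩ B (n+1) ⁻¹' {1}) + μ (E ∩ B (n+1) ⁻¹' {0}) := by
      have step1 := measure_inter_add_diff (μ := μ) E m1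
      have step2 := measure_inter_add_diff (μ := μ) (E \ B (n+1) ⁻¹' {1}) m0
      have hz : μ ((E \ B (n+1) ⁻¹' {1}) \ B (n+1) ⁻¹' {0}) = 0 := by
        refine measure_mono_null ?_ (hnull (n+1) (by omega))
        intro ω hω
        simp only [Set.mem_diff, Set.mem_preimage, Set.mem_singleton_iff] at hω
        simp only [Set.mem_preimage, Set.mem_compl_iff, Set.mem_insert_iff, Set.mem_singleton_iff]
        tauto
      have hint : (E \ B (n+1) ⁻¹' {1}) ∩ B (n+1) ⁻¹' {0} = E ∩ B (n+1) ⁻¹' {0} := by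
        ext ω
        simp only [Set.mem_inter_iff, Set.mem_diff, Set.mem_preimage, Set.mem_singleton_iff]
        constructor
        · rintro ⟨⟨ha, _⟩, hb⟩
          exact ⟨ha, hb⟩
        · rintro ⟨ha, hb⟩
          exact ⟨⟨ha, by rw [hb]; norm_num⟩, hb⟩
      rw [← step1, ← hint, ← step2, hz, add_zero]
    have hE1 : E ∩ B (n+1) ⁻¹' {1}
        = {ω | (∑ j ∈ Finset.range n, B (j+1) ω * (2:ℝ)^(-(j:ℤ)-1)) ≤ (k:ℝ)/2^(n+1) - ((2:ℝ)^(n+1))⁻¹}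
          ∩ B (n+1) ⁻¹' {1} := by
      ext ω
      simp only [hE, Set.mem_inter_iff, Set.mem_setOf_eq, Set.mem_preimage,
        Set.mem_singleton_iff, hchar ω]
      constructor
      · rintro ⟨ha, hb⟩
        rw [hb] at ha
        exact ⟨by linarith, hb⟩
      · rintro ⟨ha, hb⟩
        exact ⟨by rw [hb]; linarith, hb⟩
    have hE0 : E ∩ B (n+1) ⁻¹' {0}
        = {ω | (∑ j ∈ Finset.range n, B (j+1) ω * (2:ℝ)^(-(j:ℤ)-1)) ≤ (k:ℝ)/2^(n+1)}
          ∩ B (n+1) ⁻¹' {0} := by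
      ext ω
      simp only [hE, Set.mem_inter_iff, Set.mem_setOf_eq, Set.mem_preimage,
        Set.mem_singleton_iff, hchar ω]
      constructor
      · rintro ⟨ha, hb⟩
        rw [hb] at ha
        exact ⟨by linarith, hb⟩
      · rintro ⟨ha, hb⟩
        exact ⟨by rw [hb]; linarith, hb⟩
    have hI := te_indep hmeas hindep n
    have hprod : ∀ (x : ℝ) (A : Set ℝ), MeasurableSet A →
        μ ({ω | (∑ j ∈ Finset.range n, B (j+1) ω * (2:ℝ)^(-(j:ℤ)-1)) ≤ x} ∩ B (n+1) ⁻¹' A)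
          = μ {ω | (∑ j ∈ Finset.range n, B (j+1) ω * (2:ℝ)^(-(j:ℤ)-1)) ≤ x} * μ (B (n+1) ⁻¹' A) := by
      intro x A hA
      exact hI.measure_inter_preimage_eq_mul (Set.Iic x) A measurableSet_Iic hA
    rw [hdec, hE1, hE0, hprod _ _ (measurableSet_singleton _),
      hprod _ _ (measurableSet_singleton _), hB1, hB0]
    have hpow1 : ∀ M : ℕ, (0:ℝ) ≤ (1 - t^M)/(1 - exp (-lam)) :=
      fun M => div_nonneg (sub_nonneg.mpr (pow_le_one₀ ht0.le ht1.le)) hden.le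
    rcases Nat.eq_zero_or_pos k with hk0 | hk
    · subst hk0
      have hz1 : ((0:ℕ):ℝ)/2^(n+1) - ((2:ℝ)^(n+1))⁻¹ < 0 := by
        simp only [Nat.cast_zero, zero_div, zero_sub, neg_neg]
        simp only [neg_lt, neg_zero]
        positivity
      rw [hgridneg n _ hz1, zero_mul, zero_add]
      have hz0 : ((0:ℕ):ℝ)/2^(n+1) = ((0:ℕ):ℝ)/2^n := by norm_num
      rw [hz0, IH 0]
      have hmin : (0+1) ⊓ (2^n) = 1 := by
        have := Nat.one_le_two_pow (n := n)
        omega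
      have hmin1 : (0+1) ⊓ (2^(n+1)) = 1 := by
        have := Nat.one_le_two_pow (n := n+1)
        omega
      rw [hmin, hmin1]
      have e1 : exp (-(lam * ((1:ℕ):ℝ) / 2^n)) = t^2 := by
        have := hpowN 1
        norm_num at this ⊢
        exact this
      have e2 : exp (-(lam * ((1:ℕ):ℝ) / 2^(n+1))) = t := by
        have := hpowN1 1
        norm_num at this ⊢
        exact this
      rw [e1, e2]
      rw [← ENNReal.ofReal_mul (hpow1 2)]
      congr 1
      have ht1' : (1:ℝ) + t ≠ 0 := by positivity
      field_simp
      ring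
    · have hcast : ((k-1:ℕ):ℝ) = (k:ℝ) - 1 := by
        push_cast [hk]
        ring
      have hksub : (k:ℝ)/2^(n+1) - ((2:ℝ)^(n+1))⁻¹ = ((k-1:ℕ):ℝ)/2^(n+1) := by
        rw [hcast, sub_div, one_div]
      rw [hksub]
      have hx1 : (0:ℝ) ≤ ((k-1:ℕ):ℝ)/2^(n+1) := by positivity
      rw [hgrid n _ hx1]
      have h2n : (2:ℝ)^n ≠ 0 := by positivity
      have hfl1 : ⌊(((k-1:ℕ):ℝ)/2^(n+1)) * 2^n⌋₊ = (k-1)/2 := by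
        have e : (((k-1:ℕ):ℝ)/2^(n+1)) * 2^n = ((k-1:ℕ):ℝ)/2 := by
          rw [hpow2]
          field_simp
        rw [e, show (2:ℝ) = ((2:ℕ):ℝ) from by norm_num, Nat.floor_div_natCast, Nat.floor_natCast]
      rw [hfl1, IH ((k-1)/2)]
      have hx0 : (0:ℝ) ≤ (k:ℝ)/2^(n+1) := by positivity
      rw [hgrid n _ hx0]
      have hfl0 : ⌊((k:ℝ)/2^(n+1)) * 2^n⌋₊ = k/2 := by
        have e : ((k:ℝ)/2^(n+1)) * 2^n = ((k:ℕ):ℝ)/2 := by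
          rw [hpow2]
          field_simp
        rw [e, show (2:ℝ) = ((2:ℕ):ℝ) from by norm_num, Nat.floor_div_natCast, Nat.floor_natCast]
      rw [hfl0, IH (k/2)]
      rw [hpowN (((k-1)/2 + 1) ⊓ 2^n), hpowN ((k/2 + 1) ⊓ 2^n), hpowN1 ((k+1) ⊓ 2^(n+1))]
      have hq1 : (0:ℝ) ≤ t/(1+t) := by positivity
      have hq0 : (0:ℝ) ≤ 1/(1+t) := by positivity
      rw [← ENNReal.ofReal_mul (hpow1 _), ← ENNReal.ofReal_mul (hpow1 _),
        ← ENNReal.ofReal_add (mul_nonneg (hpow1 _) hq1) (mul_nonneg (hpow1 _) hq0)]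
      congr 1
      have key := te_algebra ht0 (2^n) k hk
      have hmin2 : (k+1) ⊓ (2^(n+1)) = (k+1) ⊓ (2 * 2^n) := by
        rw [pow_succ']
      rw [hmin2, ← key]
      ring

lemma te_inv_pow_tendsto : Tendsto (fun n : ℕ => ((2:ℝ)^n)⁻¹) atTop (𝓝 0) := by
  have h : ∀ n : ℕ, ((2:ℝ)^n)⁻¹ = (1/2:ℝ)^n := by
    intro n
    rw [one_div, inv_pow]
  rw [funext h]
  exact tendsto_pow_atTop_nhds_zero_of_lt_one (by norm_num) (by norm_num)

lemma te_limit (lam : ℝ) (hlam : 0 < lam) (a : ℝ) (y : ℕ → ℝ)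
    (hy1 : ∀ n, y n ≤ a) (hy2 : ∀ n, a - ((2:ℝ)^n)⁻¹ ≤ y n) :
    Tendsto (fun n => if y n < 0 then (0:ENNReal) else
        ENNReal.ofReal ((1 - exp (-(lam * ((min (⌊y n * 2^n⌋₊ + 1) (2^n) : ℕ):ℝ) / 2^n)))/(1-exp (-lam))))
      atTop (𝓝 (ENNReal.ofReal ((1 - exp (-(lam * max 0 (min 1 a))))/(1-exp (-lam))))) := by
  have hden : 0 < 1 - exp (-lam) := by
    have : exp (-lam) < 1 := exp_lt_one_iff.mpr (by linarith)
    linarith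
  rcases lt_trichotomy a 0 with ha | ha | ha
  · have hmax : max 0 (min 1 a) = 0 := by
      rw [max_eq_left]
      exact (min_le_right 1 a).trans ha.le
    rw [hmax]
    simp only [mul_zero, neg_zero, exp_zero, sub_self, zero_div, ENNReal.ofReal_zero]
    have h : ∀ n, (if y n < 0 then (0:ENNReal) else
        ENNReal.ofReal ((1 - exp (-(lam * ((min (⌊y n * 2^n⌋₊ + 1) (2^n) : ℕ):ℝ) / 2^n)))/(1-exp (-lam)))) = 0 := by
      intro n
      rw [if_pos ((hy1 n).trans_lt ha)]
    rw [funext h]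
    exact tendsto_const_nhds
  · subst ha
    have hmax : max 0 (min 1 (0:ℝ)) = 0 := by norm_num
    rw [hmax]
    simp only [mul_zero, neg_zero, exp_zero, sub_self, zero_div, ENNReal.ofReal_zero]
    have hub : ∀ n, (if y n < 0 then (0:ENNReal) else
        ENNReal.ofReal ((1 - exp (-(lam * ((min (⌊y n * 2^n⌋₊ + 1) (2^n) : ℕ):ℝ) / 2^n)))/(1-exp (-lam))))
          ≤ ENNReal.ofReal ((1 - exp (-(lam * ((2:ℝ)^n)⁻¹)))/(1-exp (-lam))) := by
      intro n
      split_ifs with h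
      · exact zero_le
      · push_neg at h
        have hy0 : y n = 0 := le_antisymm (hy1 n) h
        rw [hy0]
        simp only [zero_mul, Nat.floor_zero, zero_add]
        have hminn : min 1 (2^n) = 1 := by
          have := Nat.one_le_two_pow (n := n)
          omega
        rw [hminn]
        simp only [Nat.cast_one]
        exact le_of_eq (by norm_num [div_eq_mul_inv])
    have hb : Tendsto (fun n : ℕ => ENNReal.ofReal ((1 - exp (-(lam * ((2:ℝ)^n)⁻¹)))/(1-exp (-lam))))
        atTop (𝓝 0) := by
      have h1 : Tendsto (fun n : ℕ => (1 - exp (-(lam * ((2:ℝ)^n)⁻¹)))/(1-exp (-lam))) atTop (𝓝 0) := by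
        have h2 : Tendsto (fun n : ℕ => lam * ((2:ℝ)^n)⁻¹) atTop (𝓝 0) := by
          simpa using te_inv_pow_tendsto.const_mul lam
        have h3 := ((Real.continuous_exp.tendsto _).comp h2.neg)
        simp only [Function.comp_def, neg_zero, exp_zero] at h3
        have h4 := (tendsto_const_nhds (x := (1:ℝ)).sub h3).div_const (1-exp (-lam))
        simpa using h4
      have := (ENNReal.continuous_ofReal.tendsto _).comp h1
      simpa [Function.comp_def] using this
    exact tendsto_of_tendsto_of_tendsto_of_le_of_le tendsto_const_nhds hb
      (fun n => zero_le) hub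
  · -- a > 0
    have hmax : max 0 (min 1 a) = min a 1 := by
      rw [min_comm, max_eq_right]
      positivity
    rw [hmax]
    have hev : ∀ᶠ n in atTop, (0:ℝ) ≤ y n := by
      filter_upwards [te_inv_pow_tendsto.eventually_le_const ha] with n hn
      linarith [hy2 n]
    have hr : Tendsto (fun n => ((min (⌊y n * 2^n⌋₊ + 1) (2^n) : ℕ):ℝ) / 2^n) atTop (𝓝 (min a 1)) := by
      have hlow : Tendsto (fun n : ℕ => min (a - ((2:ℝ)^n)⁻¹) 1) atTop (𝓝 (min a 1)) := by
        have := (tendsto_const_nhds (x := a) (f := atTop (α := ℕ))).sub te_inv_pow_tendsto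
        simp only [sub_zero] at this
        exact this.min tendsto_const_nhds
      have hhigh : Tendsto (fun n : ℕ => min (a + ((2:ℝ)^n)⁻¹) 1) atTop (𝓝 (min a 1)) := by
        have := (tendsto_const_nhds (x := a) (f := atTop (α := ℕ))).add te_inv_pow_tendsto
        simp only [add_zero] at this
        exact this.min tendsto_const_nhds
      refine tendsto_of_tendsto_of_tendsto_of_le_of_le' hlow hhigh ?_ ?_
      · filter_upwards [hev] with n hn
        have h2n : (0:ℝ) < 2^n := by positivity
        have hcast : ((min (⌊y n * 2^n⌋₊ + 1) (2^n) : ℕ):ℝ) / 2^n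
            = min (((⌊y n * 2^n⌋₊ : ℕ):ℝ) + 1) ((2:ℝ)^n) / 2^n := by
          push_cast
          norm_num
        rw [hcast, ← min_div_div_right h2n.le, div_self h2n.ne']
        have hfl : y n * 2^n < ((⌊y n * 2^n⌋₊ : ℕ):ℝ) + 1 := Nat.lt_floor_add_one _
        have : a - ((2:ℝ)^n)⁻¹ ≤ (((⌊y n * 2^n⌋₊ : ℕ):ℝ) + 1) / 2^n := by
          rw [le_div_iff₀ h2n]
          have := hy2 n
          nlinarith
        exact min_le_min this le_rfl
      · filter_upwards [hev] with n hn
        have h2n : (0:ℝ) < 2^n := by positivity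
        have hcast : ((min (⌊y n * 2^n⌋₊ + 1) (2^n) : ℕ):ℝ) / 2^n
            = min (((⌊y n * 2^n⌋₊ : ℕ):ℝ) + 1) ((2:ℝ)^n) / 2^n := by
          push_cast
          norm_num
        rw [hcast, ← min_div_div_right h2n.le, div_self h2n.ne']
        have hfl : ((⌊y n * 2^n⌋₊ : ℕ):ℝ) ≤ y n * 2^n := Nat.floor_le (by positivity)
        have : (((⌊y n * 2^n⌋₊ : ℕ):ℝ) + 1) / 2^n ≤ a + ((2:ℝ)^n)⁻¹ := by
          rw [div_le_iff₀ h2n]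
          have hle := hy1 n
          have hinv : ((2:ℝ)^n)⁻¹ * 2^n = 1 := inv_mul_cancel₀ h2n.ne'
          have := mul_le_mul_of_nonneg_right hle h2n.le
          nlinarith
        exact min_le_min this le_rfl
    have h2 : Tendsto (fun n => ENNReal.ofReal ((1 - exp (-(lam * (((min (⌊y n * 2^n⌋₊ + 1) (2^n) : ℕ):ℝ)) / 2^n)))/(1-exp (-lam))))
        atTop (𝓝 (ENNReal.ofReal ((1 - exp (-(lam * min a 1)))/(1-exp (-lam))))) := by
      have h3 := ((Real.continuous_exp.tendsto _).comp (hr.const_mul lam).neg)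
      have h4 := ((tendsto_const_nhds (x := (1:ℝ))).sub h3).div_const (1-exp (-lam))
      have h5 := (ENNReal.continuous_ofReal.tendsto _).comp h4
      simpa [Function.comp_def, mul_div_assoc] using h5
    refine h2.congr' ?_
    filter_upwards [hev] with n hn
    rw [if_neg (not_lt.mpr hn)]

lemma te_nu (lam : ℝ) (hlam : 0 < lam) (a : ℝ) :
    (volume.withDensity (fun u => Set.indicator (Set.Icc (0:ℝ) 1)
        (fun u => ENNReal.ofReal (lam / (1 - exp (-lam)) * exp (-(lam * u)))) u)) (Set.Iic a)
      = ENNReal.ofReal ((1 - exp (-(lam * max 0 (min 1 a))))/(1-exp (-lam))) := by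
  have hden : 0 < 1 - exp (-lam) := by
    have : exp (-lam) < 1 := exp_lt_one_iff.mpr (by linarith)
    linarith
  rw [withDensity_apply _ measurableSet_Iic]
  rw [lintegral_indicator (by measurability : MeasurableSet (Set.Icc (0:ℝ) 1))]
  rw [Measure.restrict_restrict (by measurability : MeasurableSet (Set.Icc (0:ℝ) 1))]
  rcases lt_or_ge a 0 with ha | ha
  · have hempty : Set.Icc (0:ℝ) 1 ∩ Set.Iic a = ∅ := by
      ext x
      simp only [Set.mem_inter_iff, Set.mem_Icc, Set.mem_Iic, Set.mem_empty_iff_false, iff_false]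
      rintro ⟨⟨h0, _⟩, h1⟩
      linarith
    rw [hempty]
    simp only [Measure.restrict_empty, lintegral_zero_measure]
    have hmax : max 0 (min 1 a) = 0 := by
      rw [max_eq_left]
      exact (min_le_right 1 a).trans ha.le
    rw [hmax]
    simp
  · set c := min 1 a with hc
    have hc0 : 0 ≤ c := le_min zero_le_one ha
    have hc1 : c ≤ 1 := min_le_left _ _
    have hmax : max 0 (min 1 a) = c := max_eq_right hc0
    rw [hmax]
    have hint : Set.Icc (0:ℝ) 1 ∩ Set.Iic a = Set.Icc 0 c := by
      ext x
      simp only [Set.mem_inter_iff, Set.mem_Icc, Set.mem_Iic, hc, le_min_iff, min_le_iff]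
      constructor
      · rintro ⟨⟨h0, h1⟩, h2⟩
        exact ⟨h0, h1, h2⟩
      · rintro ⟨h0, h1, h2⟩
        exact ⟨⟨h0, h1⟩, h2⟩
    rw [hint]
    have hcont : Continuous (fun u : ℝ => lam / (1 - exp (-lam)) * exp (-(lam * u))) := by
      continuity
    have hInt : IntegrableOn (fun u : ℝ => lam / (1 - exp (-lam)) * exp (-(lam * u))) (Set.Icc 0 c) :=
      hcont.integrableOn_Icc
    rw [← ofReal_integral_eq_lintegral_ofReal hInt
      (Filter.Eventually.of_forall (fun x => by positivity))]
    congr 1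
    rw [MeasureTheory.integral_Icc_eq_integral_Ioc, ← intervalIntegral.integral_of_le hc0]
    rw [intervalIntegral.integral_const_mul]
    have hsub : ∀ x : ℝ, exp (-(lam * x)) = exp ((-lam) * x) := by
      intro x
      ring_nf
    have hiv : (∫ x in (0:ℝ)..c, exp ((-lam) * x)) = (-lam)⁻¹ * (exp (-lam * c) - 1) := by
      rw [intervalIntegral.integral_comp_mul_left exp (by linarith : (-lam) ≠ 0)]
      simp [integral_exp]
    have hsub2 : (∫ x in (0:ℝ)..c, exp (-(lam * x))) = ∫ x in (0:ℝ)..c, exp ((-lam) * x) := by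
      congr 1
      funext x
      ring_nf
    rw [hsub2, hiv]
    have hl : lam ≠ 0 := hlam.ne'
    have he : exp (-lam * c) = exp (-(lam * c)) := by ring_nf
    rw [he]
    field_simp
    ring

lemma te_grid_measure {Ω : Type*} [MeasurableSpace Ω] {μ : Measure Ω} {B : ℕ → Ω → ℝ}
    (hbits : ∀ᵐ ω ∂μ, ∀ j : ℕ, B (j+1) ω ∈ ({0,1} : Set ℝ)) (n : ℕ) (x : ℝ) (hx : 0 ≤ x) :
    μ {ω | ∑ j ∈ Finset.range n, B (j+1) ω * (2:ℝ)^(-(j:ℤ)-1) ≤ x}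
      = μ {ω | ∑ j ∈ Finset.range n, B (j+1) ω * (2:ℝ)^(-(j:ℤ)-1) ≤ ((⌊x * 2^n⌋₊ : ℕ):ℝ)/2^n} := by
  apply measure_congr
  rw [Filter.eventuallyEq_set]
  filter_upwards [hbits] with ω hb
  obtain ⟨m, hm⟩ := te_grid B ω hb n
  simp only [Set.mem_setOf_eq, hm]
  have h2n : (0:ℝ) < 2^n := by positivity
  rw [div_le_iff₀ h2n, div_le_div_iff₀ h2n h2n]
  constructor
  · intro h
    have h1 : (m:ℝ) ≤ x * 2^n := h
    have h2 := Nat.le_floor_iff (by positivity : (0:ℝ) ≤ x * 2^n) |>.mpr h1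
    exact_mod_cast mul_le_mul_of_nonneg_right (Nat.cast_le.mpr h2) h2n.le
  · intro h
    have hm' : (m:ℝ) ≤ (⌊x * 2^n⌋₊ : ℝ) := by
      have h3 := mul_le_mul_of_nonneg_right h (by positivity : (0:ℝ) ≤ ((2:ℝ)^n)⁻¹)
      calc (m:ℝ) = m * 2^n * (2^n)⁻¹ := by field_simp
      _ ≤ (⌊x * 2^n⌋₊:ℝ) * 2^n * (2^n)⁻¹ := h3
      _ = _ := by field_simp
    calc (m:ℝ) ≤ (⌊x * 2^n⌋₊ : ℝ) := hm'
    _ ≤ x * 2^n := Nat.floor_le (by positivity)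

lemma te_grid_neg {Ω : Type*} [MeasurableSpace Ω] {μ : Measure Ω} {B : ℕ → Ω → ℝ}
    (hbits : ∀ᵐ ω ∂μ, ∀ j : ℕ, B (j+1) ω ∈ ({0,1} : Set ℝ)) (n : ℕ) (x : ℝ) (hx : x < 0) :
    μ {ω | ∑ j ∈ Finset.range n, B (j+1) ω * (2:ℝ)^(-(j:ℤ)-1) ≤ x} = 0 := by
  refine le_antisymm ?_ zero_le
  have hsub : {ω | ∑ j ∈ Finset.range n, B (j+1) ω * (2:ℝ)^(-(j:ℤ)-1) ≤ x} ≤ᶠ[ae μ] (∅ : Set Ω) := by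
    filter_upwards [hbits] with ω hb hω
    obtain ⟨m, hm⟩ := te_grid B ω hb n
    have hω' : ∑ j ∈ Finset.range n, B (j+1) ω * (2:ℝ)^(-(j:ℤ)-1) ≤ x := hω
    rw [hm] at hω'
    have h0 : (0:ℝ) ≤ (m:ℝ)/2^n := by positivity
    exact absurd (lt_of_le_of_lt hω' hx) (not_lt.mpr h0)
  calc μ _ ≤ μ (∅ : Set Ω) := measure_mono_ae hsub
  _ = 0 := measure_empty

lemma te_lawS_real {Ω : Type*} [MeasurableSpace Ω] (μ : Measure Ω) [IsProbabilityMeasure μ]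
    (lam : ℝ) (hlam : 0 < lam)
    (B : ℕ → Ω → ℝ) (hmeas : ∀ j, Measurable (B j))
    (hindep : iIndepFun B μ)
    (hlaw : ∀ j : ℕ, 1 ≤ j → μ.map (B j) =
      ENNReal.ofReal (1 / (1 + exp (lam * 2 ^ (-(j : ℤ))))) • Measure.dirac (1 : ℝ) +
      ENNReal.ofReal (1 - 1 / (1 + exp (lam * 2 ^ (-(j : ℤ))))) • Measure.dirac (0 : ℝ)) :
    ∀ (n : ℕ) (x : ℝ), μ {ω | ∑ j ∈ Finset.range n, B (j+1) ω * (2:ℝ)^(-(j:ℤ)-1) ≤ x}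
      = if x < 0 then 0 else
        ENNReal.ofReal ((1 - exp (-(lam * ((min (⌊x * 2^n⌋₊ + 1) (2^n) : ℕ):ℝ) / 2^n)))/(1-exp (-lam))) := by
  intro n x
  have hnull : ∀ j : ℕ, 1 ≤ j → μ (B j ⁻¹' ({0,1} : Set ℝ)ᶜ) = 0 := fun j hj =>
    (te_marginal μ (B j) (hmeas j) _ _ (hlaw j hj)).2.2
  have hbits := te_bits hnull
  split_ifs with h
  · exact te_grid_neg hbits n x h
  · push_neg at h
    rw [te_grid_measure hbits n x h]
    exact te_lawS μ lam hlam B hmeas hindep hlaw n ⌊x * 2^n⌋₊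

/-- If `(B j)_{j ≥ 1}` are independent Bernoulli random variables with
`Pr(B j = 1) = 1/(1+exp(λ 2^{-j}))`, then `∑_{j≥1} B_j 2^{-j}` follows the truncated
exponential distribution on `[0,1]` with parameter `λ`. -/
theorem binary_expansion_truncated_exponential {Ω : Type*} [MeasurableSpace Ω] (μ : Measure Ω)
    [IsProbabilityMeasure μ] (lam : ℝ) (hlam : 0 < lam)
    (B : ℕ → Ω → ℝ) (hmeas : ∀ j, Measurable (B j))
    (hindep : iIndepFun B μ)
    (hlaw : ∀ j : ℕ, 1 ≤ j → μ.map (B j) =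
      ENNReal.ofReal (1 / (1 + exp (lam * 2 ^ (-(j : ℤ))))) • Measure.dirac (1 : ℝ) +
      ENNReal.ofReal (1 - 1 / (1 + exp (lam * 2 ^ (-(j : ℤ))))) • Measure.dirac (0 : ℝ)) :
    μ.map (fun ω => ∑' j : ℕ, B (j + 1) ω * (2 : ℝ) ^ (-(j : ℤ) - 1)) =
      volume.withDensity (fun u =>
        Set.indicator (Set.Icc (0 : ℝ) 1)
          (fun u => ENNReal.ofReal (lam / (1 - exp (-lam)) * exp (-(lam * u)))) u) := by
  have hnull : ∀ j : ℕ, 1 ≤ j → μ (B j ⁻¹' ({0,1} : Set ℝ)ᶜ) = 0 := fun j hj =>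
    (te_marginal μ (B j) (hmeas j) _ _ (hlaw j hj)).2.2
  have hbits := te_bits hnull
  have hSmeas : ∀ n, Measurable (fun ω => ∑ j ∈ Finset.range n, B (j+1) ω * (2:ℝ)^(-(j:ℤ)-1)) :=
    fun n => Finset.measurable_sum _ (fun j _ => (hmeas (j+1)).mul_const _)
  have hYmeas : Measurable (fun ω => ⨆ n, ∑ j ∈ Finset.range n, B (j+1) ω * (2:ℝ)^(-(j:ℤ)-1)) :=
    Measurable.iSup hSmeas
  have hbnds : ∀ ω, (∀ j : ℕ, B (j+1) ω ∈ ({0,1} : Set ℝ)) →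
      (∀ j, 0 ≤ B (j+1) ω * (2:ℝ)^(-(j:ℤ)-1)) ∧
      (∀ j, B (j+1) ω * (2:ℝ)^(-(j:ℤ)-1) ≤ (2:ℝ)^(-(j:ℤ)-1)) := by
    intro ω hb
    constructor
    · intro j
      rcases hb j with h | h
      · rw [h]; simp
      · rw [Set.mem_singleton_iff.mp h]; positivity
    · intro j
      rcases hb j with h | h
      · rw [h]; simp; positivity
      · rw [Set.mem_singleton_iff.mp h, one_mul]
  have hXY : (fun ω => ∑' j : ℕ, B (j + 1) ω * (2 : ℝ) ^ (-(j : ℤ) - 1)) =ᵐ[μ]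
      (fun ω => ⨆ n, ∑ j ∈ Finset.range n, B (j+1) ω * (2:ℝ)^(-(j:ℤ)-1)) := by
    filter_upwards [hbits] with ω hb
    obtain ⟨h0, hle⟩ := hbnds ω hb
    exact (te_ptwise h0 hle).1
  rw [Measure.map_congr hXY]
  haveI : IsProbabilityMeasure
      (μ.map (fun ω => ⨆ n, ∑ j ∈ Finset.range n, B (j+1) ω * (2:ℝ)^(-(j:ℤ)-1))) :=
    Measure.isProbabilityMeasure_map hYmeas.aemeasurable
  refine Measure.ext_of_Iic _ _ (fun a => ?_)
  rw [Measure.map_apply hYmeas measurableSet_Iic, te_nu lam hlam a]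
  -- sandwich
  have hbound : ∀ᵐ ω ∂μ, ∀ n : ℕ,
      ((∑ j ∈ Finset.range n, B (j+1) ω * (2:ℝ)^(-(j:ℤ)-1))
        ≤ ⨆ m, ∑ j ∈ Finset.range m, B (j+1) ω * (2:ℝ)^(-(j:ℤ)-1)) ∧
      ((⨆ m, ∑ j ∈ Finset.range m, B (j+1) ω * (2:ℝ)^(-(j:ℤ)-1))
        ≤ (∑ j ∈ Finset.range n, B (j+1) ω * (2:ℝ)^(-(j:ℤ)-1)) + ((2:ℝ)^n)⁻¹) := by
    filter_upwards [hbits] with ω hb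
    obtain ⟨h0, hle⟩ := hbnds ω hb
    obtain ⟨hsup, hpart, htail⟩ := te_ptwise h0 hle
    intro n
    exact ⟨hsup ▸ hpart n, hsup ▸ htail n⟩
  have hupper : ∀ n : ℕ,
      μ ((fun ω => ⨆ m, ∑ j ∈ Finset.range m, B (j+1) ω * (2:ℝ)^(-(j:ℤ)-1)) ⁻¹' Set.Iic a)
        ≤ μ {ω | ∑ j ∈ Finset.range n, B (j+1) ω * (2:ℝ)^(-(j:ℤ)-1) ≤ a} := by
    intro n
    apply measure_mono_ae
    filter_upwards [hbound] with ω hω hmem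
    have : (⨆ m, ∑ j ∈ Finset.range m, B (j+1) ω * (2:ℝ)^(-(j:ℤ)-1)) ≤ a := hmem
    exact le_trans (hω n).1 this
  have hlower : ∀ n : ℕ,
      μ {ω | ∑ j ∈ Finset.range n, B (j+1) ω * (2:ℝ)^(-(j:ℤ)-1) ≤ a - ((2:ℝ)^n)⁻¹}
        ≤ μ ((fun ω => ⨆ m, ∑ j ∈ Finset.range m, B (j+1) ω * (2:ℝ)^(-(j:ℤ)-1)) ⁻¹' Set.Iic a) := by
    intro n
    apply measure_mono_ae
    filter_upwards [hbound] with ω hω hmem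
    have h1 : (∑ j ∈ Finset.range n, B (j+1) ω * (2:ℝ)^(-(j:ℤ)-1)) ≤ a - ((2:ℝ)^n)⁻¹ := hmem
    have h2 := (hω n).2
    show (⨆ m, ∑ j ∈ Finset.range m, B (j+1) ω * (2:ℝ)^(-(j:ℤ)-1)) ≤ a
    linarith
  have hval := te_lawS_real μ lam hlam B hmeas hindep hlaw
  have hutend : Tendsto (fun n : ℕ => μ {ω | ∑ j ∈ Finset.range n, B (j+1) ω * (2:ℝ)^(-(j:ℤ)-1) ≤ a})
      atTop (𝓝 (ENNReal.ofReal ((1 - exp (-(lam * max 0 (min 1 a))))/(1-exp (-lam))))) := by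
    have hlim := te_limit lam hlam a (fun _ => a) (fun n => le_rfl)
      (fun n => by
        have : (0:ℝ) < ((2:ℝ)^n)⁻¹ := by positivity
        linarith)
    refine hlim.congr (fun n => ?_)
    rw [hval n a]
  have hltend : Tendsto (fun n : ℕ => μ {ω | ∑ j ∈ Finset.range n, B (j+1) ω * (2:ℝ)^(-(j:ℤ)-1) ≤ a - ((2:ℝ)^n)⁻¹})
      atTop (𝓝 (ENNReal.ofReal ((1 - exp (-(lam * max 0 (min 1 a))))/(1-exp (-lam))))) := by
    have hlim := te_limit lam hlam a (fun n => a - ((2:ℝ)^n)⁻¹)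
      (fun n => by
        have : (0:ℝ) < ((2:ℝ)^n)⁻¹ := by positivity
        linarith)
      (fun n => le_rfl)
    refine hlim.congr (fun n => ?_)
    rw [hval n (a - ((2:ℝ)^n)⁻¹)]
  exact le_antisymm (ge_of_tendsto hutend (Eventually.of_forall hupper))
    (le_of_tendsto hltend (Eventually.of_forall hlower))
end

section
/- For each $\lambda > 0$, the identity $\sum_{j=-\infty}^{\infty} \frac{2^j}{1+e^{\lambda 2^j}} = \frac{1}{\lambda}$ holds; in particular $\sum_{j=-\infty}^{\infty} \frac{2^j}{1+e^{2^j}} = 1$. -/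
open Real

open Filter Finset Topology in
private noncomputable def Faux (lam : ℝ) (j : ℤ) : ℝ := (2:ℝ)^j / (exp (lam * 2^j) - 1)

open Filter Finset Topology in
private lemma step_eq (lam : ℝ) (hlam : 0 < lam) (j : ℤ) :
    (2:ℝ)^j / (1 + exp (lam * 2^j)) = Faux lam j - Faux lam (j+1) := by
  have hx : (0:ℝ) < lam * 2^j := by positivity
  have ha : 1 < exp (lam * 2^j) := by
    rw [show (1:ℝ) = exp 0 by simp]; exact Real.exp_lt_exp.mpr hx
  have h2 : lam * 2^(j+1) = (lam * 2^j) + (lam * 2^j) := by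
    rw [zpow_add_one₀ (by norm_num : (2:ℝ) ≠ 0)]; ring
  unfold Faux
  rw [h2, Real.exp_add, zpow_add_one₀ (by norm_num : (2:ℝ) ≠ 0)]
  set a := exp (lam * 2^j) with hadef
  have h1 : a - 1 ≠ 0 := by nlinarith
  have h3 : 1 + a ≠ 0 := by nlinarith
  have h4 : a * a - 1 ≠ 0 := by nlinarith
  have h5 : a ^ 2 - 1 ≠ 0 := by nlinarith
  field_simp
  ring

open Filter Finset Topology in
private lemma faux_top (lam : ℝ) (hlam : 0 < lam) :
    Tendsto (fun n : ℕ => Faux lam (n : ℤ)) atTop (𝓝 0) := by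
  have hb : ∀ n : ℕ, Faux lam (n:ℤ) ≤ (2/lam^2) * (1/2)^n := by
    intro n
    have hx : (0:ℝ) < lam * 2^(n:ℤ) := by positivity
    have hq := Real.quadratic_le_exp_of_nonneg hx.le
    have hden : (lam * 2^(n:ℤ))^2/2 ≤ exp (lam * 2^(n:ℤ)) - 1 := by nlinarith
    have hdpos : (0:ℝ) < (lam * 2^(n:ℤ))^2/2 := by positivity
    have : Faux lam (n:ℤ) ≤ (2:ℝ)^(n:ℤ) / ((lam * 2^(n:ℤ))^2/2) :=
      div_le_div_of_nonneg_left (by positivity) hdpos hden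
    refine this.trans_eq ?_
    rw [zpow_natCast]
    field_simp
    rw [one_div, inv_pow]; field_simp
  have h0 : ∀ n : ℕ, 0 ≤ Faux lam (n:ℤ) := by
    intro n
    have hx : (0:ℝ) < lam * 2^(n:ℤ) := by positivity
    have : (0:ℝ) < exp (lam * 2^(n:ℤ)) - 1 := by
      have := Real.add_one_lt_exp (ne_of_gt hx); linarith
    unfold Faux; positivity
  have hg : Tendsto (fun n : ℕ => (2/lam^2) * (1/2:ℝ)^n) atTop (𝓝 0) := by
    have := tendsto_pow_atTop_nhds_zero_of_lt_one (by norm_num : (0:ℝ) ≤ 1/2) (by norm_num)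
    simpa using this.const_mul (2/lam^2)
  exact squeeze_zero h0 hb hg

open Filter Finset Topology in
private lemma slope_lim : Tendsto (fun x : ℝ => x / (exp x - 1)) (𝓝[≠] (0:ℝ)) (𝓝 1) := by
  have h := (Real.hasDerivAt_exp 0)
  rw [hasDerivAt_iff_tendsto_slope] at h
  have h' : Tendsto (fun x : ℝ => (exp x - 1) / x) (𝓝[≠] (0:ℝ)) (𝓝 1) := by
    have := h.congr (fun x => by rw [slope_def_field])
    simpa [Real.exp_zero] using this
  have h2 := h'.inv₀ (one_ne_zero)
  rw [inv_one] at h2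
  exact h2.congr (fun x => by rw [inv_div])

open Filter Finset Topology in
private lemma faux_bot (lam : ℝ) (hlam : 0 < lam) :
    Tendsto (fun n : ℕ => Faux lam (-(n : ℤ))) atTop (𝓝 (1/lam)) := by
  have hx0 : Tendsto (fun n : ℕ => lam * 2^(-(n:ℤ))) atTop (𝓝[≠] (0:ℝ)) := by
    apply tendsto_nhdsWithin_of_tendsto_nhds_of_eventually_within
    · have := tendsto_pow_atTop_nhds_zero_of_lt_one (by norm_num : (0:ℝ) ≤ 1/2) (by norm_num)
      have h := this.const_mul lam
      rw [mul_zero] at h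
      refine h.congr (fun n => ?_)
      rw [zpow_neg, zpow_natCast, one_div, inv_pow]
    · filter_upwards with n
      have : (0:ℝ) < lam * 2^(-(n:ℤ)) := by positivity
      exact ne_of_gt this
  have hcomp := slope_lim.comp hx0
  have := hcomp.const_mul (1/lam)
  rw [mul_one] at this
  refine this.congr (fun n => ?_)
  simp only [Function.comp]
  have hx : (0:ℝ) < lam * 2^(-(n:ℤ)) := by positivity
  have hden : (0:ℝ) < exp (lam * 2^(-(n:ℤ))) - 1 := by
    have := Real.add_one_lt_exp (ne_of_gt hx); linarith
  unfold Faux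
  field_simp

open Filter Finset Topology in
private lemma main_lemma (lam : ℝ) (hlam : 0 < lam) :
    ∑' j : ℤ, (2 : ℝ) ^ j / (1 + exp (lam * 2 ^ j)) = 1 / lam := by
  have key := step_eq lam hlam
  have hpos : HasSum (fun n : ℕ => (2:ℝ)^(n:ℤ) / (1 + exp (lam * 2^(n:ℤ)))) (Faux lam 0) := by
    rw [hasSum_iff_tendsto_nat_of_nonneg (fun n => by positivity)]
    have hsum : ∀ N : ℕ, ∑ i ∈ range N, (2:ℝ)^(i:ℤ) / (1 + exp (lam * 2^(i:ℤ)))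
        = Faux lam 0 - Faux lam (N:ℤ) := by
      intro N
      calc ∑ i ∈ range N, (2:ℝ)^(i:ℤ) / (1 + exp (lam * 2^(i:ℤ)))
          = ∑ i ∈ range N,
              ((fun n : ℕ => Faux lam (n:ℤ)) i - (fun n : ℕ => Faux lam (n:ℤ)) (i+1)) := by
            refine Finset.sum_congr rfl fun i _ => ?_
            rw [key]
            push_cast
            rfl
        _ = Faux lam 0 - Faux lam (N:ℤ) := by
            rw [Finset.sum_range_sub' (fun n : ℕ => Faux lam (n:ℤ))]
            norm_num
    simp only [hsum]
    have := (faux_top lam hlam).const_sub (Faux lam 0)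
    simpa using this
  have hneg : HasSum (fun n : ℕ => (2:ℝ)^(-((n:ℤ)+1)) / (1 + exp (lam * 2^(-((n:ℤ)+1)))))
      (1/lam - Faux lam 0) := by
    rw [hasSum_iff_tendsto_nat_of_nonneg (fun n => by positivity)]
    have hsum : ∀ N : ℕ, ∑ i ∈ range N, (2:ℝ)^(-((i:ℤ)+1)) / (1 + exp (lam * 2^(-((i:ℤ)+1))))
        = Faux lam (-(N:ℤ)) - Faux lam 0 := by
      intro N
      calc ∑ i ∈ range N, (2:ℝ)^(-((i:ℤ)+1)) / (1 + exp (lam * 2^(-((i:ℤ)+1))))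
          = ∑ i ∈ range N,
              ((fun n : ℕ => Faux lam (-(n:ℤ))) (i+1) - (fun n : ℕ => Faux lam (-(n:ℤ))) i) := by
            refine Finset.sum_congr rfl fun i _ => ?_
            rw [key]
            have h1 : (-((i:ℤ)+1)+1) = -(i:ℤ) := by ring
            have h2 : (-(((i:ℕ)+1:ℕ):ℤ)) = -((i:ℤ)+1) := by push_cast; ring
            rw [h1]
            simp only [h2]
        _ = Faux lam (-(N:ℤ)) - Faux lam 0 := by
            rw [Finset.sum_range_sub (fun n : ℕ => Faux lam (-(n:ℤ)))]
            norm_num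
    simp only [hsum]
    exact (faux_bot lam hlam).sub_const (Faux lam 0)
  have htot : HasSum (fun j : ℤ => (2:ℝ)^j / (1 + exp (lam * 2^j)))
      (Faux lam 0 + (1/lam - Faux lam 0)) :=
    HasSum.of_nat_of_neg_add_one hpos hneg
  rw [show Faux lam 0 + (1/lam - Faux lam 0) = 1/lam by ring] at htot
  exact htot.tsum_eq

/-- For `λ > 0`, `∑_{j ∈ ℤ} 2^j / (1 + e^{λ 2^j}) = 1/λ`; in particular, with `λ = 1`,
`∑_{j ∈ ℤ} 2^j / (1 + e^{2^j}) = 1`. -/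
theorem tsum_zpow_div_one_add_exp (lam : ℝ) (hlam : 0 < lam) :
    (∑' j : ℤ, (2 : ℝ) ^ j / (1 + exp (lam * 2 ^ j)) = 1 / lam) ∧
    (∑' j : ℤ, (2 : ℝ) ^ j / (1 + exp ((2 : ℝ) ^ j)) = 1) := by
  refine ⟨main_lemma lam hlam, ?_⟩
  have := main_lemma 1 one_pos
  simpa using this
end

section
/- Let $k_1, k_2, k$ be positive integers with $k = k_1 + k_2$. Let $U_{D_1}, U_{D_2}$ be independent integer-valued random variables with $\mathrm{supp}(U_{D_1}) \subseteq \{0,\dots,k_1\}$ and $\mathrm{supp}(U_{D_2}) \subseteq \{0,\dots,k_2\}$. If $U_{D_1} + U_{D_2}$ is uniformly distributed on $\{0,1,\dots,k\}$, then $U_{D_1}$ and $U_{D_2}$ are each uniformly distributed on their respective supports. -/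
open MeasureTheory ProbabilityTheory
open scoped ENNReal

section AuxUniformFactors

open Finset

lemma pin_values (a b x y s : ℝ) (ha : 0 < a) (hb : 0 < b)
    (hx : 0 ≤ x) (hy : 0 ≤ y)
    (hs : s = 0 ∨ a * b ≤ s) (hxy : x * y = 0)
    (heq : a * y + x * b + s = a * b) :
    (x = 0 ∨ x = a) ∧ (y = 0 ∨ y = b) := by
  rcases hs with hs | hs
  · subst hs
    rcases mul_eq_zero.mp hxy with hx0 | hy0
    · subst hx0
      constructor
      · exact Or.inl rfl
      · right
        have : a * y = a * b := by linarith
        exact mul_left_cancel₀ (ne_of_gt ha) this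
    · subst hy0
      constructor
      · right
        have : x * b = a * b := by linarith
        exact mul_right_cancel₀ (ne_of_gt hb) this
      · exact Or.inl rfl
  · have h1 : a * y + x * b ≤ 0 := by linarith
    have h2 : 0 ≤ a * y := mul_nonneg ha.le hy
    have h3 : 0 ≤ x * b := mul_nonneg hx hb.le
    have hy0 : y = 0 := by
      have : a * y = 0 := by linarith
      rcases mul_eq_zero.mp this with h | h
      · exact absurd h (ne_of_gt ha)
      · exact h
    have hx0 : x = 0 := by
      have : x * b = 0 := by linarith
      rcases mul_eq_zero.mp this with h | h
      · exact h
      · exact absurd h (ne_of_gt hb)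
    exact ⟨Or.inl hx0, Or.inl hy0⟩

lemma core_flat (k1 k2 k : ℕ) (hk1 : 0 < k1) (hk2 : 0 < k2) (hk : k = k1 + k2)
    (A B : ℤ → ℝ)
    (hA0 : ∀ i, 0 ≤ A i) (hB0 : ∀ j, 0 ≤ B j)
    (hAs : ∀ i : ℤ, (i < 0 ∨ (k1 : ℤ) < i) → A i = 0)
    (hBs : ∀ j : ℤ, (j < 0 ∨ (k2 : ℤ) < j) → B j = 0)
    (hAsum : ∑ i ∈ Icc (0:ℤ) (k1:ℤ), A i = 1)
    (hBsum : ∑ j ∈ Icc (0:ℤ) (k2:ℤ), B j = 1)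
    (hconv : ∀ n : ℤ, ∑ i ∈ Icc (0:ℤ) (k1:ℤ), A i * B (n - i)
        = if 0 ≤ n ∧ n ≤ (k:ℤ) then ((k:ℝ)+1)⁻¹ else 0) :
    (∀ i : ℤ, A i = 0 ∨ A i = A 0) ∧ (∀ j : ℤ, B j = 0 ∨ B j = B 0) := by
  set c : ℝ := ((k:ℝ)+1)⁻¹ with hc_def
  have hkpos : (0:ℝ) < (k:ℝ) + 1 := by positivity
  have hc : 0 < c := by rw [hc_def]; positivity
  have hck : ((k:ℝ)+1) * c = 1 := by
    rw [hc_def]; field_simp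
  -- generalized convolution identity over adapted ranges
  have conv_eq : ∀ n : ℤ, 0 ≤ n →
      ∑ i ∈ Icc (0:ℤ) n, A i * B (n - i) = if n ≤ (k:ℤ) then c else 0 := by
    intro n hn
    have h1 : ∑ i ∈ Icc (0:ℤ) (k1:ℤ), A i * B (n - i)
        = ∑ i ∈ Icc (0:ℤ) (max (k1:ℤ) n), A i * B (n - i) := by
      apply Finset.sum_subset
      · exact Finset.Icc_subset_Icc le_rfl (le_max_left _ _)
      · intro x hx hx2
        simp only [Finset.mem_Icc] at hx hx2
        have : (k1:ℤ) < x := by omega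
        rw [hAs x (Or.inr this), zero_mul]
    have h2 : ∑ i ∈ Icc (0:ℤ) n, A i * B (n - i)
        = ∑ i ∈ Icc (0:ℤ) (max (k1:ℤ) n), A i * B (n - i) := by
      apply Finset.sum_subset
      · exact Finset.Icc_subset_Icc le_rfl (le_max_right _ _)
      · intro x hx hx2
        simp only [Finset.mem_Icc] at hx hx2
        have : n - x < 0 := by omega
        rw [hBs _ (Or.inl this), mul_zero]
    rw [h2, ← h1, hconv n]
    simp [hn]
  have conv0 : A 0 * B 0 = c := by
    have := conv_eq 0 le_rfl
    simp at this
    exact this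
  have convk : A (k1:ℤ) * B (k2:ℤ) = c := by
    have h := hconv (k:ℤ)
    rw [if_pos ⟨by positivity, le_rfl⟩] at h
    rw [Finset.sum_eq_single_of_mem (k1:ℤ) (by simp)] at h
    · rw [← h]
      congr 1
      congr 1
      omega
    · intro i hi hne
      simp only [Finset.mem_Icc] at hi
      have : (k2:ℤ) < (k:ℤ) - i := by omega
      rw [hBs _ (Or.inr this), mul_zero]
  have ha : 0 < A 0 := by
    rcases lt_or_eq_of_le (hA0 0) with h | h
    · exact h
    · exfalso; rw [← h, zero_mul] at conv0; exact absurd conv0.symm (ne_of_gt hc)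
  have hb : 0 < B 0 := by
    rcases lt_or_eq_of_le (hB0 0) with h | h
    · exact h
    · exfalso; rw [← h, mul_zero] at conv0; exact absurd conv0.symm (ne_of_gt hc)
  have hAle : ∀ i : ℤ, A i ≤ A 0 := by
    intro i
    by_cases hi : i ∈ Icc (0:ℤ) (k1:ℤ)
    · have hmem := hi
      simp only [Finset.mem_Icc] at hmem
      have hsingle : A i * B 0 ≤ ∑ i' ∈ Icc (0:ℤ) (k1:ℤ), A i' * B (i - i') := by
        have := Finset.single_le_sum (f := fun i' => A i' * B (i - i'))
          (fun x _ => mul_nonneg (hA0 x) (hB0 _)) hi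
        simpa using this
      rw [hconv i, if_pos ⟨hmem.1, by omega⟩] at hsingle
      rw [← conv0] at hsingle
      exact le_of_mul_le_mul_right hsingle hb
    · simp only [Finset.mem_Icc, not_and_or, not_le] at hi
      rw [hAs i (by omega)]
      exact ha.le
  have hBle : ∀ j : ℤ, B j ≤ B 0 := by
    intro j
    by_cases hj : j ∈ Icc (0:ℤ) (k2:ℤ)
    · simp only [Finset.mem_Icc] at hj
      have h0mem : (0:ℤ) ∈ Icc (0:ℤ) (k1:ℤ) := by simp [Finset.mem_Icc]
      have hsingle : A 0 * B j ≤ ∑ i' ∈ Icc (0:ℤ) (k1:ℤ), A i' * B (j - i') := by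
        have := Finset.single_le_sum (f := fun i' => A i' * B (j - i'))
          (fun x _ => mul_nonneg (hA0 x) (hB0 _)) h0mem
        simpa using this
      rw [hconv j, if_pos ⟨hj.1, by omega⟩] at hsingle
      rw [← conv0] at hsingle
      exact le_of_mul_le_mul_left hsingle ha
    · simp only [Finset.mem_Icc, not_and_or, not_le] at hj
      rw [hBs j (by omega)]
      exact hb.le
    -- the correlation function
  set I : Finset ℤ := Icc (0:ℤ) (k1:ℤ) with hI_def
  set J : Finset ℤ := Icc (0:ℤ) (k2:ℤ) with hJ_def
  set D : Finset ℤ := Icc (-(k1:ℤ)) (k2:ℤ) with hD_def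
  set r : ℤ → ℝ := fun d => ∑ i ∈ I, A i * B (i + d) with hr_def
  have hBwin : ∀ i : ℤ, 0 ≤ i → i ≤ (k1:ℤ) →
      ∑ d ∈ D, B (i + d) = 1 := by
    intro i hi0 hik
    have hmap : ∑ d ∈ D, B (i + d) = ∑ j ∈ Icc (i + -(k1:ℤ)) (i + (k2:ℤ)), B j := by
      rw [← Finset.map_add_left_Icc (-(k1:ℤ)) (k2:ℤ) i, Finset.sum_map]
      rfl
    rw [hmap, ← hBsum]
    symm
    apply Finset.sum_subset
    · rw [hJ_def]; apply Finset.Icc_subset_Icc <;> omega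
    · intro x hx hx2
      simp only [hJ_def, Finset.mem_Icc] at hx hx2
      exact hBs x (by omega)
  have hS : ∑ d ∈ D, r d = 1 := by
    rw [hr_def]
    rw [Finset.sum_comm]
    have : ∀ i ∈ I, ∑ d ∈ D, A i * B (i + d) = A i := by
      intro i hi
      simp only [hI_def, Finset.mem_Icc] at hi
      rw [← Finset.mul_sum, hBwin i hi.1 hi.2, mul_one]
    rw [Finset.sum_congr rfl this, hAsum]
  have hT : ∑ d ∈ D, r d * r d = c := by
    have step1 : ∑ d ∈ D, r d * r d
        = ∑ i' ∈ I, ∑ d ∈ D, A i' * B (i' + d) * r d := by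
      rw [Finset.sum_comm]
      apply Finset.sum_congr rfl
      intro d _
      rw [hr_def]
      rw [Finset.sum_mul]
    have step2 : ∀ i' : ℤ, i' ∈ I →
        ∑ d ∈ D, A i' * B (i' + d) * r d = ∑ j ∈ J, A i' * B j * r (j - i') := by
      intro i' hi'
      simp only [hI_def, Finset.mem_Icc] at hi'
      have hmap : ∑ d ∈ D, A i' * B (i' + d) * r d
          = ∑ j ∈ Icc (i' + -(k1:ℤ)) (i' + (k2:ℤ)), A i' * B j * r (j - i') := by
        rw [← Finset.map_add_left_Icc (-(k1:ℤ)) (k2:ℤ) i', Finset.sum_map]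
        apply Finset.sum_congr rfl
        intro d _
        simp [addLeftEmbedding]
      rw [hmap]
      symm
      apply Finset.sum_subset
      · rw [hJ_def]; apply Finset.Icc_subset_Icc <;> omega
      · intro x hx hx2
        simp only [hJ_def, Finset.mem_Icc] at hx hx2
        rw [hBs x (by omega), mul_zero, zero_mul]
    have step3 : ∑ d ∈ D, r d * r d
        = ∑ i' ∈ I, ∑ j ∈ J, ∑ i ∈ I, A i' * B j * (A i * B (i + (j - i'))) := by
      rw [step1, Finset.sum_congr rfl step2]
      apply Finset.sum_congr rfl
      intro i' _
      apply Finset.sum_congr rfl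
      intro j _
      rw [hr_def]
      rw [Finset.mul_sum]
    have swap : ∑ i' ∈ I, ∑ j ∈ J, ∑ i ∈ I, A i' * B j * (A i * B (i + (j - i')))
        = ∑ i' ∈ I, ∑ j ∈ J, ∑ i ∈ I, A i * B j * (A i' * B (i' + (j - i))) := by
      calc ∑ i' ∈ I, ∑ j ∈ J, ∑ i ∈ I, A i' * B j * (A i * B (i + (j - i')))
          = ∑ j ∈ J, ∑ i' ∈ I, ∑ i ∈ I, A i' * B j * (A i * B (i + (j - i'))) :=
            Finset.sum_comm
        _ = ∑ j ∈ J, ∑ i ∈ I, ∑ i' ∈ I, A i' * B j * (A i * B (i + (j - i'))) :=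
            Finset.sum_congr rfl (fun _ _ => Finset.sum_comm)
        _ = ∑ i ∈ I, ∑ j ∈ J, ∑ i' ∈ I, A i' * B j * (A i * B (i + (j - i'))) :=
            Finset.sum_comm
    have inner_conv : ∀ i' ∈ I, ∀ j ∈ J,
        ∑ i ∈ I, A i * B (i' + (j - i)) = c := by
      intro i' hi' j hj
      simp only [hI_def, Finset.mem_Icc] at hi'
      simp only [hJ_def, Finset.mem_Icc] at hj
      have := hconv (i' + j)
      rw [if_pos ⟨by omega, by omega⟩] at this
      rw [← this]
      apply Finset.sum_congr rfl
      intro i _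
      congr 1
      congr 1
      ring
    calc ∑ d ∈ D, r d * r d
        = ∑ i' ∈ I, ∑ j ∈ J, ∑ i ∈ I, A i * B j * (A i' * B (i' + (j - i))) := by
          rw [step3, swap]
      _ = ∑ i ∈ I, ∑ j ∈ J, A i * B j * c := by
          apply Finset.sum_congr rfl
          intro i hi
          apply Finset.sum_congr rfl
          intro j hj
          have hpt : ∀ i1 ∈ I, A i1 * B j * (A i * B (i + (j - i1)))
              = A i * B j * (A i1 * B (i + (j - i1))) := by
            intro i1 _
            ring
          rw [Finset.sum_congr rfl hpt, ← Finset.mul_sum, inner_conv i hi j hj]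
      _ = ∑ i ∈ I, A i * ((∑ j ∈ J, B j) * c) := by
          apply Finset.sum_congr rfl
          intro i _
          rw [Finset.sum_mul, Finset.mul_sum]
          apply Finset.sum_congr rfl
          intro j _
          ring
      _ = c := by rw [hBsum, one_mul, ← Finset.sum_mul, hAsum, one_mul]
  have hcard : (D.card : ℝ) = (k:ℝ) + 1 := by
    rw [hD_def, Int.card_Icc]
    have : ((k2:ℤ) + 1 - -(k1:ℤ)).toNat = k + 1 := by omega
    rw [this]
    push_cast
    ring
  have hrflat : ∀ d ∈ D, r d = c := by
    have hsq : ∑ d ∈ D, (r d - c) ^ 2 = 0 := by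
      have expand : ∀ d ∈ D, (r d - c) ^ 2 = r d * r d - 2 * c * r d + c * c := by
        intro d _
        ring
      rw [Finset.sum_congr rfl expand]
      rw [Finset.sum_add_distrib, Finset.sum_sub_distrib]
      rw [hT, ← Finset.mul_sum, hS, Finset.sum_const, nsmul_eq_mul]
      have hcc : (D.card : ℝ) * (c * c) = c := by
        rw [hcard, ← mul_assoc, hck, one_mul]
      rw [hcc]
      ring
    intro d hd
    have := (Finset.sum_eq_zero_iff_of_nonneg (fun x _ => sq_nonneg (r x - c))).mp hsq d hd
    have h4 := sq_eq_zero_iff.mp this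
    linarith [h4]
  have M1 : ∀ i : ℤ, i ≠ 0 → A i * B i = 0 := by
    have hr0 : ∑ i ∈ I, A i * B i = c := by
      have := hrflat 0 (by simp [hD_def, Finset.mem_Icc])
      rw [hr_def] at this
      simpa using this
    have hsplit : A 0 * B 0 + ∑ i ∈ I.erase 0, A i * B i = c := by
      have h := Finset.add_sum_erase I (fun i => A i * B i) (show (0:ℤ) ∈ I by simp [hI_def])
      rw [h]
      exact hr0
    have hzero : ∑ i ∈ I.erase 0, A i * B i = 0 := by
      rw [conv0] at hsplit
      linarith
    intro i hi
    by_cases hmem : i ∈ I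
    · exact (Finset.sum_eq_zero_iff_of_nonneg
        (fun x _ => mul_nonneg (hA0 x) (hB0 x))).mp hzero i
        (Finset.mem_erase.mpr ⟨hi, hmem⟩)
    · simp only [hI_def, Finset.mem_Icc, not_and_or, not_le] at hmem
      rw [hAs i (by omega), zero_mul]
  have M2 : ∀ u : ℤ, u ≠ 0 → A ((k1:ℤ) - u) * B ((k2:ℤ) - u) = 0 := by
    have hrk : ∑ i ∈ I, A i * B (i + ((k2:ℤ) - (k1:ℤ))) = c := by
      have := hrflat ((k2:ℤ) - (k1:ℤ)) (by simp [hD_def, Finset.mem_Icc] <;> omega)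
      rw [hr_def] at this
      exact this
    have hsplit : A (k1:ℤ) * B ((k1:ℤ) + ((k2:ℤ) - (k1:ℤ)))
        + ∑ i ∈ I.erase (k1:ℤ), A i * B (i + ((k2:ℤ) - (k1:ℤ))) = c := by
      have h := Finset.add_sum_erase I (fun i => A i * B (i + ((k2:ℤ) - (k1:ℤ))))
        (show (k1:ℤ) ∈ I by simp [hI_def])
      rw [h]
      exact hrk
    have hidx : (k1:ℤ) + ((k2:ℤ) - (k1:ℤ)) = (k2:ℤ) := by ring
    rw [hidx, convk] at hsplit
    have hzero : ∑ i ∈ I.erase (k1:ℤ), A i * B (i + ((k2:ℤ) - (k1:ℤ))) = 0 := by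
      linarith
    intro u hu
    by_cases hmem : (k1:ℤ) - u ∈ I.erase (k1:ℤ)
    · have := (Finset.sum_eq_zero_iff_of_nonneg
        (fun x _ => mul_nonneg (hA0 x) (hB0 _))).mp hzero _ hmem
      have hidx2 : (k1:ℤ) - u + ((k2:ℤ) - (k1:ℤ)) = (k2:ℤ) - u := by ring
      rw [hidx2] at this
      exact this
    · have : (k1:ℤ) - u ∉ I := by
        intro hmm
        exact hmem (Finset.mem_erase.mpr ⟨by omega, hmm⟩)
      simp only [hI_def, Finset.mem_Icc, not_and_or, not_le] at this
      rw [hAs _ (by omega), zero_mul]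
  have hak1 : 0 < A (k1:ℤ) := by
    rcases lt_or_eq_of_le (hA0 (k1:ℤ)) with h | h
    · exact h
    · exfalso; rw [← h, zero_mul] at convk; exact absurd convk.symm (ne_of_gt hc)
  have hbk2 : 0 < B (k2:ℤ) := by
    rcases lt_or_eq_of_le (hB0 (k2:ℤ)) with h | h
    · exact h
    · exfalso; rw [← h, mul_zero] at convk; exact absurd convk.symm (ne_of_gt hc)
  have topB : B (k2:ℤ) = B 0 := by
    by_contra hne
    have hlt : B (k2:ℤ) < B 0 := lt_of_le_of_ne (hBle _) hne
    have hcontra : A (k1:ℤ) * B (k2:ℤ) < A 0 * B 0 := by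
      calc A (k1:ℤ) * B (k2:ℤ) < A (k1:ℤ) * B 0 := mul_lt_mul_of_pos_left hlt hak1
        _ ≤ A 0 * B 0 := mul_le_mul_of_nonneg_right (hAle _) (hB0 _)
    rw [convk, conv0] at hcontra
    exact lt_irrefl c hcontra
  have topA : A (k1:ℤ) = A 0 := by
    have : A (k1:ℤ) * B (k2:ℤ) = A 0 * B (k2:ℤ) := by
      rw [convk, ← conv0, topB]
    exact mul_right_cancel₀ (ne_of_gt hbk2) this
  have key : ∀ m : ℕ, (A (m:ℤ) = 0 ∨ A (m:ℤ) = A 0) ∧ (B (m:ℤ) = 0 ∨ B (m:ℤ) = B 0)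
      ∧ (A ((k1:ℤ) - (m:ℤ)) = 0 ∨ A ((k1:ℤ) - (m:ℤ)) = A 0)
      ∧ (B ((k2:ℤ) - (m:ℤ)) = 0 ∨ B ((k2:ℤ) - (m:ℤ)) = B 0) := by
    intro m
    induction m using Nat.strong_induction_on with
    | _ m IH =>
    rcases Nat.eq_zero_or_pos m with hm0 | hmpos
    · subst hm0
      push_cast
      rw [sub_zero, sub_zero]
      exact ⟨Or.inr rfl, Or.inr rfl, Or.inr topA, Or.inr topB⟩
    by_cases hbig : (k:ℤ) < (m:ℤ)
    · exact ⟨Or.inl (hAs _ (Or.inr (by omega))), Or.inl (hBs _ (Or.inr (by omega))),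
        Or.inl (hAs _ (Or.inl (by omega))), Or.inl (hBs _ (Or.inl (by omega)))⟩
    push_neg at hbig
    have hm1 : 1 ≤ (m:ℤ) := by exact_mod_cast hmpos
    -- ===== bottom part =====
    have hbot := conv_eq (m:ℤ) (by omega)
    rw [if_pos hbig] at hbot
    have hsplitset : Icc (0:ℤ) (m:ℤ) = insert (0:ℤ) (insert (m:ℤ) (Icc (1:ℤ) ((m:ℤ)-1))) := by
      ext x
      simp only [Finset.mem_Icc, Finset.mem_insert]
      omega
    rw [hsplitset, Finset.sum_insert (by
        intro hmem
        simp only [Finset.mem_insert, Finset.mem_Icc] at hmem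
        omega),
      Finset.sum_insert (by
        intro hmem
        simp only [Finset.mem_Icc] at hmem
        omega)] at hbot
    rw [sub_zero, sub_self] at hbot
    have hintb : ∀ i ∈ Icc (1:ℤ) ((m:ℤ)-1),
        A i * B ((m:ℤ) - i) = 0 ∨ A i * B ((m:ℤ) - i) = A 0 * B 0 := by
      intro i hi
      simp only [Finset.mem_Icc] at hi
      have hiA := (IH i.toNat (by omega)).1
      have hiB := (IH ((m:ℤ) - i).toNat (by omega)).2.1
      rw [Int.toNat_of_nonneg (by omega)] at hiA
      rw [Int.toNat_of_nonneg (by omega)] at hiB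
      rcases hiA with h1 | h1 <;> rcases hiB with h2 | h2
      · left; rw [h1, zero_mul]
      · left; rw [h1, zero_mul]
      · left; rw [h2, mul_zero]
      · right; rw [h1, h2]
    have hs0b : (∑ i ∈ Icc (1:ℤ) ((m:ℤ)-1), A i * B ((m:ℤ) - i)) = 0
        ∨ A 0 * B 0 ≤ ∑ i ∈ Icc (1:ℤ) ((m:ℤ)-1), A i * B ((m:ℤ) - i) := by
      by_cases hallz : ∀ i ∈ Icc (1:ℤ) ((m:ℤ)-1), A i * B ((m:ℤ) - i) = 0
      · left; exact Finset.sum_eq_zero hallz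
      · right
        push_neg at hallz
        obtain ⟨i0, hi0, hne⟩ := hallz
        have hterm : A i0 * B ((m:ℤ) - i0) = A 0 * B 0 := by
          rcases hintb i0 hi0 with h | h
          · exact absurd h hne
          · exact h
        calc A 0 * B 0 = A i0 * B ((m:ℤ) - i0) := hterm.symm
          _ ≤ ∑ i ∈ Icc (1:ℤ) ((m:ℤ)-1), A i * B ((m:ℤ) - i) :=
            Finset.single_le_sum (f := fun i => A i * B ((m:ℤ) - i))
              (fun x _ => mul_nonneg (hA0 x) (hB0 _)) hi0
    have heqb : A 0 * B (m:ℤ) + A (m:ℤ) * B 0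
        + (∑ i ∈ Icc (1:ℤ) ((m:ℤ)-1), A i * B ((m:ℤ) - i)) = A 0 * B 0 := by
      rw [conv0]
      linarith [hbot]
    have hbottom := pin_values (A 0) (B 0) (A (m:ℤ)) (B (m:ℤ)) _ ha hb (hA0 _) (hB0 _)
      hs0b (M1 (m:ℤ) (by omega)) heqb
    -- ===== top part =====
    have htop' := conv_eq ((k:ℤ) - (m:ℤ)) (by omega)
    rw [if_pos (by omega)] at htop'
    have hext1 : ∑ i ∈ Icc (0:ℤ) ((k:ℤ) - (m:ℤ)), A i * B ((k:ℤ) - (m:ℤ) - i)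
        = ∑ i ∈ Icc (min 0 ((k1:ℤ) - (m:ℤ))) (k:ℤ), A i * B ((k:ℤ) - (m:ℤ) - i) := by
      apply Finset.sum_subset
      · apply Finset.Icc_subset_Icc <;> omega
      · intro x hx hx2
        simp only [Finset.mem_Icc] at hx hx2
        by_cases hxneg : x < 0
        · rw [hAs x (Or.inl hxneg), zero_mul]
        · rw [hBs _ (Or.inl (by omega)), mul_zero]
    have hext2 : ∑ i ∈ Icc ((k1:ℤ) - (m:ℤ)) (k1:ℤ), A i * B ((k:ℤ) - (m:ℤ) - i)
        = ∑ i ∈ Icc (min 0 ((k1:ℤ) - (m:ℤ))) (k:ℤ), A i * B ((k:ℤ) - (m:ℤ) - i) := by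
      apply Finset.sum_subset
      · apply Finset.Icc_subset_Icc <;> omega
      · intro x hx hx2
        simp only [Finset.mem_Icc] at hx hx2
        by_cases hxbig : (k1:ℤ) < x
        · rw [hAs x (Or.inr hxbig), zero_mul]
        · rw [hBs _ (Or.inr (by omega)), mul_zero]
    have hreflect : ∑ u ∈ Icc (0:ℤ) (m:ℤ), A ((k1:ℤ) - u) * B ((k2:ℤ) - (m:ℤ) + u)
        = ∑ i ∈ Icc ((k1:ℤ) - (m:ℤ)) (k1:ℤ), A i * B ((k:ℤ) - (m:ℤ) - i) := by
      apply Finset.sum_nbij' (fun u => (k1:ℤ) - u) (fun i => (k1:ℤ) - i)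
      · intro u hu
        simp only [Finset.mem_Icc] at hu ⊢
        omega
      · intro i hi
        simp only [Finset.mem_Icc] at hi ⊢
        omega
      · intro u _
        ring
      · intro i _
        ring
      · intro u _
        congr 1
        congr 1
        omega
    have htop : A 0 * B ((k2:ℤ) - (m:ℤ)) + A ((k1:ℤ) - (m:ℤ)) * B 0
        + (∑ u ∈ Icc (1:ℤ) ((m:ℤ)-1), A ((k1:ℤ) - u) * B ((k2:ℤ) - (m:ℤ) + u))
        = A 0 * B 0 := by
      have hsum : ∑ u ∈ Icc (0:ℤ) (m:ℤ), A ((k1:ℤ) - u) * B ((k2:ℤ) - (m:ℤ) + u) = c := by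
        rw [hreflect, hext2, ← hext1, htop']
      rw [hsplitset, Finset.sum_insert (by
          intro hmem
          simp only [Finset.mem_insert, Finset.mem_Icc] at hmem
          omega),
        Finset.sum_insert (by
          intro hmem
          simp only [Finset.mem_Icc] at hmem
          omega)] at hsum
      rw [sub_zero] at hsum
      have hidx0 : (k2:ℤ) - (m:ℤ) + 0 = (k2:ℤ) - (m:ℤ) := by ring
      have hidxm : (k2:ℤ) - (m:ℤ) + (m:ℤ) = (k2:ℤ) := by ring
      rw [hidx0, hidxm, topA, topB] at hsum
      rw [conv0]
      linarith [hsum]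
    have hintt : ∀ u ∈ Icc (1:ℤ) ((m:ℤ)-1),
        A ((k1:ℤ) - u) * B ((k2:ℤ) - (m:ℤ) + u) = 0
        ∨ A ((k1:ℤ) - u) * B ((k2:ℤ) - (m:ℤ) + u) = A 0 * B 0 := by
      intro u hu
      simp only [Finset.mem_Icc] at hu
      have huA := (IH u.toNat (by omega)).2.2.1
      have huB := (IH ((m:ℤ) - u).toNat (by omega)).2.2.2
      rw [Int.toNat_of_nonneg (by omega)] at huA
      rw [Int.toNat_of_nonneg (by omega)] at huB
      have hidx : (k2:ℤ) - ((m:ℤ) - u) = (k2:ℤ) - (m:ℤ) + u := by ring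
      rw [hidx] at huB
      rcases huA with h1 | h1 <;> rcases huB with h2 | h2
      · left; rw [h1, zero_mul]
      · left; rw [h1, zero_mul]
      · left; rw [h2, mul_zero]
      · right; rw [h1, h2]
    have hs0t : (∑ u ∈ Icc (1:ℤ) ((m:ℤ)-1), A ((k1:ℤ) - u) * B ((k2:ℤ) - (m:ℤ) + u)) = 0
        ∨ A 0 * B 0 ≤ ∑ u ∈ Icc (1:ℤ) ((m:ℤ)-1), A ((k1:ℤ) - u) * B ((k2:ℤ) - (m:ℤ) + u) := by
      by_cases hallz : ∀ u ∈ Icc (1:ℤ) ((m:ℤ)-1), A ((k1:ℤ) - u) * B ((k2:ℤ) - (m:ℤ) + u) = 0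
      · left; exact Finset.sum_eq_zero hallz
      · right
        push_neg at hallz
        obtain ⟨u0, hu0, hne⟩ := hallz
        have hterm : A ((k1:ℤ) - u0) * B ((k2:ℤ) - (m:ℤ) + u0) = A 0 * B 0 := by
          rcases hintt u0 hu0 with h | h
          · exact absurd h hne
          · exact h
        calc A 0 * B 0 = A ((k1:ℤ) - u0) * B ((k2:ℤ) - (m:ℤ) + u0) := hterm.symm
          _ ≤ _ := Finset.single_le_sum (f := fun u => A ((k1:ℤ) - u) * B ((k2:ℤ) - (m:ℤ) + u))
              (fun x _ => mul_nonneg (hA0 _) (hB0 _)) hu0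
    have hM2m : A ((k1:ℤ) - (m:ℤ)) * B ((k2:ℤ) - (m:ℤ)) = 0 := M2 (m:ℤ) (by omega)
    have heqt : A 0 * B ((k2:ℤ) - (m:ℤ)) + A ((k1:ℤ) - (m:ℤ)) * B 0
        + (∑ u ∈ Icc (1:ℤ) ((m:ℤ)-1), A ((k1:ℤ) - u) * B ((k2:ℤ) - (m:ℤ) + u))
        = A 0 * B 0 := htop
    have htopr := pin_values (A 0) (B 0) (A ((k1:ℤ) - (m:ℤ))) (B ((k2:ℤ) - (m:ℤ))) _
      ha hb (hA0 _) (hB0 _) hs0t hM2m heqt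
    exact ⟨hbottom.1, hbottom.2, htopr.1, htopr.2⟩
  constructor
  · intro i
    by_cases hi : 0 ≤ i
    · have := (key i.toNat).1
      rw [Int.toNat_of_nonneg hi] at this
      exact this
    · exact Or.inl (hAs i (Or.inl (by omega)))
  · intro j
    by_cases hj : 0 ≤ j
    · have := (key j.toNat).2.1
      rw [Int.toNat_of_nonneg hj] at this
      exact this
    · exact Or.inl (hBs j (Or.inl (by omega)))


lemma sum_masses {Ω : Type*} [MeasurableSpace Ω] (μ : Measure Ω)
    [IsProbabilityMeasure μ] (Z : Ω → ℤ) (hZ : Measurable Z) (K : ℤ)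
    (hnull : μ {ω | Z ω ∉ Set.Icc 0 K} = 0) :
    ∑ i ∈ Icc (0:ℤ) K, μ {ω | Z ω = i} = 1 := by
  have hdisj : (↑(Icc (0:ℤ) K) : Set ℤ).PairwiseDisjoint (fun i => {ω | Z ω = i}) := by
    intro a _ b _ hab
    apply Set.disjoint_left.mpr
    intro ω ha hb
    simp only [Set.mem_setOf_eq] at ha hb
    exact hab (by rw [← ha, ← hb])
  rw [← measure_biUnion_finset hdisj (fun i _ => hZ (measurableSet_singleton i))]
  apply le_antisymm prob_le_one
  calc (1:ℝ≥0∞) = μ Set.univ := measure_univ.symm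
    _ ≤ μ ((⋃ i ∈ Icc (0:ℤ) K, {ω | Z ω = i}) ∪ {ω | Z ω ∉ Set.Icc (0:ℤ) K}) := by
        apply measure_mono
        intro ω _
        by_cases hω : Z ω ∈ Set.Icc (0:ℤ) K
        · left
          simp only [Set.mem_iUnion, Set.mem_setOf_eq]
          refine ⟨Z ω, ?_, rfl⟩
          simp only [Finset.mem_Icc]
          exact Set.mem_Icc.mp hω
        · right
          exact hω
    _ ≤ μ (⋃ i ∈ Icc (0:ℤ) K, {ω | Z ω = i}) + μ {ω | Z ω ∉ Set.Icc (0:ℤ) K} :=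
        measure_union_le _ _
    _ = μ (⋃ i ∈ Icc (0:ℤ) K, {ω | Z ω = i}) := by rw [hnull, add_zero]

lemma conv_masses {Ω : Type*} [MeasurableSpace Ω] (μ : Measure Ω)
    [IsProbabilityMeasure μ] (X Y : Ω → ℤ) (hX : Measurable X) (hY : Measurable Y)
    (hind : IndepFun X Y μ) (K : ℤ)
    (hnull : μ {ω | X ω ∉ Set.Icc 0 K} = 0) (n : ℤ) :
    μ {ω | X ω + Y ω = n}
      = ∑ i ∈ Icc (0:ℤ) K, μ {ω | X ω = i} * μ {ω | Y ω = n - i} := by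
  have hprod : ∀ i : ℤ, μ ({ω | X ω = i} ∩ {ω | Y ω = n - i})
      = μ {ω | X ω = i} * μ {ω | Y ω = n - i} := by
    intro i
    exact hind.measure_inter_preimage_eq_mul {i} {n - i}
      (measurableSet_singleton _) (measurableSet_singleton _)
  have hdisj : (↑(Icc (0:ℤ) K) : Set ℤ).PairwiseDisjoint
      (fun i => {ω | X ω = i} ∩ {ω | Y ω = n - i}) := by
    intro a _ b _ hab
    apply Set.disjoint_left.mpr
    intro ω ha hb
    exact hab (by rw [← ha.1, ← hb.1])
  have hmeas : ∀ i ∈ Icc (0:ℤ) K,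
      MeasurableSet ({ω | X ω = i} ∩ {ω | Y ω = n - i}) := fun i _ =>
    (hX (measurableSet_singleton i)).inter (hY (measurableSet_singleton (n - i)))
  have hU := measure_biUnion_finset (μ := μ) hdisj hmeas
  have hmain : μ {ω | X ω + Y ω = n}
      = μ (⋃ i ∈ Icc (0:ℤ) K, ({ω | X ω = i} ∩ {ω | Y ω = n - i})) := by
    apply le_antisymm
    · calc μ {ω | X ω + Y ω = n}
          ≤ μ ((⋃ i ∈ Icc (0:ℤ) K, ({ω | X ω = i} ∩ {ω | Y ω = n - i}))
              ∪ {ω | X ω ∉ Set.Icc (0:ℤ) K}) := by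
            apply measure_mono
            intro ω hω
            simp only [Set.mem_setOf_eq] at hω
            by_cases hmem : X ω ∈ Set.Icc (0:ℤ) K
            · left
              simp only [Set.mem_iUnion, Set.mem_inter_iff, Set.mem_setOf_eq]
              refine ⟨X ω, ?_, rfl, by omega⟩
              simp only [Finset.mem_Icc]
              exact Set.mem_Icc.mp hmem
            · right
              exact hmem
        _ ≤ μ (⋃ i ∈ Icc (0:ℤ) K, ({ω | X ω = i} ∩ {ω | Y ω = n - i}))
              + μ {ω | X ω ∉ Set.Icc (0:ℤ) K} := measure_union_le _ _
        _ = μ (⋃ i ∈ Icc (0:ℤ) K, ({ω | X ω = i} ∩ {ω | Y ω = n - i})) := by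
            rw [hnull, add_zero]
    · apply measure_mono
      intro ω hω
      simp only [Set.mem_iUnion, Set.mem_inter_iff, Set.mem_setOf_eq] at hω
      obtain ⟨i, _, h1, h2⟩ := hω
      simp only [Set.mem_setOf_eq]
      omega
  rw [hmain, hU]
  exact Finset.sum_congr rfl (fun i _ => hprod i)

end AuxUniformFactors

/-- If independent integer random variables supported in `{0,…,k₁}` and `{0,…,k₂}` sum to a
random variable uniform on `{0,…,k₁+k₂}`, then each is uniform on its own support. -/
theorem uniform_sum_forces_uniform_factors {Ω : Type*} [MeasurableSpace Ω] (μ : Measure Ω)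
    [IsProbabilityMeasure μ] (k₁ k₂ k : ℕ) (hk₁ : 0 < k₁) (hk₂ : 0 < k₂)
    (hk : k = k₁ + k₂)
    (X Y : Ω → ℤ) (hX : Measurable X) (hY : Measurable Y) (hind : IndepFun X Y μ)
    (hsX : ∀ᵐ ω ∂μ, X ω ∈ Set.Icc (0 : ℤ) k₁)
    (hsY : ∀ᵐ ω ∂μ, Y ω ∈ Set.Icc (0 : ℤ) k₂)
    (hunif : ∀ n : ℤ, μ {ω | X ω + Y ω = n} =
      if n ∈ Set.Icc (0 : ℤ) k then ((k : ℝ≥0∞) + 1)⁻¹ else 0) :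
    (∀ i j : ℤ, μ {ω | X ω = i} ≠ 0 → μ {ω | X ω = j} ≠ 0 →
      μ {ω | X ω = i} = μ {ω | X ω = j}) ∧
    (∀ i j : ℤ, μ {ω | Y ω = i} ≠ 0 → μ {ω | Y ω = j} ≠ 0 →
      μ {ω | Y ω = i} = μ {ω | Y ω = j}) := by
  classical
  have hnullX : μ {ω | X ω ∉ Set.Icc (0:ℤ) (k₁:ℤ)} = 0 := MeasureTheory.ae_iff.mp hsX
  have hnullY : μ {ω | Y ω ∉ Set.Icc (0:ℤ) (k₂:ℤ)} = 0 := MeasureTheory.ae_iff.mp hsY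
  set A : ℤ → ℝ := fun i => (μ {ω | X ω = i}).toReal with hA_def
  set B : ℤ → ℝ := fun j => (μ {ω | Y ω = j}).toReal with hB_def
  have hA0 : ∀ i, 0 ≤ A i := fun i => ENNReal.toReal_nonneg
  have hB0 : ∀ j, 0 ≤ B j := fun j => ENNReal.toReal_nonneg
  have hAs : ∀ i : ℤ, (i < 0 ∨ (k₁:ℤ) < i) → A i = 0 := by
    intro i hi
    have hsub : {ω | X ω = i} ⊆ {ω | X ω ∉ Set.Icc (0:ℤ) (k₁:ℤ)} := by
      intro ω hω
      simp only [Set.mem_setOf_eq] at hω ⊢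
      rw [hω, Set.mem_Icc]
      omega
    rw [hA_def]
    simp [measure_mono_null hsub hnullX]
  have hBs : ∀ j : ℤ, (j < 0 ∨ (k₂:ℤ) < j) → B j = 0 := by
    intro j hj
    have hsub : {ω | Y ω = j} ⊆ {ω | Y ω ∉ Set.Icc (0:ℤ) (k₂:ℤ)} := by
      intro ω hω
      simp only [Set.mem_setOf_eq] at hω ⊢
      rw [hω, Set.mem_Icc]
      omega
    rw [hB_def]
    simp [measure_mono_null hsub hnullY]
  have hAsum : ∑ i ∈ Finset.Icc (0:ℤ) (k₁:ℤ), A i = 1 := by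
    rw [hA_def, ← ENNReal.toReal_sum (fun i _ => measure_ne_top μ _)]
    rw [sum_masses μ X hX (k₁:ℤ) hnullX]
    simp
  have hBsum : ∑ j ∈ Finset.Icc (0:ℤ) (k₂:ℤ), B j = 1 := by
    rw [hB_def, ← ENNReal.toReal_sum (fun j _ => measure_ne_top μ _)]
    rw [sum_masses μ Y hY (k₂:ℤ) hnullY]
    simp
  have hconv : ∀ n : ℤ, ∑ i ∈ Finset.Icc (0:ℤ) (k₁:ℤ), A i * B (n - i)
      = if 0 ≤ n ∧ n ≤ (k:ℤ) then ((k:ℝ)+1)⁻¹ else 0 := by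
    intro n
    have hE : ∑ i ∈ Finset.Icc (0:ℤ) (k₁:ℤ), μ {ω | X ω = i} * μ {ω | Y ω = n - i}
        = if n ∈ Set.Icc (0:ℤ) (k:ℤ) then ((k : ℝ≥0∞) + 1)⁻¹ else 0 := by
      rw [← conv_masses μ X Y hX hY hind (k₁:ℤ) hnullX n, hunif n]
    have hLHS : ∑ i ∈ Finset.Icc (0:ℤ) (k₁:ℤ), A i * B (n - i)
        = (∑ i ∈ Finset.Icc (0:ℤ) (k₁:ℤ), μ {ω | X ω = i} * μ {ω | Y ω = n - i}).toReal := by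
      rw [ENNReal.toReal_sum (fun i _ =>
        ENNReal.mul_ne_top (measure_ne_top μ _) (measure_ne_top μ _))]
      exact Finset.sum_congr rfl (fun i _ => (ENNReal.toReal_mul).symm)
    rw [hLHS, hE]
    by_cases hn : n ∈ Set.Icc (0:ℤ) (k:ℤ)
    · rw [if_pos hn, if_pos (Set.mem_Icc.mp hn)]
      rw [ENNReal.toReal_inv]
      congr 1
    · rw [if_neg hn, if_neg (fun h => hn (Set.mem_Icc.mpr h))]
      simp
  obtain ⟨HA, HB⟩ := core_flat k₁ k₂ k hk₁ hk₂ hk A B hA0 hB0 hAs hBs hAsum hBsum hconv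
  constructor
  · intro i j hi hj
    have hAi : A i = A 0 := by
      rcases HA i with h | h
      · exfalso
        rcases ENNReal.toReal_eq_zero_iff _ |>.mp h with h2 | h2
        · exact hi h2
        · exact measure_ne_top μ _ h2
      · exact h
    have hAj : A j = A 0 := by
      rcases HA j with h | h
      · exfalso
        rcases ENNReal.toReal_eq_zero_iff _ |>.mp h with h2 | h2
        · exact hj h2
        · exact measure_ne_top μ _ h2
      · exact h
    exact (ENNReal.toReal_eq_toReal_iff' (measure_ne_top μ _) (measure_ne_top μ _)).mp
      (hAi.trans hAj.symm)
  · intro i j hi hj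
    have hBi : B i = B 0 := by
      rcases HB i with h | h
      · exfalso
        rcases ENNReal.toReal_eq_zero_iff _ |>.mp h with h2 | h2
        · exact hi h2
        · exact measure_ne_top μ _ h2
      · exact h
    have hBj : B j = B 0 := by
      rcases HB j with h | h
      · exfalso
        rcases ENNReal.toReal_eq_zero_iff _ |>.mp h with h2 | h2
        · exact hj h2
        · exact measure_ne_top μ _ h2
      · exact h
    exact (ENNReal.toReal_eq_toReal_iff' (measure_ne_top μ _) (measure_ne_top μ _)).mp
      (hBi.trans hBj.symm)
end

section
/- Let $P(x) = \sum_{j=0}^{k_1} a_j x^j$ and $Q(x) = \sum_{j=0}^{k_2} b_j x^j$ be real polynomials with nonnegative coefficients, $a_0 = b_0 = 1$, $a_{k_1} > 0$, $b_{k_2} > 0$, and suppose $P(x) Q(x) = \sum_{j=0}^{k_1+k_2} x^j$. Then every coefficient $a_j$ and $b_j$ is either 0 or 1. -/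
open Polynomial


lemma reverse_multiset_prod (s : Multiset (Polynomial ℂ)) :
    s.prod.reverse = (s.map Polynomial.reverse).prod := by
  induction s using Multiset.induction with
  | empty => simp [Polynomial.reverse, Polynomial.reflect_one]
  | cons a s ih => simp [Polynomial.reverse_mul_of_domain, ih]

lemma reverse_X_sub_C' (z : ℂ) (hz : z ≠ 0) :
    (X - C z).reverse = -(C z) * (X - C z⁻¹) := by
  have h1 : (X - C z).natDegree = 1 := natDegree_X_sub_C z
  rw [Polynomial.reverse, h1]
  rw [show (X - C z : Polynomial ℂ) = X ^ 1 - C z * X ^ 0 by ring]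
  rw [Polynomial.reflect_sub, Polynomial.reflect_C_mul_X_pow, Polynomial.reflect_monomial]
  simp only [Polynomial.revAt_le (by norm_num : (1:ℕ) ≤ 1), Polynomial.revAt_le (Nat.zero_le 1)]
  rw [pow_zero, pow_one, sub_eq_iff_eq_add]
  have : (-C z) * C z⁻¹ = (-1 : Polynomial ℂ) := by
    rw [neg_mul, ← C_mul, mul_inv_cancel₀ hz]; simp
  rw [mul_sub, this]; ring

lemma palindrome_of_dvd (R : Polynomial ℝ) (N : ℕ) (hN : 0 < N) (hm : R.Monic)
    (h0 : R.coeff 0 = 1) (hdvd : R ∣ (X ^ N - 1)) :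
    ∀ j, j ≤ R.natDegree → R.coeff j = R.coeff (R.natDegree - j) := by
  set f : ℝ →+* ℂ := algebraMap ℝ ℂ with hf
  set S : Polynomial ℂ := R.map f with hS
  have hSm : S.Monic := hm.map f
  have hSd : S.natDegree = R.natDegree := hm.natDegree_map f
  have hS0 : S.coeff 0 = 1 := by
    rw [hS, coeff_map, h0]; simp [hf]
  have hSdvd : S ∣ X ^ N - 1 := by
    obtain ⟨U, hU⟩ := hdvd
    exact ⟨U.map f, by rw [hS, ← Polynomial.map_mul, ← hU]; simp⟩
  have hroots : ∀ z ∈ S.roots, z ^ N = 1 := by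
    intro z hz
    obtain ⟨U, hU⟩ := hSdvd
    have h1 : IsRoot S z := isRoot_of_mem_roots hz
    have h2 := congrArg (Polynomial.eval z) hU
    simp [h1.eq_zero] at h2
    exact sub_eq_zero.mp (by simpa using h2)
  have habs : ∀ z ∈ S.roots, ‖z‖ = 1 := by
    intro z hz
    have h := congrArg norm (hroots z hz)
    rw [norm_pow, norm_one] at h
    have h01 : 0 ≤ ‖z‖ := norm_nonneg z
    rcases lt_trichotomy ‖z‖ 1 with hlt | heq | hgt
    · have h2 := pow_lt_one₀ h01 hlt hN.ne'
      rw [h] at h2; exact absurd h2 (lt_irrefl 1)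
    · exact heq
    · have h2 := one_lt_pow₀ hgt hN.ne'
      rw [h] at h2; exact absurd h2 (lt_irrefl 1)
  have hzne : ∀ z ∈ S.roots, z ≠ 0 := by
    intro z hz h'
    have := habs z hz; rw [h'] at this; simp at this
  have hzinv : ∀ z ∈ S.roots, z⁻¹ = (starRingEnd ℂ) z := fun z hz =>
    Complex.inv_eq_conj (habs z hz)
  have hconj : S.map (starRingEnd ℂ) = S := by
    rw [hS, Polynomial.map_map]
    congr 1
    exact RingHom.ext fun r => Complex.conj_ofReal r
  have hsplits : S.Splits := IsAlgClosed.splits S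
  have hrootsconj : S.roots.map (starRingEnd ℂ) = S.roots := by
    rw [← hsplits.roots_map (starRingEnd ℂ), hconj]
  have hSprod : S = (S.roots.map fun z => X - C z).prod :=
    hsplits.eq_prod_roots_of_monic hSm
  have hcoeff0 : (S.roots.map fun z => -C z).prod = 1 := by
    have e1 : (S.roots.map fun z => -C z).prod = C ((S.roots.map fun z => -z).prod) := by
      rw [map_multiset_prod (C : ℂ →+* Polynomial ℂ), Multiset.map_map]
      simp [Function.comp_def]
    have e2 : (S.roots.map fun z => -z).prod = S.coeff 0 := by
      rw [coeff_zero_eq_eval_zero]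
      conv_rhs => rw [hSprod]
      rw [Polynomial.eval_multiset_prod, Multiset.map_map]
      congr 1
      exact Multiset.map_congr rfl (fun z _ => by simp)
    rw [e1, e2, hS0, map_one]
  have hrev : S.reverse = S := by
    conv_lhs => rw [hSprod]
    rw [reverse_multiset_prod, Multiset.map_map]
    simp only [Function.comp_def]
    rw [Multiset.map_congr rfl (fun z hz => reverse_X_sub_C' z (hzne z hz))]
    rw [Multiset.prod_map_mul, hcoeff0, one_mul]
    have e3 : S.roots.map (fun z => X - C z⁻¹) =
        (S.roots.map (fun z : ℂ => z⁻¹)).map (fun z => X - C z) := by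
      rw [Multiset.map_map]; simp [Function.comp_def]
    have e4 : S.roots.map (fun z : ℂ => z⁻¹) = S.roots := by
      rw [Multiset.map_congr rfl hzinv, hrootsconj]
    rw [e3, e4, ← hSprod]
  intro j hj
  have h5 := congrArg (fun p => Polynomial.coeff p j) hrev
  simp only [coeff_reverse] at h5
  rw [revAt_le (by rw [hSd]; exact hj), hSd] at h5
  rw [hS, coeff_map, coeff_map] at h5
  exact (f.injective h5).symm

/-- If real polynomials `P = ∑_{j≤k₁} a_j x^j` and `Q = ∑_{j≤k₂} b_j x^j` have nonnegative
coefficients, constant coefficients `1`, positive leading coefficients `a_{k₁}, b_{k₂}`, and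
`P·Q = 1 + x + ⋯ + x^{k₁+k₂}`, then all coefficients of `P` and `Q` are `0` or `1`. -/
theorem coeffs_zero_or_one_of_mul_eq_geom (k₁ k₂ : ℕ) (P Q : Polynomial ℝ)
    (hdP : P.natDegree ≤ k₁) (hdQ : Q.natDegree ≤ k₂)
    (hP0 : P.coeff 0 = 1) (hQ0 : Q.coeff 0 = 1)
    (hPnn : ∀ j, 0 ≤ P.coeff j) (hQnn : ∀ j, 0 ≤ Q.coeff j)
    (hPtop : 0 < P.coeff k₁) (hQtop : 0 < Q.coeff k₂)
    (hPQ : P * Q = ∑ j ∈ Finset.range (k₁ + k₂ + 1), Polynomial.X ^ j) :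
    (∀ j, P.coeff j = 0 ∨ P.coeff j = 1) ∧ (∀ j, Q.coeff j = 0 ∨ Q.coeff j = 1) := by
  have hPd : P.natDegree = k₁ := le_antisymm hdP (le_natDegree_of_ne_zero hPtop.ne')
  have hQd : Q.natDegree = k₂ := le_antisymm hdQ (le_natDegree_of_ne_zero hQtop.ne')
  -- coefficients of the geometric sum
  have hgeom : ∀ m, m ≤ k₁ + k₂ →
      (∑ j ∈ Finset.range (k₁ + k₂ + 1), (X : Polynomial ℝ) ^ j).coeff m = 1 := by
    intro m hm
    rw [Polynomial.finset_sum_coeff]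
    simp only [Polynomial.coeff_X_pow]
    rw [Finset.sum_ite_eq]
    simp [Finset.mem_range, Nat.lt_succ_iff, hm]
  -- the convolution identity
  have hc : ∀ m, m ≤ k₁ + k₂ →
      ∑ i ∈ Finset.range (m + 1), P.coeff i * Q.coeff (m - i) = 1 := by
    intro m hm
    have h := congrArg (fun p => Polynomial.coeff p m) hPQ
    rw [Polynomial.coeff_mul, Finset.Nat.sum_antidiagonal_eq_sum_range_succ_mk] at h
    rw [h]
    exact hgeom m hm
  -- all coefficients are at most 1
  have ha1 : ∀ m, P.coeff m ≤ 1 := by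
    intro m
    by_cases h : m ≤ k₁
    · have h2 := hc m (le_trans h (Nat.le_add_right _ _))
      have h3 : P.coeff m * Q.coeff (m - m) ≤
          ∑ i ∈ Finset.range (m + 1), P.coeff i * Q.coeff (m - i) :=
        Finset.single_le_sum (fun i _ => mul_nonneg (hPnn i) (hQnn _))
          (Finset.self_mem_range_succ m)
      rw [Nat.sub_self, hQ0, mul_one] at h3
      linarith
    · rw [Polynomial.coeff_eq_zero_of_natDegree_lt (by omega : P.natDegree < m)]
      norm_num
  have hb1 : ∀ m, Q.coeff m ≤ 1 := by
    intro m
    by_cases h : m ≤ k₂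
    · have h2 := hc m (le_trans h (Nat.le_add_left _ _))
      have h3 : P.coeff 0 * Q.coeff (m - 0) ≤
          ∑ i ∈ Finset.range (m + 1), P.coeff i * Q.coeff (m - i) :=
        Finset.single_le_sum (fun i _ => mul_nonneg (hPnn i) (hQnn _))
          (Finset.mem_range.mpr (Nat.succ_pos m))
      rw [Nat.sub_zero, hP0, one_mul] at h3
      linarith
    · rw [Polynomial.coeff_eq_zero_of_natDegree_lt (by omega : Q.natDegree < m)]
      norm_num
  -- top coefficients are 1
  have htopprod : P.coeff k₁ * Q.coeff k₂ = 1 := by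
    have h := hc (k₁ + k₂) le_rfl
    rw [Finset.sum_eq_single k₁] at h
    · rw [Nat.add_sub_cancel_left] at h
      exact h
    · intro i hi hne
      rcases Nat.lt_or_ge i k₁ with hlt | hge
      · rw [Polynomial.coeff_eq_zero_of_natDegree_lt (by omega : Q.natDegree < k₁ + k₂ - i),
          mul_zero]
      · rw [Polynomial.coeff_eq_zero_of_natDegree_lt
          (by omega : P.natDegree < i), zero_mul]
    · intro h'
      exact absurd (Finset.mem_range.mpr (by omega)) h'
  have htopP : P.coeff k₁ = 1 :=
    le_antisymm (ha1 k₁) (by nlinarith [hb1 k₂, hQtop])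
  have htopQ : Q.coeff k₂ = 1 :=
    le_antisymm (hb1 k₂) (by nlinarith [ha1 k₁, hPtop])
  -- monicity and divisibility
  have hPm : P.Monic := Polynomial.monic_of_natDegree_le_of_coeff_eq_one k₁ hdP htopP
  have hdvdP : P ∣ (X : Polynomial ℝ) ^ (k₁ + k₂ + 1) - 1 :=
    ⟨Q * (X - 1), by rw [← mul_assoc, hPQ, geom_sum_mul]⟩
  -- palindromy of P
  have hpalP : ∀ j, j ≤ k₁ → P.coeff j = P.coeff (k₁ - j) := by
    have h := palindrome_of_dvd P (k₁ + k₂ + 1) (Nat.succ_pos _) hPm hP0 hdvdP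
    rw [hPd] at h
    exact h
  -- orthogonality from coefficient k₁
  have horthP : ∀ i, i < k₁ → P.coeff i * Q.coeff (k₁ - i) = 0 := by
    intro i hi
    have h := hc k₁ (Nat.le_add_right _ _)
    rw [Finset.sum_range_succ, Nat.sub_self, hQ0, htopP, mul_one] at h
    have hz : ∑ i ∈ Finset.range k₁, P.coeff i * Q.coeff (k₁ - i) = 0 := by linarith
    exact (Finset.sum_eq_zero_iff_of_nonneg
      (fun i _ => mul_nonneg (hPnn i) (hQnn _))).mp hz i (Finset.mem_range.mpr hi)
  -- a_t b_t = 0 for t ≥ 1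
  have hab0 : ∀ t, 1 ≤ t → P.coeff t * Q.coeff t = 0 := by
    intro t ht
    by_cases h1 : t ≤ k₁
    · by_cases h2 : t ≤ k₂
      · have hi : k₁ - t < k₁ := by omega
        have h := horthP (k₁ - t) hi
        rw [Nat.sub_sub_self h1] at h
        rw [hpalP t h1]
        exact h
      · rw [Polynomial.coeff_eq_zero_of_natDegree_lt (by omega : Q.natDegree < t), mul_zero]
    · rw [Polynomial.coeff_eq_zero_of_natDegree_lt (by omega : P.natDegree < t), zero_mul]
  -- main induction
  suffices H : ∀ j, (P.coeff j = 0 ∨ P.coeff j = 1) ∧ (Q.coeff j = 0 ∨ Q.coeff j = 1) from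
    ⟨fun j => (H j).1, fun j => (H j).2⟩
  intro j
  induction j using Nat.strong_induction_on with
  | _ j IH =>
    rcases Nat.eq_zero_or_pos j with hj0 | hj1
    · subst hj0
      exact ⟨Or.inr hP0, Or.inr hQ0⟩
    by_cases hjn : j ≤ k₁ + k₂
    · obtain ⟨m, rfl⟩ : ∃ m, j = m + 1 := ⟨j - 1, (Nat.succ_pred_eq_of_pos hj1).symm⟩
      have h := hc (m + 1) hjn
      rw [Finset.sum_range_succ, Finset.sum_range_succ'] at h
      simp only [Nat.succ_sub_succ_eq_sub, Nat.sub_self, Nat.sub_zero, hP0, hQ0,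
        one_mul, mul_one] at h
      -- h : (∑ i ∈ range m, P.coeff (i+1) * Q.coeff (m - i)) + Q.coeff (m+1) + P.coeff (m+1) = 1
      set M := ∑ i ∈ Finset.range m, P.coeff (i + 1) * Q.coeff (m - i) with hMdef
      have hterm : ∀ i ∈ Finset.range m,
          P.coeff (i + 1) * Q.coeff (m - i) = 0 ∨ P.coeff (i + 1) * Q.coeff (m - i) = 1 := by
        intro i hi
        have hi' := Finset.mem_range.mp hi
        have hA := (IH (i + 1) (by omega)).1
        have hB := (IH (m - i) (by omega)).2
        rcases hA with hA | hA <;> rcases hB with hB | hB <;> simp [hA, hB]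
      have hM01 : M = 0 ∨ 1 ≤ M := by
        by_cases hM0 : M = 0
        · exact Or.inl hM0
        right
        obtain ⟨i, hi, hne⟩ : ∃ i ∈ Finset.range m,
            P.coeff (i + 1) * Q.coeff (m - i) ≠ 0 := by
          by_contra hall
          push_neg at hall
          exact hM0 (Finset.sum_eq_zero hall)
        have h1 : P.coeff (i + 1) * Q.coeff (m - i) = 1 := (hterm i hi).resolve_left hne
        calc (1 : ℝ) = P.coeff (i + 1) * Q.coeff (m - i) := h1.symm
          _ ≤ M := Finset.single_le_sum
              (f := fun i => P.coeff (i + 1) * Q.coeff (m - i))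
              (fun i _ => mul_nonneg (hPnn _) (hQnn _)) hi
      have hab := hab0 (m + 1) (Nat.succ_le_succ (Nat.zero_le m))
      rcases mul_eq_zero.mp hab with hA0 | hB0
      · refine ⟨Or.inl hA0, ?_⟩
        rcases hM01 with h0 | h1
        · exact Or.inr (by linarith)
        · exact Or.inl (by linarith [hQnn (m + 1)])
      · refine ⟨?_, Or.inl hB0⟩
        rcases hM01 with h0 | h1
        · exact Or.inr (by linarith)
        · exact Or.inl (by linarith [hPnn (m + 1)])
    · constructor
      · exact Or.inl (Polynomial.coeff_eq_zero_of_natDegree_lt (by omega : P.natDegree < j))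
      · exact Or.inl (Polynomial.coeff_eq_zero_of_natDegree_lt (by omega : Q.natDegree < j))
end

section
/- Let $k_1, k, n$ be positive integers with $k+1 = n(k_1+1)$. Let $U_{D_1}, U_{D_2}$ be independent integer-valued random variables with $\mathrm{supp}(U_{D_1}) = \{0,\dots,k_1\}$ and $\mathrm{supp}(U_{D_2}) \subseteq \{0,\dots,k-k_1\}$. Then $U_{D_1}+U_{D_2}$ is uniform on $\{0,\dots,k\}$ if and only if $U_{D_1}$ is uniform on $\{0,\dots,k_1\}$ and $U_{D_2}$ is uniform on $\{j(k_1+1) : j = 0,\dots,n-1\}$. -/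
open MeasureTheory ProbabilityTheory
open scoped ENNReal

set_option linter.unusedSectionVars false

section Aux
variable {Ω : Type*} [MeasurableSpace Ω] (μ : Measure Ω) [IsProbabilityMeasure μ]

private lemma tsum_meas_fiber (Z : Ω → ℤ) (hZ : Measurable Z) :
    ∑' i : ℤ, μ {ω | Z ω = i} = 1 := by
  have h1 : (⋃ i : ℤ, {ω | Z ω = i}) = Set.univ := by
    ext ω; simp
  have h2 := measure_iUnion (μ := μ) (f := fun i : ℤ => {ω | Z ω = i})
    (fun i j hij => by
      simp only [Function.onFun, Set.disjoint_left]
      intro ω h1 h2; exact hij (h1.symm.trans h2))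
    (fun i => hZ (measurableSet_singleton i))
  rw [h1] at h2
  simp [h2.symm]

private lemma conv_eq (X Y : Ω → ℤ) (hX : Measurable X) (hY : Measurable Y)
    (hind : IndepFun X Y μ) (m : ℤ) :
    μ {ω | X ω + Y ω = m} = ∑' i : ℤ, μ {ω | X ω = i} * μ {ω | Y ω = m - i} := by
  have h1 : {ω | X ω + Y ω = m} = ⋃ i : ℤ, ({ω | X ω = i} ∩ {ω | Y ω = m - i}) := by
    ext ω
    simp only [Set.mem_setOf_eq, Set.mem_iUnion, Set.mem_inter_iff]
    constructor
    · intro h; exact ⟨X ω, rfl, by omega⟩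
    · rintro ⟨i, h1, h2⟩; omega
  rw [h1, measure_iUnion]
  · congr 1; ext i
    exact hind.measure_inter_preimage_eq_mul {i} {m - i}
      (measurableSet_singleton _) (measurableSet_singleton _)
  · intro i j hij
    simp only [Function.onFun, Set.disjoint_left]
    rintro ω ⟨h1, _⟩ ⟨h3, _⟩; exact hij (h1.symm.trans h3)
  · exact fun i => (hX (measurableSet_singleton i)).inter (hY (measurableSet_singleton _))

private lemma ennreal_mul_right_cancel {a b x : ℝ≥0∞} (h0 : x ≠ 0) (ht : x ≠ ⊤)
    (h : a * x = b * x) : a = b :=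
  le_antisymm ((ENNReal.mul_le_mul_iff_left h0 ht).1 h.le)
    ((ENNReal.mul_le_mul_iff_left h0 ht).1 h.ge)

private lemma ennreal_mul_left_cancel {a b x : ℝ≥0∞} (h0 : x ≠ 0) (ht : x ≠ ⊤)
    (h : x * a = x * b) : a = b :=
  le_antisymm ((ENNReal.mul_le_mul_iff_right h0 ht).1 h.le)
    ((ENNReal.mul_le_mul_iff_right h0 ht).1 h.ge)

end Aux

set_option maxHeartbeats 1000000 in
/-- Let `k+1 = n(k₁+1)`, and let `X, Y` be independent integer random variables with
`supp X = {0,…,k₁}` and `supp Y ⊆ {0,…,k-k₁}`. Then `X+Y` is uniform on `{0,…,k}` iff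
`X` is uniform on `{0,…,k₁}` and `Y` is uniform on `{j(k₁+1) : 0 ≤ j ≤ n-1}`. -/
theorem uniform_sum_iff_uniform_factors {Ω : Type*} [MeasurableSpace Ω] (μ : Measure Ω)
    [IsProbabilityMeasure μ] (k₁ k n : ℕ) (hk₁ : 0 < k₁) (hk : 0 < k) (hn : 0 < n)
    (hdiv : k + 1 = n * (k₁ + 1))
    (X Y : Ω → ℤ) (hX : Measurable X) (hY : Measurable Y) (hind : IndepFun X Y μ)
    (hsX : ∀ i : ℤ, μ {ω | X ω = i} ≠ 0 ↔ i ∈ Set.Icc (0 : ℤ) k₁)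
    (hsY : ∀ᵐ ω ∂μ, Y ω ∈ Set.Icc (0 : ℤ) ((k : ℤ) - k₁)) :
    (∀ m : ℤ, μ {ω | X ω + Y ω = m} =
        if m ∈ Set.Icc (0 : ℤ) k then ((k : ℝ≥0∞) + 1)⁻¹ else 0) ↔
    ((∀ m : ℤ, μ {ω | X ω = m} =
        if m ∈ Set.Icc (0 : ℤ) k₁ then ((k₁ : ℝ≥0∞) + 1)⁻¹ else 0) ∧
      (∀ j : ℕ, j < n → μ {ω | Y ω = (j : ℤ) * (k₁ + 1)} = ((n : ℝ≥0∞))⁻¹) ∧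
      (∀ m : ℤ, (¬ ∃ j : ℕ, j < n ∧ m = (j : ℤ) * (k₁ + 1)) → μ {ω | Y ω = m} = 0)) := by
  -- notation
  set p : ℤ → ℝ≥0∞ := fun i => μ {ω | X ω = i} with hp_def
  set q : ℤ → ℝ≥0∞ := fun j => μ {ω | Y ω = j} with hq_def
  set s : ℤ := (k₁ : ℤ) + 1 with hs_def
  set b : ℤ := (k : ℤ) - k₁ with hb_def
  set c : ℝ≥0∞ := ((k : ℝ≥0∞) + 1)⁻¹ with hc_def
  have hdiv' : (k : ℤ) + 1 = (n : ℤ) * s := by rw [hs_def]; exact_mod_cast hdiv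
  have hn1 : (1 : ℤ) ≤ (n : ℤ) := by exact_mod_cast hn
  have hk₁1 : (1 : ℤ) ≤ (k₁ : ℤ) := by exact_mod_cast hk₁
  have hk₁k : (k₁ : ℤ) ≤ (k : ℤ) := by nlinarith [hdiv']
  have hb0 : 0 ≤ b := by omega
  have hbk : b + (k₁ : ℤ) = k := by omega
  have hbns : b = ((n : ℤ) - 1) * s := by rw [hs_def]; nlinarith [hdiv']
  have hc_ne_top : c ≠ ⊤ := by
    rw [hc_def]; simp [ENNReal.inv_ne_top]
  have hc_ne_zero : c ≠ 0 := by
    rw [hc_def]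
    simp only [ne_eq, ENNReal.inv_eq_zero]
    exact ENNReal.add_ne_top.2 ⟨ENNReal.natCast_ne_top k, ENNReal.one_ne_top⟩
  have hp_ne_top : ∀ i, p i ≠ ⊤ := fun i => measure_ne_top μ _
  have hq_ne_top : ∀ j, q j ≠ ⊤ := fun j => measure_ne_top μ _
  have hp_pos : ∀ i : ℤ, 0 ≤ i → i ≤ (k₁ : ℤ) → p i ≠ 0 := fun i h1 h2 =>
    (hsX i).2 ⟨h1, h2⟩
  have hp_zero : ∀ i : ℤ, i ∉ Set.Icc (0 : ℤ) (k₁ : ℤ) → p i = 0 := by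
    intro i hi
    by_contra h
    exact hi ((hsX i).1 h)
  have hq_zero : ∀ j : ℤ, j ∉ Set.Icc (0 : ℤ) b → q j = 0 := by
    intro j hj
    have hnull : μ {ω | Y ω ∉ Set.Icc (0 : ℤ) b} = 0 := by
      have := hsY
      rw [MeasureTheory.ae_iff] at this
      simpa using this
    refine measure_mono_null ?_ hnull
    intro ω (hω : Y ω = j)
    simp only [Set.mem_setOf_eq, hω]
    exact hj
  -- convolution as a finite sum
  have hconv : ∀ m : ℤ, μ {ω | X ω + Y ω = m}
      = ∑ i ∈ Finset.Icc (0 : ℤ) (k₁ : ℤ), p i * q (m - i) := by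
    intro m
    rw [conv_eq μ X Y hX hY hind m]
    exact tsum_eq_sum (fun i hi => by
      show p i * q (m - i) = 0
      rw [hp_zero i (by simpa using hi), zero_mul])
  -- total masses
  have hsump : ∑ i ∈ Finset.Icc (0 : ℤ) (k₁ : ℤ), p i = 1 := by
    rw [← tsum_eq_sum (L := SummationFilter.unconditional ℤ) (f := p) (s := Finset.Icc (0 : ℤ) (k₁ : ℤ))
      (fun i hi => hp_zero i (by simpa using hi))]
    exact tsum_meas_fiber μ X hX
  have hsumq : ∑ j ∈ Finset.Icc (0 : ℤ) b, q j = 1 := by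
    rw [← tsum_eq_sum (L := SummationFilter.unconditional ℤ) (f := q) (s := Finset.Icc (0 : ℤ) b)
      (fun j hj => hq_zero j (by simpa using hj))]
    exact tsum_meas_fiber μ Y hY
  have hIccsplit : Finset.Icc (0 : ℤ) (k₁ : ℤ) = insert 0 (Finset.Icc 1 (k₁ : ℤ)) := by
    ext x; simp only [Finset.mem_Icc, Finset.mem_insert]; omega
  constructor
  · -- FORWARD DIRECTION
    intro H
    have Hval : ∀ m : ℤ, 0 ≤ m → m ≤ (k : ℤ) →
        ∑ i ∈ Finset.Icc (0 : ℤ) (k₁ : ℤ), p i * q (m - i) = c := by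
      intro m h1 h2
      rw [← hconv m, H m, if_pos (by exact ⟨h1, h2⟩)]
    -- step 1 : p 0 * q 0 = c
    have h00 : p 0 * q 0 = c := by
      have h := Hval 0 le_rfl (by omega)
      rw [Finset.sum_eq_single 0 (fun i hi hne => by
        rw [hq_zero (0 - i) (by simp only [Finset.mem_Icc] at hi; simp only [Set.mem_Icc]; omega),
          mul_zero]) (fun h => absurd (Finset.mem_Icc.2 ⟨le_rfl, by omega⟩) h)] at h
      simpa using h
    -- step 2 : p k₁ * q b = c
    have hkb : p (k₁ : ℤ) * q b = c := by
      have h := Hval (k : ℤ) (by omega) le_rfl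
      rw [Finset.sum_eq_single (k₁ : ℤ) (fun i hi hne => by
        rw [hq_zero ((k : ℤ) - i) (by simp only [Finset.mem_Icc] at hi; simp only [Set.mem_Icc]; omega),
          mul_zero]) (fun h => absurd (Finset.mem_Icc.2 ⟨by omega, le_rfl⟩) h)] at h
      exact h
    -- step 3 : q 0 ≤ q b
    have hq0b : q 0 ≤ q b := by
      have hterm : p (k₁ : ℤ) * q 0 ≤ c := by
        rw [← Hval (k₁ : ℤ) (by omega) hk₁k]
        have h := Finset.single_le_sum (f := fun i => p i * q ((k₁ : ℤ) - i))
          (fun i _ => zero_le)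
          (show (k₁ : ℤ) ∈ Finset.Icc (0 : ℤ) (k₁ : ℤ) from Finset.mem_Icc.2 ⟨by omega, le_rfl⟩)
        simpa using h
      rw [← hkb] at hterm
      exact (ENNReal.mul_le_mul_iff_right (hp_pos _ (by omega) le_rfl) (hp_ne_top _)).1 hterm
    -- step 4 : q b ≤ q 0, hence equal
    have hqb0 : q b = q 0 := by
      refine le_antisymm ?_ hq0b
      have hterm : p 0 * q b ≤ c := by
        rw [← Hval b hb0 (by omega)]
        have h := Finset.single_le_sum (f := fun i => p i * q (b - i))
          (fun i _ => zero_le)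
          (show (0 : ℤ) ∈ Finset.Icc (0 : ℤ) (k₁ : ℤ) from Finset.mem_Icc.2 ⟨le_rfl, by omega⟩)
        simpa using h
      rw [← h00] at hterm
      exact (ENNReal.mul_le_mul_iff_right (hp_pos 0 le_rfl (by omega)) (hp_ne_top _)).1 hterm
    -- step 5 : q vanishes on [b - k₁, b - 1]
    have hqmid : ∀ i : ℤ, 1 ≤ i → i ≤ (k₁ : ℤ) → q (b - i) = 0 := by
      have hb' := Hval b hb0 (by omega)
      rw [hIccsplit, Finset.sum_insert (by simp)] at hb'
      simp only [sub_zero] at hb'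
      rw [hqb0, h00] at hb'
      have hrest : ∑ i ∈ Finset.Icc (1 : ℤ) (k₁ : ℤ), p i * q (b - i) = 0 := by
        nth_rewrite 2 [← add_zero c] at hb'
        exact ((ENNReal.add_right_inj hc_ne_top).1 hb')
      intro i h1 h2
      have h := (Finset.sum_eq_zero_iff.1 hrest) i (Finset.mem_Icc.2 ⟨h1, h2⟩)
      rcases mul_eq_zero.1 h with h | h
      · exact absurd h (hp_pos i (by omega) h2)
      · exact h
    -- step 6/7 : p is constant on [0, k₁]
    have hqb_ne : q b ≠ 0 := by
      intro h
      rw [h, mul_zero] at hkb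
      exact hc_ne_zero hkb.symm
    have hpconst : ∀ t : ℤ, 0 ≤ t → t ≤ (k₁ : ℤ) → p t = p 0 := by
      have key : ∀ t : ℤ, 0 ≤ t → t ≤ (k₁ : ℤ) → p t * q b = c := by
        intro t h1 h2
        have h := Hval (b + t) (by omega) (by omega)
        rw [Finset.sum_eq_single t (fun i hi hne => by
          simp only [Finset.mem_Icc] at hi
          rcases lt_or_gt_of_ne hne with hlt | hgt
          · rw [hq_zero (b + t - i) (by simp only [Set.mem_Icc]; omega), mul_zero]
          · rw [show b + t - i = b - (i - t) by ring, hqmid (i - t) (by omega) (by omega),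
              mul_zero])
          (fun h => absurd (Finset.mem_Icc.2 ⟨h1, h2⟩) h)] at h
        rw [show b + t - t = b by ring] at h
        exact h
      intro t h1 h2
      have h3 := (key t h1 h2).trans (key 0 le_rfl (by omega)).symm
      exact ennreal_mul_right_cancel hqb_ne (hq_ne_top _) h3
    -- value of p 0
    have hp0val : p 0 = ((k₁ : ℝ≥0∞) + 1)⁻¹ := by
      have h1 : ∑ i ∈ Finset.Icc (0 : ℤ) (k₁ : ℤ), p i
          = ((k₁ + 1 : ℕ) : ℝ≥0∞) * p 0 := by
        rw [Finset.sum_congr rfl (fun i hi => by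
          simp only [Finset.mem_Icc] at hi
          exact hpconst i hi.1 hi.2), Finset.sum_const, Int.card_Icc, nsmul_eq_mul]
        congr 2
        all_goals omega
      rw [hsump] at h1
      have hN : ((k₁ + 1 : ℕ) : ℝ≥0∞) ≠ 0 := by
        simp
      have hNt : ((k₁ + 1 : ℕ) : ℝ≥0∞) ≠ ⊤ := ENNReal.natCast_ne_top _
      have h2 : p 0 = ((k₁ + 1 : ℕ) : ℝ≥0∞)⁻¹ * (((k₁ + 1 : ℕ) : ℝ≥0∞) * p 0) := by
        rw [← mul_assoc, ENNReal.inv_mul_cancel hN hNt, one_mul]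
      rw [← h1, mul_one] at h2
      rw [h2]
      congr 1
      push_cast
      ring
    have hXconc : ∀ m : ℤ, p m = if m ∈ Set.Icc (0 : ℤ) (k₁ : ℤ)
        then ((k₁ : ℝ≥0∞) + 1)⁻¹ else 0 := by
      intro m
      by_cases hm : m ∈ Set.Icc (0 : ℤ) (k₁ : ℤ)
      · rw [if_pos hm, hpconst m hm.1 hm.2, hp0val]
      · rw [if_neg hm]; exact hp_zero m hm
    -- propagation for q
    have hp0_ne : p 0 ≠ 0 := hp_pos 0 le_rfl (by omega)
    have hqprop : ∀ m : ℤ, 1 ≤ m → m ≤ (k : ℤ) → q m = q (m - s) := by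
      intro m h1 h2
      have hW : ∀ x : ℤ, 0 ≤ x → x ≤ (k : ℤ) →
          p 0 * ∑ i ∈ Finset.Icc (0 : ℤ) (k₁ : ℤ), q (x - i) = c := by
        intro x hx1 hx2
        rw [Finset.mul_sum, ← Hval x hx1 hx2]
        exact Finset.sum_congr rfl (fun i hi => by
          simp only [Finset.mem_Icc] at hi
          rw [hpconst i hi.1 hi.2])
      have hWm := hW m (by omega) h2
      have hWm1 := hW (m - 1) (by omega) (by omega)
      set A : ℝ≥0∞ := ∑ i ∈ Finset.Icc (1 : ℤ) (k₁ : ℤ), q (m - i) with hA_def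
      have hre : ∑ i ∈ Finset.Icc (0 : ℤ) (k₁ : ℤ), q ((m - 1) - i)
          = ∑ i ∈ Finset.Icc (1 : ℤ) ((k₁ : ℤ) + 1), q (m - i) := by
        rw [show Finset.Icc (1 : ℤ) ((k₁ : ℤ) + 1)
            = Finset.map (addRightEmbedding 1) (Finset.Icc (0 : ℤ) (k₁ : ℤ)) by
          rw [Finset.map_add_right_Icc]; norm_num, Finset.sum_map]
        exact Finset.sum_congr rfl (fun i _ => by
          simp only [addRightEmbedding_apply]
          congr 1
          ring)
      have hsplit1 : ∑ i ∈ Finset.Icc (0 : ℤ) (k₁ : ℤ), q (m - i) = q m + A := by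
        rw [hIccsplit, Finset.sum_insert (by intro hmem; rw [Finset.mem_Icc] at hmem; omega),
          hA_def, sub_zero]
      have hsplit2 : ∑ i ∈ Finset.Icc (1 : ℤ) ((k₁ : ℤ) + 1), q (m - i) = q (m - s) + A := by
        rw [show Finset.Icc (1 : ℤ) ((k₁ : ℤ) + 1)
            = insert ((k₁ : ℤ) + 1) (Finset.Icc 1 (k₁ : ℤ)) by
          ext x; simp only [Finset.mem_Icc, Finset.mem_insert]; omega,
          Finset.sum_insert (by intro hmem; rw [Finset.mem_Icc] at hmem; omega), hA_def, hs_def]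
      rw [hsplit1] at hWm
      rw [hre, hsplit2] at hWm1
      have heq : q m + A = q (m - s) + A :=
        ennreal_mul_left_cancel hp0_ne (hp_ne_top 0) (hWm.trans hWm1.symm)
      have hA_ne : A ≠ ⊤ := by
        intro h
        rw [h, add_top, ENNReal.mul_top hp0_ne] at hWm
        exact hc_ne_top hWm.symm
      rw [add_comm (q m), add_comm (q (m - s))] at heq
      exact (ENNReal.add_right_inj hA_ne).1 heq
    -- q vanishes off multiples of s
    have hqnondvd : ∀ N : ℕ, ∀ j : ℤ, 0 ≤ j → j ≤ (k : ℤ) → j = N → ¬ (s ∣ j) → q j = 0 := by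
      intro N
      induction N using Nat.strong_induction_on with
      | _ N ih =>
        intro j h0 hk' hjN hdvd
        have h1 : 1 ≤ j := by
          rcases lt_or_eq_of_le h0 with h | h
          · omega
          · exact absurd (h ▸ dvd_zero s) hdvd
        rw [hqprop j h1 hk']
        by_cases hneg : j - s < 0
        · exact hq_zero _ (by simp only [Set.mem_Icc]; omega)
        · refine ih (j - s).toNat (by omega) (j - s) (by omega) (by omega) (by omega) ?_
          intro hdd
          exact hdvd (by
            have : s ∣ (j - s) + s := hdd.add (dvd_refl s)
            simpa using this)
    -- q on multiples of s
    have hqmult : ∀ l : ℕ, l < n → q ((l : ℤ) * s) = q 0 := by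
      intro l hl
      induction l with
      | zero => norm_num
      | succ l ihl =>
        have hs1 : (1 : ℤ) ≤ s := by omega
        have hls : ((l : ℤ) + 1) * s ≤ b := by
          rw [hbns]
          exact mul_le_mul_of_nonneg_right (by omega) (by omega)
        have hge1 : (1 : ℤ) ≤ ((l : ℤ) + 1) * s := by nlinarith
        have h := hqprop (((l : ℤ) + 1) * s) hge1 (by omega)
        rw [show ((l : ℤ) + 1) * s - s = (l : ℤ) * s by ring] at h
        push_cast
        rw [h]
        exact ihl (by omega)
    -- value of q 0
    have hq0val : q 0 = (n : ℝ≥0∞)⁻¹ := by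
      have hs0 : (0 : ℤ) < s := by omega
      have hinj : Function.Injective (fun l : ℕ => (l : ℤ) * s) := by
        intro a b hab
        simp only at hab
        have := mul_right_cancel₀ (by omega : s ≠ 0) hab
        exact_mod_cast this
      set e : ℕ ↪ ℤ := ⟨fun l : ℕ => (l : ℤ) * s, hinj⟩ with he_def
      have hsub : Finset.map e (Finset.range n) ⊆ Finset.Icc (0 : ℤ) b := by
        intro x hx
        simp only [he_def, Finset.mem_map, Finset.mem_range, Function.Embedding.coeFn_mk] at hx
        obtain ⟨l, hl, rfl⟩ := hx
        simp only [Finset.mem_Icc]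
        refine ⟨by positivity, ?_⟩
        rw [hbns]
        exact mul_le_mul_of_nonneg_right (by omega) (by omega)
      have h1 : ∑ x ∈ Finset.map e (Finset.range n), q x = 1 := by
        rw [← hsumq]
        refine Finset.sum_subset hsub ?_
        intro x hx hnx
        simp only [Finset.mem_Icc] at hx
        by_cases hdd : s ∣ x
        · obtain ⟨l, rfl⟩ := hdd
          exfalso
          apply hnx
          have hl0 : (0 : ℤ) ≤ l := by
            by_contra hcon
            push_neg at hcon
            nlinarith [hx.1]
          have hx2 : s * l ≤ ((n : ℤ) - 1) * s := by rw [← hbns]; exact hx.2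
          have hln : l ≤ (n : ℤ) - 1 := by nlinarith
          simp only [he_def, Finset.mem_map, Finset.mem_range, Function.Embedding.coeFn_mk]
          exact ⟨l.toNat, by omega, by rw [Int.toNat_of_nonneg hl0, mul_comm]⟩
        · exact hqnondvd x.toNat x hx.1 (by omega) (by omega) hdd
      have h2 : ∑ x ∈ Finset.map e (Finset.range n), q x = (n : ℝ≥0∞) * q 0 := by
        rw [Finset.sum_map]
        simp only [he_def, Function.Embedding.coeFn_mk]
        rw [Finset.sum_congr rfl (fun l hl => hqmult l (Finset.mem_range.1 hl)),
          Finset.sum_const, Finset.card_range, nsmul_eq_mul]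
      rw [h2] at h1
      have hN : ((n : ℕ) : ℝ≥0∞) ≠ 0 := by
        simp only [ne_eq, Nat.cast_eq_zero]
        omega
      have hNt : ((n : ℕ) : ℝ≥0∞) ≠ ⊤ := ENNReal.natCast_ne_top _
      calc q 0 = (n : ℝ≥0∞)⁻¹ * ((n : ℝ≥0∞) * q 0) := by
            rw [← mul_assoc, ENNReal.inv_mul_cancel hN hNt, one_mul]
        _ = (n : ℝ≥0∞)⁻¹ := by rw [h1, mul_one]
    refine ⟨hXconc, ?_, ?_⟩
    · intro j hj
      show q ((j : ℤ) * s) = (n : ℝ≥0∞)⁻¹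
      rw [hqmult j hj, hq0val]
    · intro m hm
      show q m = 0
      by_cases hmem : m ∈ Set.Icc (0 : ℤ) b
      · simp only [Set.mem_Icc] at hmem
        by_cases hdd : s ∣ m
        · exfalso
          obtain ⟨l, rfl⟩ := hdd
          apply hm
          have hs0 : (0 : ℤ) < s := by omega
          have hl0 : (0 : ℤ) ≤ l := by
            by_contra hcon
            push_neg at hcon
            nlinarith [hmem.1]
          have hx2 : s * l ≤ ((n : ℤ) - 1) * s := by rw [← hbns]; exact hmem.2
          have hln : l ≤ (n : ℤ) - 1 := by nlinarith
          refine ⟨l.toNat, by omega, ?_⟩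
          rw [Int.toNat_of_nonneg hl0, mul_comm]
        · exact hqnondvd m.toNat m hmem.1 (by omega) (by omega) hdd
      · exact hq_zero m hmem
  · -- REVERSE DIRECTION
    rintro ⟨h1, h2, h3⟩ m
    rw [hconv m]
    have hps : ∀ i : ℤ, 0 ≤ i → i ≤ (k₁ : ℤ) → p i = ((k₁ : ℝ≥0∞) + 1)⁻¹ := by
      intro i hi1 hi2
      have h := h1 i
      rw [if_pos (Set.mem_Icc.2 ⟨hi1, hi2⟩)] at h
      exact h
    have hq3 : ∀ j : ℤ, (¬ ∃ l : ℕ, l < n ∧ j = (l : ℤ) * s) → q j = 0 :=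
      fun j hj => h3 j hj
    have hq2 : ∀ l : ℕ, l < n → q ((l : ℤ) * s) = (n : ℝ≥0∞)⁻¹ :=
      fun l hl => h2 l hl
    have hs0 : (0 : ℤ) < s := by omega
    by_cases hm : m ∈ Set.Icc (0 : ℤ) (k : ℤ)
    · simp only [Set.mem_Icc] at hm
      rw [if_pos (Set.mem_Icc.2 ⟨hm.1, hm.2⟩)]
      have hi0a : 0 ≤ m % s := Int.emod_nonneg m (by omega)
      have hi0b : m % s < s := Int.emod_lt_of_pos m hs0
      have hquot : m = s * (m / s) + m % s := (Int.mul_ediv_add_emod m s).symm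
      have hl0 : 0 ≤ m / s := Int.ediv_nonneg hm.1 (by omega)
      have hln : m / s < (n : ℤ) := by
        by_contra hcon
        push_neg at hcon
        have h5 : s * (n : ℤ) ≤ s * (m / s) := mul_le_mul_of_nonneg_left hcon (by omega)
        have h6 : (n : ℤ) * s = s * (n : ℤ) := mul_comm _ _
        linarith [hm.2, hdiv', hi0a, hquot]
      rw [Finset.sum_eq_single (m % s) (fun i hi hne => by
        simp only [Finset.mem_Icc] at hi
        have hz : q (m - i) = 0 := by
          apply hq3
          rintro ⟨l, hl, hml⟩
          have hml' : i = m - (l : ℤ) * s := by linarith [hml]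
          have hfact : i - m % s = s * (m / s - (l : ℤ)) := by
            have h7 : s * (m / s - (l : ℤ)) = s * (m / s) - s * (l : ℤ) := by ring
            have h8 : (l : ℤ) * s = s * (l : ℤ) := mul_comm _ _
            linarith [hquot]
          have habs : i - m % s = 0 := by
            refine Int.eq_zero_of_abs_lt_dvd ⟨m / s - (l : ℤ), hfact⟩ ?_
            rw [abs_lt]
            constructor <;> linarith [hi.1, hi.2, hi0a, hi0b]
          exact hne (by linarith [habs])
        rw [hz, mul_zero])
        (fun hcon => absurd (Finset.mem_Icc.2 ⟨hi0a, by linarith [hi0b]⟩) hcon)]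
      have hq_i0 : q (m - m % s) = (n : ℝ≥0∞)⁻¹ := by
        have htn : ((m / s).toNat : ℤ) = m / s := Int.toNat_of_nonneg hl0
        have heq2 : m - m % s = ((m / s).toNat : ℤ) * s := by
          rw [htn]
          have h9 : (m / s) * s = s * (m / s) := mul_comm _ _
          linarith [hquot]
        rw [heq2]
        refine hq2 (m / s).toNat ?_
        rw [← Nat.cast_lt (α := ℤ), htn]
        exact hln
      rw [hq_i0, hps (m % s) hi0a (by linarith [hi0b])]
      rw [hc_def]
      have hk1 : ((k : ℝ≥0∞) + 1) = ((k₁ : ℝ≥0∞) + 1) * (n : ℝ≥0∞) := by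
        rw [show ((k : ℝ≥0∞) + 1) = ((k + 1 : ℕ) : ℝ≥0∞) by push_cast; ring, hdiv]
        push_cast
        ring
      have hne : ((k₁:ℝ≥0∞) + 1) ≠ 0 := by
        intro hzero
        rw [add_eq_zero] at hzero
        exact one_ne_zero hzero.2
      rw [hk1, ENNReal.mul_inv (Or.inl hne)
        (Or.inl (ENNReal.add_ne_top.2 ⟨ENNReal.natCast_ne_top _, ENNReal.one_ne_top⟩))]
    · rw [if_neg hm]
      refine Finset.sum_eq_zero (fun i hi => ?_)
      simp only [Finset.mem_Icc] at hi
      simp only [Set.mem_Icc, not_and_or, not_le] at hm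
      have hz : q (m - i) = 0 := by
        apply hq3
        rintro ⟨l, hl, hml⟩
        have hls : (l : ℤ) * s ≤ ((n : ℤ) - 1) * s :=
          mul_le_mul_of_nonneg_right (by omega) (by omega)
        have hl0 : (0 : ℤ) ≤ (l : ℤ) * s := by positivity
        rcases hm with hm | hm
        · omega
        · omega
      rw [hz, mul_zero]
end

section
/- Let $k_1, k_2, k$ be positive integers with $k = k_1+k_2$, and $\lambda \in (0,1)$. Let $U_{D_1}, U_{D_2}$ be independent integer-valued random variables supported in $\{0,\dots,k_1\}$ and $\{0,\dots,k_2\}$ respectively. If $U_{D_1}+U_{D_2}$ has the truncated geometric law $\Pr = c(1-\lambda)^j$ on $\{0,\dots,k\}$ (with $c$ the normalizing constant), then for each $n=1,2$ and every $j$ in the support of $U_{D_n}$, $\Pr(U_{D_n}=j) = \Pr(U_{D_n}=0)(1-\lambda)^j$. -/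
open Finset

/-- Core combinatorial lemma: if nonnegative sequences `u` (supported in `[0,k₁]`) and `v`
(supported in `[0,k₂]`) with `u 0 = v 0 = 1` have all convolution coefficients on `[0,k₁+k₂]`
equal to `1`, then all values of `u` and `v` lie in `{0,1}`. -/
lemma conv_one_core (k₁ k₂ : ℕ) (hk₁ : 0 < k₁) (hk₂ : 0 < k₂) (u v : ℕ → ℝ)
    (hu : ∀ i, 0 ≤ u i) (hv : ∀ j, 0 ≤ v j) (hu0 : u 0 = 1) (hv0 : v 0 = 1)
    (hus : ∀ i, k₁ < i → u i = 0) (hvs : ∀ j, k₂ < j → v j = 0)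
    (hc : ∀ m, m ≤ k₁ + k₂ → ∑ i ∈ Finset.range (m+1), u i * v (m - i) = 1) :
    ∀ t, (u t = 0 ∨ u t = 1) ∧ (v t = 0 ∨ v t = 1) := by
  classical
  -- pair bound
  have pair_le : ∀ m, m ≤ k₁ + k₂ → ∀ i i', i ≠ i' → i ≤ m → i' ≤ m →
      u i * v (m - i) + u i' * v (m - i') ≤ 1 := by
    intro m hm i i' hne hi hi'
    have h := hc m hm
    have hsub : ({i, i'} : Finset ℕ) ⊆ Finset.range (m+1) := by
      intro x hx
      simp only [Finset.mem_insert, Finset.mem_singleton] at hx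
      rcases hx with rfl | rfl <;> exact Finset.mem_range.mpr (by omega)
    calc u i * v (m - i) + u i' * v (m - i')
        = ∑ x ∈ ({i, i'} : Finset ℕ), u x * v (m - x) := by rw [Finset.sum_pair hne]
      _ ≤ ∑ x ∈ Finset.range (m+1), u x * v (m - x) :=
          Finset.sum_le_sum_of_subset_of_nonneg hsub
            (fun x _ _ => mul_nonneg (hu x) (hv _))
      _ = 1 := h
  have single_le : ∀ m, m ≤ k₁ + k₂ → ∀ i, i ≤ m → u i * v (m - i) ≤ 1 := by
    intro m hm i hi
    have h := hc m hm
    calc u i * v (m - i)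
        ≤ ∑ x ∈ Finset.range (m+1), u x * v (m - x) :=
          Finset.single_le_sum (fun x _ => mul_nonneg (hu x) (hv _))
            (Finset.mem_range.mpr (by omega))
      _ = 1 := h
  have hule : ∀ i, u i ≤ 1 := by
    intro i
    rcases le_or_gt i k₁ with h | h
    · have := single_le i (by omega) i le_rfl
      simpa [Nat.sub_self, hv0] using this
    · rw [hus i h]; norm_num
  have hvle : ∀ j, v j ≤ 1 := by
    intro j
    rcases le_or_gt j k₂ with h | h
    · have := single_le j (by omega) 0 (Nat.zero_le _)
      simpa [hu0] using this
    · rw [hvs j h]; norm_num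
  -- top corner
  have htop : u k₁ * v k₂ = 1 := by
    have h := hc (k₁ + k₂) le_rfl
    rw [Finset.sum_eq_single k₁] at h
    · simpa using h
    · intro i hi hne
      rcases lt_or_gt_of_ne hne with hlt | hgt
      · rw [hvs (k₁ + k₂ - i) (by omega)]; ring
      · rw [hus i hgt]; ring
    · intro habs; exact absurd (Finset.mem_range.mpr (by omega)) habs
  have huk : u k₁ = 1 := by
    have h1 : u k₁ * v k₂ ≤ u k₁ := mul_le_of_le_one_right (hu k₁) (hvle k₂)
    have := hule k₁; linarith [htop]
  have hvk : v k₂ = 1 := by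
    have h1 : u k₁ * v k₂ ≤ v k₂ := mul_le_of_le_one_left (hv k₂) (hule k₁)
    have := hvle k₂; linarith [htop]
  -- corner killing
  have kill1 : ∀ j, 1 ≤ j → j ≤ k₁ → u (k₁ - j) * v j = 0 := by
    intro j hj1 hjk
    have h := pair_le k₁ (by omega) (k₁ - j) k₁ (by omega) (by omega) le_rfl
    rw [Nat.sub_self, hv0, huk, (by omega : k₁ - (k₁ - j) = j)] at h
    have : 0 ≤ u (k₁ - j) * v j := mul_nonneg (hu _) (hv _)
    linarith
  have kill2 : ∀ i, 1 ≤ i → i ≤ k₂ → u i * v (k₂ - i) = 0 := by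
    intro i hi1 hik
    have h := pair_le k₂ (by omega) i 0 (by omega) (by omega) (Nat.zero_le _)
    rw [Nat.sub_zero, hu0, hvk, one_mul] at h
    have : 0 ≤ u i * v (k₂ - i) := mul_nonneg (hu _) (hv _)
    linarith
  have sumle : ∀ t, 1 ≤ t → t ≤ k₁ + k₂ → u t + v t ≤ 1 := by
    intro t ht1 htk
    have h := pair_le t (by omega) t 0 (by omega) le_rfl (Nat.zero_le _)
    rw [Nat.sub_self, Nat.sub_zero, hv0, hu0, mul_one, one_mul] at h
    exact h
  -- main argument
  intro t₀
  by_contra hbad0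
  have hex : ∃ t, ¬ ((u t = 0 ∨ u t = 1) ∧ (v t = 0 ∨ v t = 1)) := ⟨t₀, hbad0⟩
  obtain ⟨r, hrP, hmin⟩ : ∃ r, ¬ ((u r = 0 ∨ u r = 1) ∧ (v r = 0 ∨ v r = 1)) ∧
      ∀ s, s < r → (u s = 0 ∨ u s = 1) ∧ (v s = 0 ∨ v s = 1) :=
    ⟨Nat.find hex, Nat.find_spec hex, fun s hs => not_not.mp (Nat.find_min hex hs)⟩
  have hr0 : r ≠ 0 := by
    intro h; subst h; exact hrP ⟨Or.inr hu0, Or.inr hv0⟩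
  have hrk : r ≤ k₁ + k₂ := by
    by_contra h
    exact hrP ⟨Or.inl (hus r (by omega)), Or.inl (hvs r (by omega))⟩
  obtain ⟨r', rfl⟩ : ∃ r', r = r' + 1 := ⟨r - 1, by omega⟩
  -- Step A : u r + v r = 1 with both fractional
  have hcr := hc (r' + 1) hrk
  rw [Finset.sum_range_succ, Finset.sum_range_succ'] at hcr
  simp only [Nat.succ_sub_succ_eq_sub, Nat.sub_zero, Nat.sub_self, hu0, hv0, mul_one, one_mul] at hcr
  -- hcr : (∑ i ∈ range r', u (i+1) * v (r' - i)) + v (r'+1) + u (r'+1) = 1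
  set M : ℝ := ∑ i ∈ Finset.range r', u (i+1) * v (r' - i) with hM
  have hMnn : 0 ≤ M := Finset.sum_nonneg fun i _ => mul_nonneg (hu _) (hv _)
  have hM01 : M = 0 ∨ 1 ≤ M := by
    by_cases hone : ∃ i ∈ Finset.range r', u (i+1) * v (r' - i) = 1
    · obtain ⟨i, hi, hi1⟩ := hone
      right
      rw [hM]
      calc (1:ℝ) = u (i+1) * v (r' - i) := hi1.symm
        _ ≤ ∑ i ∈ Finset.range r', u (i+1) * v (r' - i) :=
            Finset.single_le_sum (f := fun i => u (i + 1) * v (r' - i))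
              (fun x _ => mul_nonneg (hu _) (hv _)) hi
    · left
      apply Finset.sum_eq_zero
      intro i hi
      have hilt := Finset.mem_range.mp hi
      have h1 := (hmin (i+1) (by omega)).1
      have h2 := (hmin (r' - i) (by omega)).2
      rcases h1 with h1 | h1
      · rw [h1]; ring
      · rcases h2 with h2 | h2
        · rw [h2]; ring
        · exact absurd ⟨i, hi, by rw [h1, h2]; ring⟩ hone
  have huv : u (r'+1) + v (r'+1) = 1 ∧ M = 0 := by
    rcases hM01 with h | h
    · constructor <;> linarith
    · exfalso
      have hu0' : u (r'+1) = 0 := le_antisymm (by linarith [hv (r'+1)]) (hu _)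
      have hv0' : v (r'+1) = 0 := le_antisymm (by linarith [hu (r'+1)]) (hv _)
      exact hrP ⟨Or.inl hu0', Or.inl hv0'⟩
  obtain ⟨huv1, hM0⟩ := huv
  have hAn : ¬ (u (r'+1) = 0 ∨ u (r'+1) = 1) := by
    intro h
    rcases h with h | h
    · exact hrP ⟨Or.inl h, Or.inr (by linarith)⟩
    · exact hrP ⟨Or.inr h, Or.inl (by linarith)⟩
  have hupos : 0 < u (r'+1) :=
    lt_of_le_of_ne (hu _) (fun h => hAn (Or.inl h.symm))
  have hvpos : 0 < v (r'+1) := by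
    rcases lt_or_eq_of_le (hv (r'+1)) with h | h
    · exact h
    · exact absurd (Or.inr (by linarith)) hAn
  have hrk₁ : r' + 1 < k₁ := by
    rcases lt_trichotomy (r'+1) k₁ with h | h | h
    · exact h
    · exact absurd (Or.inr (h ▸ huk)) hAn
    · exact absurd (Or.inl (hus _ h)) hAn
  have hrk₂ : r' + 1 < k₂ := by
    have hBn : ¬ (v (r'+1) = 0 ∨ v (r'+1) = 1) := by
      intro h
      rcases h with h | h
      · exact hrP ⟨Or.inr (by linarith), Or.inl h⟩
      · exact hrP ⟨Or.inl (by linarith), Or.inr h⟩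
    rcases lt_trichotomy (r'+1) k₂ with h | h | h
    · exact h
    · exact absurd (Or.inr (h ▸ hvk)) hBn
    · exact absurd (Or.inl (hvs _ h)) hBn
  -- reversed diagonal identity
  have identB : ∀ t, t ≤ r' + 1 → ∑ s ∈ Finset.range (t+1),
      u (k₁ - t + s) * v (k₂ - s) = 1 := by
    intro t htr
    have h := hc (k₁ + k₂ - t) (Nat.sub_le _ _)
    have h1 : ∑ i ∈ Finset.range (k₁ + k₂ - t + 1), u i * v (k₁ + k₂ - t - i)
        = ∑ i ∈ Finset.Ico (k₁ - t) (k₁ + 1), u i * v (k₁ + k₂ - t - i) := by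
      symm
      apply Finset.sum_subset
      · intro x hx
        rw [Finset.mem_Ico] at hx
        exact Finset.mem_range.mpr (by omega)
      · intro x hx hnx
        rw [Finset.mem_range] at hx
        rw [Finset.mem_Ico] at hnx
        push_neg at hnx
        rcases lt_or_ge x (k₁ - t) with hlt | hle
        · rw [hvs (k₁ + k₂ - t - x) (by omega)]; ring
        · rw [hus x (by omega)]; ring
    have h2 : ∑ i ∈ Finset.Ico (k₁ - t) (k₁ + 1), u i * v (k₁ + k₂ - t - i)
        = ∑ s ∈ Finset.range (t+1), u (k₁ - t + s) * v (k₂ - s) := by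
      rw [Finset.sum_Ico_eq_sum_range]
      have : k₁ + 1 - (k₁ - t) = t + 1 := by omega
      rw [this]
      apply Finset.sum_congr rfl
      intro s hs
      rw [Finset.mem_range] at hs
      have e₂ : k₁ + k₂ - t - (k₁ - t + s) = k₂ - s := by omega
      rw [e₂]
    rw [h1, h2] at h
    exact h
  have identB' : ∀ t, t ≤ r' + 1 → ∑ s ∈ Finset.range (t+1),
      u (k₁ - s) * v (k₂ - (t - s)) = 1 := by
    intro t htr
    have h := identB t htr
    rw [← Finset.sum_range_reflect] at h
    rw [← h]
    apply Finset.sum_congr rfl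
    intro s hs
    rw [Finset.mem_range] at hs
    have e₂ : t + 1 - 1 - s = t - s := by omega
    have e₁ : k₁ - t + (t - s) = k₁ - s := by omega
    rw [e₂, e₁]
  -- palindromic structure below r
  have palin : ∀ t, t < r' + 1 → u (k₁ - t) = u t ∧ v (k₂ - t) = v t := by
    intro t
    induction t using Nat.strong_induction_on with
    | _ t ih =>
      intro htr
      rcases Nat.eq_zero_or_pos t with rfl | ht1
      · simp only [Nat.sub_zero]
        exact ⟨by rw [huk, hu0], by rw [hvk, hv0]⟩
      obtain ⟨t', rfl⟩ : ∃ t', t = t' + 1 := ⟨t - 1, by omega⟩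
      have e1 := hc (t' + 1) (by omega)
      rw [Finset.sum_range_succ, Finset.sum_range_succ'] at e1
      simp only [Nat.succ_sub_succ_eq_sub, Nat.sub_zero, Nat.sub_self, hu0, hv0, mul_one, one_mul] at e1
      have e2 := identB' (t' + 1) (by omega)
      rw [Finset.sum_range_succ, Finset.sum_range_succ'] at e2
      simp only [Nat.succ_sub_succ_eq_sub, Nat.sub_zero, Nat.sub_self, huk, hvk, mul_one, one_mul] at e2
      -- e1 : (∑ i ∈ range t', u (i+1) * v (t' - i)) + v (t'+1) + u (k₁ - (t'+1))?? check below
      have hmideq : ∑ i ∈ Finset.range t', u (k₁ - (i+1)) * v (k₂ - (t' - i))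
          = ∑ i ∈ Finset.range t', u (i+1) * v (t' - i) := by
        apply Finset.sum_congr rfl
        intro i hi
        rw [Finset.mem_range] at hi
        have h1 := (ih (i+1) (by omega) (by omega)).1
        have h2 := (ih (t' - i) (by omega) (by omega)).2
        rw [h1, h2]
      have hsum_eq : u (k₁ - (t'+1)) + v (k₂ - (t'+1)) = u (t'+1) + v (t'+1) := by
        linarith [e1, e2, hmideq]
      have hP := hmin (t'+1) htr
      rcases hP.1 with hu1 | hu1
      · rcases hP.2 with hv1 | hv1
        · -- both 0
          have h0 : u (k₁ - (t'+1)) + v (k₂ - (t'+1)) = 0 := by rw [hsum_eq, hu1, hv1]; ring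
          constructor
          · rw [hu1]; linarith [hu (k₁ - (t'+1)), hv (k₂ - (t'+1))]
          · rw [hv1]; linarith [hu (k₁ - (t'+1)), hv (k₂ - (t'+1))]
        · -- u = 0, v = 1
          have hk1 := kill1 (t'+1) (by omega) (by omega)
          rw [hv1, mul_one] at hk1
          constructor
          · rw [hu1, hk1]
          · rw [hv1]; rw [hk1, hu1, hv1] at hsum_eq; linarith
      · rcases hP.2 with hv1 | hv1
        · -- u = 1, v = 0
          have hk2 := kill2 (t'+1) (by omega) (by omega)
          rw [hu1, one_mul] at hk2
          constructor
          · rw [hu1]; rw [hk2, hu1, hv1] at hsum_eq; linarith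
          · rw [hv1, hk2]
        · -- both 1 : impossible
          exfalso
          have := sumle (t'+1) (by omega) (by omega)
          rw [hu1, hv1] at this; linarith
  -- Step C : contradiction
  have e2 := identB' (r' + 1) le_rfl
  rw [Finset.sum_range_succ, Finset.sum_range_succ'] at e2
  simp only [Nat.succ_sub_succ_eq_sub, Nat.sub_zero, Nat.sub_self, huk, hvk, mul_one, one_mul] at e2
  have hmideq : ∑ i ∈ Finset.range r', u (k₁ - (i+1)) * v (k₂ - (r' - i))
      = ∑ i ∈ Finset.range r', u (i+1) * v (r' - i) := by
    apply Finset.sum_congr rfl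
    intro i hi
    rw [Finset.mem_range] at hi
    have h1 := (palin (i+1) (by omega)).1
    have h2 := (palin (r' - i) (by omega)).2
    rw [h1, h2]
  have e2' : u (k₁ - (r'+1)) + v (k₂ - (r'+1)) = 1 := by
    have hMe : ∑ i ∈ Finset.range r', u (i+1) * v (r' - i) = 0 := by rw [← hM]; exact hM0
    linarith [e2, hmideq, hMe]
  have hpos : 0 < u (k₁ - (r'+1)) ∨ 0 < v (k₂ - (r'+1)) := by
    by_contra h
    push_neg at h
    have h1 : u (k₁ - (r'+1)) = 0 := le_antisymm h.1 (hu _)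
    have h2 : v (k₂ - (r'+1)) = 0 := le_antisymm h.2 (hv _)
    rw [h1, h2] at e2'; norm_num at e2'
  rcases hpos with h | h
  · have hk1 := kill1 (r'+1) (by omega) (by omega)
    exact absurd hk1 (ne_of_gt (mul_pos h hvpos))
  · have hk2 := kill2 (r'+1) (by omega) (by omega)
    exact absurd hk2 (ne_of_gt (mul_pos hupos h))

open MeasureTheory ProbabilityTheory

private lemma conv_measure {Ω : Type*} [MeasurableSpace Ω] (μ : Measure Ω)
    (X Y : Ω → ℕ) (hX : Measurable X) (hY : Measurable Y) (hind : IndepFun X Y μ)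
    (m : ℕ) : μ {ω | X ω + Y ω = m} =
    ∑ i ∈ Finset.range (m+1), μ {ω | X ω = i} * μ {ω | Y ω = m - i} := by
  have hset : {ω | X ω + Y ω = m}
      = ⋃ i ∈ Finset.range (m+1), ({ω | X ω = i} ∩ {ω | Y ω = m - i}) := by
    ext ω
    simp only [Set.mem_setOf_eq, Set.mem_iUnion, Set.mem_inter_iff, Finset.mem_range,
      exists_prop]
    constructor
    · intro h; exact ⟨X ω, by omega, rfl, by omega⟩
    · rintro ⟨i, hi, rfl, hy⟩; omega
  rw [hset, measure_biUnion_finset]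
  · apply Finset.sum_congr rfl
    intro i _
    exact hind.measure_inter_preimage_eq_mul {i} {m - i}
      (measurableSet_singleton _) (measurableSet_singleton _)
  · intro i _ j _ hij
    simp only [Function.onFun]
    rw [Set.disjoint_left]
    rintro ω ⟨h1, _⟩ ⟨h2, _⟩
    exact hij (h1.symm.trans h2)
  · intro i _
    exact (hX (measurableSet_singleton i)).inter (hY (measurableSet_singleton (m - i)))

/-- If independent `ℕ`-valued random variables supported in `{0,…,k₁}` and `{0,…,k₂}` sum to a
truncated geometric random variable on `{0,…,k₁+k₂}` with parameter `λ`, then the pmf of each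
factor is proportional to `(1-λ)^j` on its support. -/
theorem truncated_geometric_sum_forces_factors {Ω : Type*} [MeasurableSpace Ω] (μ : Measure Ω)
    [IsProbabilityMeasure μ] (k₁ k₂ k : ℕ) (hk₁ : 0 < k₁) (hk₂ : 0 < k₂)
    (hk : k = k₁ + k₂) (lam : ℝ) (hlam : lam ∈ Set.Ioo (0 : ℝ) 1)
    (X Y : Ω → ℕ) (hX : Measurable X) (hY : Measurable Y) (hind : IndepFun X Y μ)
    (hsX : ∀ᵐ ω ∂μ, X ω ≤ k₁) (hsY : ∀ᵐ ω ∂μ, Y ω ≤ k₂)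
    (hsum : ∀ m : ℕ, μ {ω | X ω + Y ω = m} =
      if m ≤ k then ENNReal.ofReal (lam / (1 - (1 - lam) ^ (k + 1)) * (1 - lam) ^ m) else 0) :
    (∀ j : ℕ, μ {ω | X ω = j} ≠ 0 →
      μ {ω | X ω = j} = μ {ω | X ω = 0} * ENNReal.ofReal ((1 - lam) ^ j)) ∧
    (∀ j : ℕ, μ {ω | Y ω = j} ≠ 0 →
      μ {ω | Y ω = j} = μ {ω | Y ω = 0} * ENNReal.ofReal ((1 - lam) ^ j)) := by
  obtain ⟨hlam0, hlam1⟩ := hlam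
  subst hk
  have hl0 : (0:ℝ) < 1 - lam := by linarith
  set C : ℝ := lam / (1 - (1 - lam) ^ (k₁ + k₂ + 1)) with hC
  have hpow : (1 - lam) ^ (k₁ + k₂ + 1) < 1 :=
    pow_lt_one₀ (le_of_lt hl0) (by linarith) (Nat.succ_ne_zero _)
  have hCpos : 0 < C := div_pos hlam0 (by linarith)
  set p : ℕ → ℝ := fun i => (μ {ω | X ω = i}).toReal with hp
  set q : ℕ → ℝ := fun j => (μ {ω | Y ω = j}).toReal with hq
  have hP : ∀ i, μ {ω | X ω = i} = ENNReal.ofReal (p i) :=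
    fun i => (ENNReal.ofReal_toReal (measure_ne_top μ _)).symm
  have hQ : ∀ j, μ {ω | Y ω = j} = ENNReal.ofReal (q j) :=
    fun j => (ENNReal.ofReal_toReal (measure_ne_top μ _)).symm
  have hp0 : ∀ i, 0 ≤ p i := fun i => ENNReal.toReal_nonneg
  have hq0 : ∀ j, 0 ≤ q j := fun j => ENNReal.toReal_nonneg
  -- support bounds
  have hpX : ∀ i, k₁ < i → p i = 0 := by
    intro i hi
    have hz : μ {ω | X ω = i} = 0 := by
      apply measure_mono_null _ (ae_iff.mp hsX)
      intro ω (h : X ω = i)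
      simp only [Set.mem_setOf_eq]
      omega
    simp [hp, hz]
  have hqY : ∀ j, k₂ < j → q j = 0 := by
    intro j hj
    have hz : μ {ω | Y ω = j} = 0 := by
      apply measure_mono_null _ (ae_iff.mp hsY)
      intro ω (h : Y ω = j)
      simp only [Set.mem_setOf_eq]
      omega
    simp [hq, hz]
  -- real convolution identity
  have hrconv : ∀ m, m ≤ k₁ + k₂ →
      ∑ i ∈ Finset.range (m+1), p i * q (m - i) = C * (1 - lam) ^ m := by
    intro m hm
    have h := hsum m
    rw [if_pos hm, conv_measure μ X Y hX hY hind m] at h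
    have hL : ∑ i ∈ Finset.range (m+1), μ {ω | X ω = i} * μ {ω | Y ω = m - i}
        = ENNReal.ofReal (∑ i ∈ Finset.range (m+1), p i * q (m - i)) := by
      rw [ENNReal.ofReal_sum_of_nonneg (fun i _ => mul_nonneg (hp0 i) (hq0 _))]
      exact Finset.sum_congr rfl fun i _ => by
        rw [hP, hQ, ENNReal.ofReal_mul (hp0 i)]
    rw [hL] at h
    exact (ENNReal.ofReal_eq_ofReal_iff
      (Finset.sum_nonneg fun i _ => mul_nonneg (hp0 i) (hq0 _))
      (mul_nonneg (le_of_lt hCpos) (pow_nonneg (le_of_lt hl0) m))).mp h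
  have hp0q0 : p 0 * q 0 = C := by
    have h := hrconv 0 (Nat.zero_le _)
    simpa using h
  have hppos : 0 < p 0 := by
    rcases lt_or_eq_of_le (hp0 0) with h | h
    · exact h
    · exfalso; rw [← h] at hp0q0; simp at hp0q0; nlinarith
  have hqpos : 0 < q 0 := by
    rcases lt_or_eq_of_le (hq0 0) with h | h
    · exact h
    · exfalso; rw [← h] at hp0q0; simp at hp0q0; nlinarith
  -- normalized sequences
  set u : ℕ → ℝ := fun i => p i / (p 0 * (1 - lam) ^ i) with hudef
  set v : ℕ → ℝ := fun j => q j / (q 0 * (1 - lam) ^ j) with hvdef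
  have hupos : ∀ i : ℕ, (0:ℝ) < p 0 * (1 - lam) ^ i := fun i => by positivity
  have hvposd : ∀ j : ℕ, (0:ℝ) < q 0 * (1 - lam) ^ j := fun j => by positivity
  have hcore := conv_one_core k₁ k₂ hk₁ hk₂ u v
    (fun i => div_nonneg (hp0 i) (le_of_lt (hupos i)))
    (fun j => div_nonneg (hq0 j) (le_of_lt (hvposd j)))
    (by
      show p 0 / (p 0 * (1 - lam) ^ 0) = 1
      rw [pow_zero, mul_one, div_self (ne_of_gt hppos)])
    (by
      show q 0 / (q 0 * (1 - lam) ^ 0) = 1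
      rw [pow_zero, mul_one, div_self (ne_of_gt hqpos)])
    (fun i hi => by
      show p i / (p 0 * (1 - lam) ^ i) = 0
      rw [hpX i hi, zero_div])
    (fun j hj => by
      show q j / (q 0 * (1 - lam) ^ j) = 0
      rw [hqY j hj, zero_div])
    (by
      intro m hm
      have hterm : ∀ i ∈ Finset.range (m+1),
          u i * v (m - i) = p i * q (m - i) / (p 0 * q 0 * (1 - lam) ^ m) := by
        intro i hi
        rw [Finset.mem_range] at hi
        show p i / (p 0 * (1 - lam) ^ i) * (q (m - i) / (q 0 * (1 - lam) ^ (m - i)))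
          = p i * q (m - i) / (p 0 * q 0 * (1 - lam) ^ m)
        rw [div_mul_div_comm]
        congr 1
        have hpw : (1 - lam) ^ i * (1 - lam) ^ (m - i) = (1 - lam) ^ m := by
          rw [← pow_add]
          congr 1
          omega
        calc p 0 * (1 - lam) ^ i * (q 0 * (1 - lam) ^ (m - i))
            = p 0 * q 0 * ((1 - lam) ^ i * (1 - lam) ^ (m - i)) := by ring
          _ = p 0 * q 0 * (1 - lam) ^ m := by rw [hpw]
      rw [Finset.sum_congr rfl hterm, ← Finset.sum_div, hrconv m hm, ← hp0q0]
      rw [div_eq_one_iff_eq (by positivity)])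
  constructor
  · intro j hj
    have hpj : p j ≠ 0 := by
      intro h
      exact hj (by rw [hP j, h, ENNReal.ofReal_zero])
    have huj : u j = 1 := by
      rcases (hcore j).1 with h | h
      · exfalso
        have h' : p j / (p 0 * (1 - lam) ^ j) = 0 := h
        rw [div_eq_zero_iff] at h'
        rcases h' with h' | h'
        · exact hpj h'
        · exact absurd h' (ne_of_gt (hupos j))
      · exact h
    have hpj' : p j = p 0 * (1 - lam) ^ j := by
      have h' : p j / (p 0 * (1 - lam) ^ j) = 1 := huj
      rw [div_eq_one_iff_eq (ne_of_gt (hupos j))] at h'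
      exact h'
    rw [hP j, hP 0, hpj', ENNReal.ofReal_mul (le_of_lt hppos)]
  · intro j hj
    have hqj : q j ≠ 0 := by
      intro h
      exact hj (by rw [hQ j, h, ENNReal.ofReal_zero])
    have hvj : v j = 1 := by
      rcases (hcore j).2 with h | h
      · exfalso
        have h' : q j / (q 0 * (1 - lam) ^ j) = 0 := h
        rw [div_eq_zero_iff] at h'
        rcases h' with h' | h'
        · exact hqj h'
        · exact absurd h' (ne_of_gt (hvposd j))
      · exact h
    have hqj' : q j = q 0 * (1 - lam) ^ j := by
      have h' : q j / (q 0 * (1 - lam) ^ j) = 1 := hvj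
      rw [div_eq_one_iff_eq (ne_of_gt (hvposd j))] at h'
      exact h'
    rw [hQ j, hQ 0, hqj', ENNReal.ofReal_mul (le_of_lt hqpos)]
end

section
/- Let $k_1, k, n$ be positive integers with $k+1 = n(k_1+1)$ and $\lambda \in (0,1)$. Let $U_{D_1}$ have pmf $\frac{\lambda(1-\lambda)^j}{1-(1-\lambda)^{k_1+1}}$ on $j \in \{0,\dots,k_1\}$, and let $U_{D_2}$ be independent with pmf $\frac{1-(1-\lambda)^{k_1+1}}{1-(1-\lambda)^{k+1}} (1-\lambda)^{j(k_1+1)}$ on points $j(k_1+1)$, $j \in \{0,\dots,n-1\}$. Then $U_{D_1}+U_{D_2}$ has the truncated geometric pmf $\frac{\lambda(1-\lambda)^j}{1-(1-\lambda)^{k+1}}$ on $\{0,\dots,k\}$. -/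
open MeasureTheory ProbabilityTheory

/-- Sum of a truncated geometric random variable on `{0,…,k₁}` and an independent truncated
geometric random variable on the arithmetic progression `{j(k₁+1) : 0 ≤ j ≤ n-1}` is truncated
geometric on `{0,…,k}`, where `k+1 = n(k₁+1)`. -/
theorem truncated_geometric_decomposition {Ω : Type*} [MeasurableSpace Ω] (μ : Measure Ω)
    [IsProbabilityMeasure μ] (k₁ k n : ℕ) (hk₁ : 0 < k₁) (hk : 0 < k) (hn : 0 < n)
    (hdiv : k + 1 = n * (k₁ + 1)) (lam : ℝ) (hlam : lam ∈ Set.Ioo (0 : ℝ) 1)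
    (X Y : Ω → ℕ) (hX : Measurable X) (hY : Measurable Y) (hind : IndepFun X Y μ)
    (hlawX : ∀ m : ℕ, μ {ω | X ω = m} =
      if m ≤ k₁ then ENNReal.ofReal (lam * (1 - lam) ^ m / (1 - (1 - lam) ^ (k₁ + 1))) else 0)
    (hlawY : ∀ m : ℕ, μ {ω | Y ω = m} =
      if ∃ j : ℕ, j < n ∧ m = j * (k₁ + 1) then
        ENNReal.ofReal ((1 - (1 - lam) ^ (k₁ + 1)) / (1 - (1 - lam) ^ (k + 1)) *
          (1 - lam) ^ m) else 0) :
    ∀ m : ℕ, μ {ω | X ω + Y ω = m} =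
      if m ≤ k then ENNReal.ofReal (lam * (1 - lam) ^ m / (1 - (1 - lam) ^ (k + 1))) else 0 := by
  obtain ⟨hl0, hl1⟩ := hlam
  have hq0 : (0:ℝ) < 1 - lam := by linarith
  have hden1 : (0:ℝ) < 1 - (1 - lam) ^ (k₁ + 1) :=
    sub_pos.mpr (pow_lt_one₀ hq0.le (by linarith) (by omega))
  have hden2 : (0:ℝ) < 1 - (1 - lam) ^ (k + 1) :=
    sub_pos.mpr (pow_lt_one₀ hq0.le (by linarith) (by omega))
  intro m
  have hset : {ω | X ω + Y ω = m} =
      ⋃ a ∈ Finset.range (m + 1), (X ⁻¹' {a} ∩ Y ⁻¹' {m - a}) := by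
    ext ω
    simp only [Set.mem_setOf_eq, Set.mem_iUnion, Finset.mem_range, Set.mem_inter_iff,
      Set.mem_preimage, Set.mem_singleton_iff]
    constructor
    · intro h
      exact ⟨X ω, by omega, rfl, by omega⟩
    · rintro ⟨a, ha, h1, h2⟩
      omega
  rw [hset, measure_biUnion_finset ?_ ?_]
  rotate_left
  · intro a _ b _ hab
    refine Set.disjoint_left.mpr fun ω h1 h2 => hab ?_
    simp only [Set.mem_inter_iff, Set.mem_preimage, Set.mem_singleton_iff] at h1 h2
    omega
  · exact fun a _ => (hX (measurableSet_singleton a)).inter (hY (measurableSet_singleton _))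
  have hterm : ∀ a, μ (X ⁻¹' {a} ∩ Y ⁻¹' {m - a}) = μ {ω | X ω = a} * μ {ω | Y ω = m - a} := by
    intro a
    exact hind.measure_inter_preimage_eq_mul {a} {m - a} (measurableSet_singleton _)
      (measurableSet_singleton _)
  simp only [hterm, hlawX, hlawY]
  by_cases hm : m ≤ k
  · rw [if_pos hm]
    have ha0le : m % (k₁ + 1) ≤ k₁ := by
      have := Nat.mod_lt m (show 0 < k₁ + 1 by omega); omega
    have ha0mem : m % (k₁ + 1) ∈ Finset.range (m + 1) := by
      have := Nat.mod_le m (k₁ + 1); simp; omega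
    rw [Finset.sum_eq_single_of_mem (m % (k₁ + 1)) ha0mem]
    · have hjlt : m / (k₁ + 1) < n :=
        (Nat.div_lt_iff_lt_mul (Nat.succ_pos k₁)).mpr (hdiv ▸ Nat.lt_succ_of_le hm)
      have hjeq : m - m % (k₁ + 1) = m / (k₁ + 1) * (k₁ + 1) := by
        have := Nat.mod_add_div' m (k₁ + 1); omega
      rw [if_pos ha0le, if_pos ⟨m / (k₁ + 1), hjlt, hjeq⟩]
      · rw [← ENNReal.ofReal_mul (by positivity)]
        congr 1
        have hsub : m - m % (k₁ + 1) = (m / (k₁ + 1)) * (k₁ + 1) := by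
          have := Nat.mod_add_div' m (k₁ + 1); omega
        rw [hsub]
        have hexp : (1 - lam) ^ (m % (k₁ + 1)) * (1 - lam) ^ ((m / (k₁ + 1)) * (k₁ + 1))
            = (1 - lam) ^ m := by
          rw [← pow_add]
          congr 1
          have := Nat.mod_add_div' m (k₁ + 1); omega
        calc lam * (1 - lam) ^ (m % (k₁ + 1)) / (1 - (1 - lam) ^ (k₁ + 1)) *
              ((1 - (1 - lam) ^ (k₁ + 1)) / (1 - (1 - lam) ^ (k + 1)) *
                (1 - lam) ^ (m / (k₁ + 1) * (k₁ + 1)))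
            = lam * ((1 - lam) ^ (m % (k₁ + 1)) * (1 - lam) ^ (m / (k₁ + 1) * (k₁ + 1))) /
              (1 - (1 - lam) ^ (k + 1)) *
              ((1 - (1 - lam) ^ (k₁ + 1)) / (1 - (1 - lam) ^ (k₁ + 1))) := by ring
          _ = lam * (1 - lam) ^ m / (1 - (1 - lam) ^ (k + 1)) := by
              rw [hexp, div_self hden1.ne', mul_one]
    · intro a ha hne
      by_cases h1 : a ≤ k₁
      · rw [if_pos h1]
        rw [if_neg, mul_zero]
        rintro ⟨j, hj, hj2⟩
        apply hne
        simp only [Finset.mem_range] at ha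
        have : m = a + j * (k₁ + 1) := by omega
        rw [this]
        rw [Nat.add_mul_mod_self_right, Nat.mod_eq_of_lt (by omega)]
      · rw [if_neg h1, zero_mul]
  · rw [if_neg hm]
    apply Finset.sum_eq_zero
    intro a ha
    simp only [Finset.mem_range] at ha
    by_cases h1 : a ≤ k₁
    · rw [if_pos h1, if_neg, mul_zero]
      rintro ⟨j, hj, hj2⟩
      have h2 : m = a + j * (k₁ + 1) := by omega
      have h3 : j * (k₁ + 1) ≤ (n - 1) * (k₁ + 1) := Nat.mul_le_mul_right _ (by omega)
      have h4 : ((n - 1) + 1) * (k₁ + 1) = (n - 1) * (k₁ + 1) + (k₁ + 1) := Nat.succ_mul _ _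
      have h5 : (n - 1) + 1 = n := by omega
      rw [h5] at h4
      omega
    · rw [if_neg h1, zero_mul]
end
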